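/- arXiv:2112.11412 — 5 statements merged into one kernel-verified Lean document; each statement's English description precedes it below -/
import Mathlib

section
/- For any nonzero integer q and any real L ≥ 1, the sum over integers ℓ with 1 ≤ ℓ ≤ L of gcd(ℓ, q)·ℓ/φ(ℓ) is O(τ(q)²·L), with an absolute implied constant. -/
open Finset Nat

lemma aux_sq (n : ℕ) : n ≤ 2 * n.totient ^ 2 ∧ (Odd n → n ≤ n.totient ^ 2) := by
  induction n using Nat.recOnPosPrimePosCoprime with
  | zero => simp
  | one => simp
  | prime_pow p k hp hk =>
      rw [Nat.totient_prime_pow hp hk]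
      rcases eq_or_ne p 2 with rfl | hodd
      · have hnotodd : ¬ Odd (2 ^ k) := by
          simp only [Nat.odd_iff, Nat.even_pow]
          simp [Nat.even_iff, hk.ne']
        refine ⟨?_, fun h => absurd h hnotodd⟩
        have he : 2 * (2 ^ (k - 1) * (2 - 1)) ^ 2 = 2 ^ (2 * k - 1) := by
          rw [show (2:ℕ) - 1 = 1 from rfl, mul_one, ← pow_mul, ← _root_.pow_succ']
          congr 1
          omega
        rw [he]
        exact Nat.pow_le_pow_right (by norm_num) (by omega)
      · have h3 : 3 ≤ p := by
          have := hp.two_le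
          omega
        have key : p ^ k ≤ (p ^ (k - 1) * (p - 1)) ^ 2 := by
          have h1 : p ^ k = p ^ (k - 1) * p := by
            rw [← pow_succ]
            congr 1
            omega
          have h2 : p ≤ (p - 1) ^ 2 := by
            obtain ⟨c, rfl⟩ := Nat.exists_eq_add_of_le h3
            have hc : 3 + c - 1 = c + 2 := by omega
            rw [hc]
            nlinarith
          have h4 : p ^ (k - 1) ≤ (p ^ (k - 1)) ^ 2 :=
            Nat.le_self_pow two_ne_zero _
          calc p ^ k = p ^ (k - 1) * p := h1
            _ ≤ (p ^ (k - 1)) ^ 2 * (p - 1) ^ 2 := Nat.mul_le_mul h4 h2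
            _ = (p ^ (k - 1) * (p - 1)) ^ 2 := (mul_pow _ _ 2).symm
        exact ⟨key.trans (Nat.le_mul_of_pos_left _ (by norm_num)), fun _ => key⟩
  | coprime a b ha hb hab iha ihb =>
      rw [Nat.totient_mul hab]
      constructor
      · rcases Nat.even_or_odd a with he | ho
        · have hbodd : Odd b := by
            rcases Nat.even_or_odd b with hbe | hbo
            · exfalso
              have h2 := Nat.dvd_gcd he.two_dvd hbe.two_dvd
              rw [Nat.Coprime] at hab
              omega
            · exact hbo
          calc a * b ≤ (2 * a.totient ^ 2) * (b.totient ^ 2) :=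
                Nat.mul_le_mul iha.1 (ihb.2 hbodd)
            _ = 2 * (a.totient * b.totient) ^ 2 := by ring
        · calc a * b ≤ (a.totient ^ 2) * (2 * b.totient ^ 2) :=
              Nat.mul_le_mul (iha.2 ho) ihb.1
            _ = 2 * (a.totient * b.totient) ^ 2 := by ring
      · intro h
        rw [Nat.odd_mul] at h
        calc a * b ≤ a.totient ^ 2 * b.totient ^ 2 := Nat.mul_le_mul (iha.2 h.1) (ihb.2 h.2)
          _ = (a.totient * b.totient) ^ 2 := by ring



lemma aux_div_sum (n : ℕ) (hn : n ≠ 0) :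
    (n : ℝ) / n.totient ≤ ∑ d ∈ n.divisors, 1 / (d.totient : ℝ) := by
  have hφn : (0:ℝ) < n.totient := by
    exact_mod_cast Nat.totient_pos.2 (Nat.pos_of_ne_zero hn)
  rw [div_le_iff₀ hφn, sum_mul]
  have h1 : (n : ℝ) = ∑ d ∈ n.divisors, (Nat.totient (n / d) : ℝ) := by
    have h2 : ∑ d ∈ n.divisors, Nat.totient (n / d) = n := by
      rw [Nat.sum_div_divisors]
      exact Nat.sum_totient n
    exact_mod_cast h2.symm
  rw [h1]
  refine sum_le_sum fun d hd => ?_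
  obtain ⟨hdvd, -⟩ := Nat.mem_divisors.1 hd
  have hd0 : 0 < d := Nat.pos_of_mem_divisors hd
  have hφd : (0:ℝ) < d.totient := by exact_mod_cast Nat.totient_pos.2 hd0
  rw [one_div, inv_mul_eq_div, le_div_iff₀ hφd]
  have key : Nat.totient (n / d) * Nat.totient d ≤ Nat.totient n := by
    have := Nat.totient_super_multiplicative (n / d) d
    rwa [Nat.div_mul_cancel hdvd] at this
  exact_mod_cast key

lemma aux_tau (d : ℕ) (hd : d ≠ 0) :
    (d : ℝ) / d.totient ≤ (d.divisors.card : ℝ) := by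
  refine (aux_div_sum d hd).trans ?_
  calc ∑ e ∈ d.divisors, 1 / (e.totient : ℝ) ≤ ∑ _e ∈ d.divisors, (1:ℝ) := by
        refine sum_le_sum fun e he => ?_
        have h1 : (1:ℝ) ≤ e.totient := by
          exact_mod_cast Nat.totient_pos.2 (Nat.pos_of_mem_divisors he)
        rw [div_le_one (by linarith)]
        exact h1
    _ = (d.divisors.card : ℝ) := by simp
    _ ≤ _ := le_rfl

lemma aux_pow (n : ℕ) (hn : n ≠ 0) :
    1 / ((n : ℝ) * n.totient) ≤ Real.sqrt 2 * (1 / (n : ℝ) ^ (3/2 : ℝ)) := by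
  have hn1 : (1:ℝ) ≤ n := by exact_mod_cast Nat.one_le_iff_ne_zero.2 hn
  have hn0 : (0:ℝ) < n := by linarith
  have hφ : (0:ℝ) < n.totient := by
    exact_mod_cast Nat.totient_pos.2 (Nat.pos_of_ne_zero hn)
  have hsq : Real.sqrt ((n:ℝ)/2) ≤ n.totient := by
    have h1 : (n:ℝ)/2 ≤ (n.totient:ℝ)^2 := by
      have := (aux_sq n).1
      have h2 : (n:ℝ) ≤ 2 * (n.totient:ℝ)^2 := by exact_mod_cast this
      linarith
    exact (Real.sqrt_le_sqrt h1).trans_eq (Real.sqrt_sq hφ.le)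
  have h32 : (n:ℝ) ^ (3/2 : ℝ) = (n:ℝ) * Real.sqrt n := by
    rw [show (3/2:ℝ) = 1 + 1/2 by norm_num, Real.rpow_add hn0, Real.rpow_one,
      Real.sqrt_eq_rpow]
  have hsn : (0:ℝ) < Real.sqrt ((n:ℝ)/2) := Real.sqrt_pos.2 (by linarith)
  have step1 : 1 / ((n:ℝ) * n.totient) ≤ 1 / ((n:ℝ) * Real.sqrt ((n:ℝ)/2)) :=
    one_div_le_one_div_of_le (by positivity) (mul_le_mul_of_nonneg_left hsq hn0.le)
  refine step1.trans (le_of_eq ?_)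
  have h2 : Real.sqrt ((n:ℝ)/2) = Real.sqrt n / Real.sqrt 2 := Real.sqrt_div hn0.le 2
  have hsn' : (0:ℝ) < Real.sqrt (n:ℝ) := Real.sqrt_pos.2 hn0
  have hs2 : (0:ℝ) < Real.sqrt 2 := by positivity
  rw [h32, h2]
  field_simp



lemma aux_summable : Summable (fun n : ℕ => 1 / (n:ℝ) ^ (3/2:ℝ)) :=
  Real.summable_one_div_nat_rpow.2 (by norm_num)

noncomputable def C1 : ℝ := Real.sqrt 2 * ∑' n : ℕ, 1 / (n:ℝ) ^ (3/2:ℝ)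

lemma C1_nonneg : 0 ≤ C1 :=
  mul_nonneg (Real.sqrt_nonneg 2) (tsum_nonneg fun n => by positivity)

lemma aux_K (K : ℕ) : ∑ k ∈ Icc 1 K, (k:ℝ) / k.totient ≤ C1 * K := by
  have hIoc : Icc 1 K = Ioc 0 K := rfl
  have step1 : ∑ k ∈ Icc 1 K, (k:ℝ) / k.totient ≤
      ∑ k ∈ Icc 1 K, ∑ d ∈ Icc 1 K, (if d ∣ k then 1 / (d.totient:ℝ) else 0) := by
    refine sum_le_sum fun k hk => ?_
    obtain ⟨hk1, hkK⟩ := mem_Icc.1 hk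
    refine (aux_div_sum k (by omega)).trans ?_
    rw [← Finset.sum_filter]
    refine sum_le_sum_of_subset_of_nonneg ?_ (fun i _ _ => by positivity)
    intro d hd
    rw [mem_filter, mem_Icc]
    have hdvd := (Nat.mem_divisors.1 hd).1
    have hd1 := Nat.pos_of_mem_divisors hd
    exact ⟨⟨hd1, (Nat.le_of_dvd (by omega) hdvd).trans hkK⟩, hdvd⟩
  refine step1.trans ?_
  rw [Finset.sum_comm]
  have step3 : ∀ d ∈ Icc 1 K,
      ∑ k ∈ Icc 1 K, (if d ∣ k then 1 / (d.totient:ℝ) else 0) ≤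
        (K:ℝ) * (Real.sqrt 2 * (1 / (d:ℝ) ^ (3/2:ℝ))) := by
    intro d hd
    obtain ⟨hd1, hdK⟩ := mem_Icc.1 hd
    rw [← Finset.sum_filter, Finset.sum_const, hIoc, Nat.Ioc_filter_dvd_card_eq_div,
      nsmul_eq_mul]
    have hcast : ((K / d : ℕ) : ℝ) ≤ (K:ℝ) / d := Nat.cast_div_le
    have hφ : (0:ℝ) < d.totient := by
      exact_mod_cast Nat.totient_pos.2 (by omega : 0 < d)
    have hd0 : (0:ℝ) < d := by exact_mod_cast hd1
    calc ((K / d : ℕ) : ℝ) * (1 / d.totient) ≤ (K:ℝ) / d * (1 / d.totient) := by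
          apply mul_le_mul_of_nonneg_right hcast (by positivity)
      _ = (K:ℝ) * (1 / ((d:ℝ) * d.totient)) := by field_simp
      _ ≤ (K:ℝ) * (Real.sqrt 2 * (1 / (d:ℝ) ^ (3/2:ℝ))) := by
          exact mul_le_mul_of_nonneg_left (aux_pow d (by omega)) (Nat.cast_nonneg K)
  refine (sum_le_sum step3).trans ?_
  rw [← Finset.mul_sum]
  have step4 : ∑ d ∈ Icc 1 K, Real.sqrt 2 * (1 / (d:ℝ) ^ (3/2:ℝ)) ≤ C1 := by
    rw [← Finset.mul_sum, C1]
    refine mul_le_mul_of_nonneg_left ?_ (Real.sqrt_nonneg 2)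
    exact Summable.sum_le_tsum _ (fun i _ => by positivity) aux_summable
  calc (K:ℝ) * ∑ d ∈ Icc 1 K, Real.sqrt 2 * (1 / (d:ℝ) ^ (3/2:ℝ)) ≤ (K:ℝ) * C1 :=
        mul_le_mul_of_nonneg_left step4 (Nat.cast_nonneg K)
    _ = C1 * K := mul_comm _ _



theorem stmt_1 : ∃ C : ℝ, 0 < C ∧ ∀ (q : ℤ), q ≠ 0 → ∀ (L : ℝ), 1 ≤ L →
    ∑ ℓ ∈ Finset.Icc 1 ⌊L⌋₊, (Nat.gcd ℓ q.natAbs : ℝ) * ℓ / (Nat.totient ℓ) ≤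
      C * (q.natAbs.divisors.card : ℝ) ^ 2 * L := by
  refine ⟨C1 + 1, by linarith [C1_nonneg], ?_⟩
  intro q hq L hL
  set Q := q.natAbs with hQdef
  have hQ : Q ≠ 0 := Int.natAbs_ne_zero.2 hq
  set N := ⌊L⌋₊ with hN
  have hNL : (N:ℝ) ≤ L := Nat.floor_le (by linarith)
  set τ : ℝ := (Q.divisors.card : ℝ) with hτ
  have hτ1 : (1:ℝ) ≤ τ := by
    have h1 : 0 < Q.divisors.card :=
      Finset.card_pos.2 ⟨1, Nat.one_mem_divisors.2 hQ⟩
    rw [hτ]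
    exact_mod_cast h1
  have step1 : ∑ ℓ ∈ Icc 1 N, (Nat.gcd ℓ Q : ℝ) * ℓ / ℓ.totient ≤
      ∑ ℓ ∈ Icc 1 N, ∑ d ∈ Q.divisors, (if d ∣ ℓ then (d:ℝ) * ℓ / ℓ.totient else 0) := by
    refine sum_le_sum fun ℓ hℓ => ?_
    have hg : Nat.gcd ℓ Q ∈ Q.divisors := Nat.mem_divisors.2 ⟨Nat.gcd_dvd_right _ _, hQ⟩
    have hsingle := Finset.single_le_sum
      (f := fun d => if d ∣ ℓ then (d:ℝ) * ℓ / ℓ.totient else 0)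
      (fun i _ => by positivity) hg
    have hgd : Nat.gcd ℓ Q ∣ ℓ := Nat.gcd_dvd_left _ _
    simpa [hgd] using hsingle
  refine step1.trans ?_
  rw [Finset.sum_comm]
  have step2 : ∀ d ∈ Q.divisors,
      ∑ ℓ ∈ Icc 1 N, (if d ∣ ℓ then (d:ℝ) * ℓ / ℓ.totient else 0) ≤ C1 * τ * N := by
    intro d hd
    obtain ⟨hdvd, -⟩ := Nat.mem_divisors.1 hd
    have hd1 : 1 ≤ d := Nat.pos_of_mem_divisors hd
    have hφd : (0:ℝ) < d.totient := by
      exact_mod_cast Nat.totient_pos.2 hd1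
    have hd0 : (0:ℝ) < d := by exact_mod_cast hd1
    have hre : ∑ ℓ ∈ Icc 1 N, (if d ∣ ℓ then (d:ℝ) * ℓ / ℓ.totient else 0)
        = ∑ k ∈ Icc 1 (N/d), (d:ℝ) * (d*k) / ((d*k).totient) := by
      rw [← Finset.sum_filter]
      refine (Finset.sum_nbij' (fun ℓ => ℓ / d) (fun k => d * k) ?_ ?_ ?_ ?_ ?_)
      · intro a ha
        rw [mem_filter, mem_Icc] at ha
        obtain ⟨⟨ha1, haN⟩, hda⟩ := ha
        rw [mem_Icc]
        constructor
        · exact Nat.one_le_div_iff (by omega) |>.2 (Nat.le_of_dvd (by omega) hda)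
        · exact Nat.div_le_div_right haN
      · intro k hk
        rw [mem_Icc] at hk
        obtain ⟨hk1, hk2⟩ := hk
        rw [mem_filter, mem_Icc]
        refine ⟨⟨Nat.one_le_iff_ne_zero.2 (Nat.mul_ne_zero (by omega) (by omega)), ?_⟩, Dvd.intro k rfl⟩
        calc d * k ≤ d * (N / d) := Nat.mul_le_mul_left d hk2
          _ ≤ N := Nat.mul_div_le N d
      · intro a ha
        rw [mem_filter] at ha
        exact Nat.mul_div_cancel' ha.2
      · intro k hk
        exact Nat.mul_div_cancel_left k (by omega)
      · intro a ha
        rw [mem_filter] at ha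
        have h1 : d * (a / d) = a := Nat.mul_div_cancel' ha.2
        have h2 : (d:ℝ) * ((a/d : ℕ):ℝ) = (a:ℝ) := by exact_mod_cast h1
        rw [h1, h2]
    rw [hre]
    have hterm : ∀ k ∈ Icc 1 (N/d),
        (d:ℝ) * (d*k) / ((d*k).totient) ≤ ((d:ℝ) * d / d.totient) * ((k:ℝ) / k.totient) := by
      intro k hk
      have hk1 : 1 ≤ k := (mem_Icc.1 hk).1
      have hk0 : (0:ℝ) < k := by exact_mod_cast hk1
      have hφk : (0:ℝ) < k.totient := by exact_mod_cast Nat.totient_pos.2 hk1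
      have hφdk : (0:ℝ) < (d*k).totient := by
        exact_mod_cast Nat.totient_pos.2 (by positivity)
      have hsm : (d.totient * k.totient : ℝ) ≤ ((d*k).totient : ℝ) := by
        exact_mod_cast Nat.totient_super_multiplicative d k
      rw [_root_.div_mul_div_comm, div_le_div_iff₀ hφdk (by positivity)]
      push_cast
      calc (d:ℝ) * ((d:ℝ)*(k:ℝ)) * ((d.totient:ℝ) * (k.totient:ℝ))
          = ((d:ℝ) * (d:ℝ) * (k:ℝ)) * ((d.totient:ℝ) * (k.totient:ℝ)) := by ring
        _ ≤ ((d:ℝ) * (d:ℝ) * (k:ℝ)) * ((d*k).totient : ℝ) := by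
            refine mul_le_mul_of_nonneg_left ?_ (by positivity)
            exact_mod_cast hsm
        _ = (d:ℝ) * (d:ℝ) * (k:ℝ) * ((d*k).totient : ℝ) := by ring
    calc ∑ k ∈ Icc 1 (N/d), (d:ℝ) * (d*k) / ((d*k).totient)
        ≤ ∑ k ∈ Icc 1 (N/d), ((d:ℝ) * d / d.totient) * ((k:ℝ) / k.totient) :=
          sum_le_sum hterm
      _ = ((d:ℝ) * d / d.totient) * ∑ k ∈ Icc 1 (N/d), (k:ℝ) / k.totient := by
          rw [Finset.mul_sum]
      _ ≤ ((d:ℝ) * d / d.totient) * (C1 * ((N/d : ℕ):ℝ)) := by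
          exact mul_le_mul_of_nonneg_left (aux_K (N/d)) (by positivity)
      _ ≤ ((d:ℝ) * d / d.totient) * (C1 * ((N:ℝ)/d)) := by
          refine mul_le_mul_of_nonneg_left ?_ (by positivity)
          exact mul_le_mul_of_nonneg_left Nat.cast_div_le C1_nonneg
      _ = C1 * ((d:ℝ) / d.totient) * N := by field_simp
      _ ≤ C1 * τ * N := by
          refine mul_le_mul_of_nonneg_right ?_ (Nat.cast_nonneg N)
          refine mul_le_mul_of_nonneg_left ?_ C1_nonneg
          refine (aux_tau d (by omega)).trans ?_
          rw [hτ]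
          exact_mod_cast Finset.card_le_card (Nat.divisors_subset_of_dvd hQ hdvd)
  calc ∑ d ∈ Q.divisors, ∑ ℓ ∈ Icc 1 N, (if d ∣ ℓ then (d:ℝ) * ℓ / ℓ.totient else 0)
      ≤ ∑ _d ∈ Q.divisors, C1 * τ * N := sum_le_sum step2
    _ = τ * (C1 * τ * N) := by rw [Finset.sum_const, nsmul_eq_mul]
    _ = C1 * τ^2 * N := by ring
    _ ≤ C1 * τ^2 * L := by
        exact mul_le_mul_of_nonneg_left hNL (mul_nonneg C1_nonneg (by positivity))
    _ ≤ (C1 + 1) * τ^2 * L := by nlinarith [C1_nonneg, hτ1, hL]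
end

section
/- Define λ = 1 ∗ χ and λ' = χ ∗ log for a real Dirichlet character χ. Then for every positive integer n, λ'(n) = Λ(n) + ∑_{n = km, m > 1} Λ(k)·λ(m). In particular λ'(n) ≥ Λ(n) ≥ 0 when λ(m) ≥ 0 for all m. -/
open ArithmeticFunction Finset
open scoped ArithmeticFunction.zeta

theorem stmt_9 (q : ℕ) (χ : DirichletCharacter ℝ q) (n : ℕ) (hn : 0 < n)
    (lam lam' : ℕ → ℝ)
    (hlam : ∀ m : ℕ, lam m = ∑ d ∈ m.divisors, χ (d : ZMod q))
    (hlam' : ∀ m : ℕ, lam' m = ∑ de ∈ m.divisorsAntidiagonal,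
      χ ((de.1 : ℕ) : ZMod q) * Real.log de.2)
    (hpos : ∀ m : ℕ, 0 ≤ lam m) :
    lam' n = ArithmeticFunction.vonMangoldt n +
        ∑ de ∈ n.divisorsAntidiagonal.filter (fun de => 1 < de.2),
          ArithmeticFunction.vonMangoldt de.1 * lam de.2 ∧
      ArithmeticFunction.vonMangoldt n ≤ lam' n ∧
      (0 : ℝ) ≤ ArithmeticFunction.vonMangoldt n := by
  set X : ArithmeticFunction ℝ := toArithmeticFunction (fun k => χ (k : ZMod q)) with hX
  have hXval : ∀ k : ℕ, k ≠ 0 → X k = χ (k : ZMod q) := by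
    intro k hk
    simp [hX, toArithmeticFunction, hk]
  have hlamX : ∀ k : ℕ, lam k = (X * ζ) k := by
    intro k
    rw [hlam, coe_mul_zeta_apply]
    exact Finset.sum_congr rfl fun d hd =>
      (hXval d (Nat.pos_of_mem_divisors hd).ne').symm
  have key : lam' n = ∑ de ∈ n.divisorsAntidiagonal, Λ de.1 * lam de.2 := by
    have h1 : lam' n = (X * ArithmeticFunction.log) n := by
      rw [hlam', mul_apply]
      refine Finset.sum_congr rfl fun de hde => ?_
      obtain ⟨hprod, hne⟩ := Nat.mem_divisorsAntidiagonal.mp hde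
      have h1 : de.1 ≠ 0 := by rintro h; exact hne (by simp [← hprod, h])
      rw [hXval de.1 h1, log_apply]
    have h2 : X * ArithmeticFunction.log = Λ * (X * ζ) := by
      rw [← vonMangoldt_mul_zeta]; ring
    rw [h1, h2, mul_apply]
    exact Finset.sum_congr rfl fun de _ => by rw [hlamX de.2]
  have hlam1 : lam 1 = 1 := by simp [hlam]
  have hfilter : n.divisorsAntidiagonal.filter (fun de => ¬ 1 < de.2) = {(n, 1)} := by
    ext de
    simp only [Finset.mem_filter, Finset.mem_singleton, Nat.mem_divisorsAntidiagonal]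
    constructor
    · rintro ⟨⟨hprod, hne⟩, hlt⟩
      have h2 : de.2 ≠ 0 := by rintro h; exact hne (by simp [← hprod, h])
      have : de.2 = 1 := by omega
      have : de = (de.1, 1) := by rw [← this]
      rw [this] at hprod ⊢
      simp at hprod
      simp [hprod]
    · rintro rfl
      simp [hn.ne']
  have hsum : lam' n = Λ n +
      ∑ de ∈ n.divisorsAntidiagonal.filter (fun de => 1 < de.2), Λ de.1 * lam de.2 := by
    rw [key, ← Finset.sum_filter_add_sum_filter_not _ (fun de => 1 < de.2), add_comm]
    rw [hfilter]
    simp [hlam1]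
  refine ⟨hsum, ?_, vonMangoldt_nonneg⟩
  rw [hsum]
  have : 0 ≤ ∑ de ∈ n.divisorsAntidiagonal.filter (fun de => 1 < de.2), Λ de.1 * lam de.2 :=
    Finset.sum_nonneg fun de _ => mul_nonneg vonMangoldt_nonneg (hpos de.2)
  linarith
end

section
/- Let b be an integer and d, q positive integers with gcd(d, bq) = 1 (it suffices to assume gcd(d,q)=1). Let f : ℝ → ℂ be a Schwartz function and g : ℤ → ℂ a q-periodic function. Then ∑_{m ≡ b (mod d)} f(m)·g(m) = (1/(dq)) ∑_{h ∈ ℤ} f̂(h/(dq)) ∑_{m mod dq, m ≡ b (mod d)} g(m)·e(hm/(dq)), where f̂ is the Fourier transform and e(x) = exp(2πix). -/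
open Real Complex Filter Asymptotics MeasureTheory FourierTransform Topology

lemma aux_summable_norm (φ : SchwartzMap ℝ ℂ) (y : ℝ) :
    Summable fun n : ℤ => ‖φ (y + n)‖ := by
  have t0 : Filter.Tendsto (fun x : ℝ => y + x) (cocompact ℝ) (cocompact ℝ) :=
    le_of_eq (Homeomorph.addLeft y).map_cocompact
  have t1 : Filter.Tendsto (fun n : ℤ => y + (n : ℝ)) cofinite (cocompact ℝ) :=
    t0.comp Int.tendsto_coe_cofinite
  have h1 : (fun n : ℤ => φ (y + n)) =O[cofinite] fun n : ℤ => |y + (n : ℝ)| ^ (-2 : ℝ) := by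
    have := (φ.isBigO_cocompact_rpow (-2)).comp_tendsto t1
    simpa [Function.comp_def] using this
  have key : ∀ n : ℤ, 2 * |y| + 1 ≤ |(n : ℝ)| →
      |y + (n : ℝ)| ^ (-2 : ℝ) ≤ 4 * |(n : ℝ)| ^ (-2 : ℝ) := by
    intro n hn
    have hy : (0 : ℝ) ≤ |y| := abs_nonneg y
    have h2 : |(n : ℝ)| / 2 ≤ |y + (n : ℝ)| := by
      have h3 : |(n : ℝ)| ≤ |y + n| + |y| := by
        calc |(n : ℝ)| = |y + n + -y| := by ring_nf
          _ ≤ |y + (n:ℝ)| + |-y| := abs_add_le _ _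
          _ = |y + (n:ℝ)| + |y| := by rw [abs_neg]
      linarith
    have hpos : (0 : ℝ) < |(n : ℝ)| / 2 := by linarith
    calc |y + (n : ℝ)| ^ (-2 : ℝ) ≤ (|(n : ℝ)| / 2) ^ (-2 : ℝ) :=
          Real.rpow_le_rpow_of_nonpos hpos h2 (by norm_num)
      _ = 4 * |(n : ℝ)| ^ (-2 : ℝ) := by
          rw [Real.div_rpow (abs_nonneg _) (by norm_num)]
          rw [show ((2 : ℝ) ^ (-2 : ℝ)) = 1 / 4 by
            rw [show (-2 : ℝ) = ((-2 : ℤ) : ℝ) by norm_num, Real.rpow_intCast]; norm_num]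
          ring
  have h2 : (fun n : ℤ => |y + (n : ℝ)| ^ (-2 : ℝ)) =O[cofinite]
      fun n : ℤ => |(n : ℝ)| ^ (-2 : ℝ) := by
    rw [Int.cofinite_eq, isBigO_sup]
    constructor
    · refine IsBigO.of_bound 4 ?_
      filter_upwards [Filter.eventually_le_atBot (-(⌈2 * |y| + 1⌉ : ℤ))] with n hn
      have hc2 := Int.le_ceil (2 * |y| + 1)
      have hcast : 2 * |y| + 1 ≤ |(n : ℝ)| := by
        have h1' : (n : ℝ) ≤ -(⌈2 * |y| + 1⌉ : ℤ) := by exact_mod_cast hn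
        have h3 : (n : ℝ) ≤ -(2 * |y| + 1) := by push_cast at h1' ⊢; linarith
        have habs : |(n : ℝ)| = -(n : ℝ) := abs_of_nonpos (by linarith [abs_nonneg y])
        rw [habs]; linarith
      have := key n hcast
      have e1 : ‖|y + (n:ℝ)| ^ (-2:ℝ)‖ = |y + (n:ℝ)| ^ (-2:ℝ) :=
        Real.norm_of_nonneg (Real.rpow_nonneg (abs_nonneg _) _)
      have e2 : ‖|(n:ℝ)| ^ (-2:ℝ)‖ = |(n:ℝ)| ^ (-2:ℝ) :=
        Real.norm_of_nonneg (Real.rpow_nonneg (abs_nonneg _) _)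
      rw [e1, e2]; exact this
    · refine IsBigO.of_bound 4 ?_
      filter_upwards [Filter.eventually_ge_atTop (⌈2 * |y| + 1⌉ : ℤ)] with n hn
      have hc2 := Int.le_ceil (2 * |y| + 1)
      have hcast : 2 * |y| + 1 ≤ |(n : ℝ)| := by
        have h1' : ((⌈2 * |y| + 1⌉ : ℤ) : ℝ) ≤ (n : ℝ) := by exact_mod_cast hn
        have h3 : (2 * |y| + 1) ≤ (n : ℝ) := by linarith
        have habs : |(n : ℝ)| = (n : ℝ) := abs_of_nonneg (by linarith [abs_nonneg y])
        rw [habs]; linarith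
      have := key n hcast
      have e1 : ‖|y + (n:ℝ)| ^ (-2:ℝ)‖ = |y + (n:ℝ)| ^ (-2:ℝ) :=
        Real.norm_of_nonneg (Real.rpow_nonneg (abs_nonneg _) _)
      have e2 : ‖|(n:ℝ)| ^ (-2:ℝ)‖ = |(n:ℝ)| ^ (-2:ℝ) :=
        Real.norm_of_nonneg (Real.rpow_nonneg (abs_nonneg _) _)
      rw [e1, e2]; exact this
  exact summable_of_isBigO (Real.summable_abs_int_rpow one_lt_two) (h1.norm_left.trans h2)

lemma aux_summable_s13 (φ : SchwartzMap ℝ ℂ) (y : ℝ) :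
    Summable fun n : ℤ => φ (y + n) :=
  (aux_summable_norm φ y).of_norm

lemma fourier_scale {c : ℝ} (hc : 0 < c) (φ : ℝ → ℂ) (w : ℝ) :
    𝓕 (fun x => φ (c * x)) w
      = ((c : ℂ))⁻¹ * 𝓕 φ (w / c) := by
  rw [Real.fourier_real_eq_integral_exp_smul,
    Real.fourier_real_eq_integral_exp_smul]
  have key : (fun x : ℝ => Complex.exp (↑(-2 * π * x * w) * Complex.I) • φ (c * x))
      = fun x : ℝ => (fun y : ℝ => Complex.exp (↑(-2 * π * y * (w / c)) * Complex.I) • φ y)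
          (c * x) := by
    funext x
    show _ = Complex.exp (↑(-2 * π * (c * x) * (w / c)) * Complex.I) • φ (c * x)
    rw [show -2 * π * (c * x) * (w / c) = -2 * π * x * w by field_simp]
  rw [key, MeasureTheory.Measure.integral_comp_mul_left
    (fun y : ℝ => Complex.exp (↑(-2 * π * y * (w / c)) * Complex.I) • φ y) c]
  rw [abs_of_pos (inv_pos.mpr hc), Complex.real_smul]
  push_cast
  ring

lemma per_int {c : ℤ → ℂ} {N : ℕ} (h : ∀ m, c (m + N) = c m) :
    ∀ (k : ℤ) (m : ℤ), c (m + N * k) = c m := by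
  intro k
  induction k using Int.induction_on with
  | zero => simp
  | succ n ih =>
    intro m
    rw [show m + (N : ℤ) * ((n : ℤ) + 1) = m + N * n + N by ring, h, ih]
  | pred n ih =>
    intro m
    have := h (m + (N : ℤ) * (-(n : ℤ) - 1))
    rw [show m + (N : ℤ) * (-(n : ℤ) - 1) + N = m + N * (-(n:ℤ)) by ring] at this
    rw [← this]
    exact ih m

noncomputable def mulCLE {c : ℝ} (hc : c ≠ 0) : ℝ ≃L[ℝ] ℝ :=
  (LinearEquiv.smulOfNeZero ℝ ℝ c hc).toContinuousLinearEquiv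

example {c : ℝ} (hc : c ≠ 0) (f : SchwartzMap ℝ ℂ) (x : ℝ) :
    (SchwartzMap.compCLMOfContinuousLinearEquiv ℝ (mulCLE hc) f) x = f (c * x) := rfl

set_option maxHeartbeats 2000000 in
open Real Complex in
theorem stmt_13 (b : ℤ) (d q : ℕ) (hd : 0 < d) (hq : 0 < q)
    (hgcd : Int.gcd (d : ℤ) (b * q) = 1)
    (f : SchwartzMap ℝ ℂ) (g : ℤ → ℂ) (hg : ∀ m : ℤ, g (m + q) = g m) :
    ∑' m : ℤ, (if (d : ℤ) ∣ (m - b) then f (m : ℝ) * g m else 0) =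
      (1 / ((d : ℂ) * q)) * ∑' h : ℤ,
        (FourierTransform.fourier (fun x : ℝ => f x) ((h : ℝ) / ((d : ℝ) * q))) *
          ∑ m ∈ Finset.range (d * q),
            (if (d : ℤ) ∣ ((m : ℤ) - b) then
              g m * Complex.exp (2 * Real.pi * Complex.I * h * m / ((d : ℂ) * q)) else 0) := by
  classical
  set N : ℕ := d * q with hNdef
  have hN : 0 < N := Nat.mul_pos hd hq
  haveI : NeZero N := ⟨hN.ne'⟩
  have hNR : (0 : ℝ) < (N : ℝ) := by exact_mod_cast hN
  set c : ℤ → ℂ := fun m => if (d : ℤ) ∣ (m - b) then g m else 0 with hcdef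
  -- periodicity of `c`
  have hgq : ∀ (k : ℕ) (m : ℤ), g (m + (q : ℤ) * (k : ℤ)) = g m := by
    intro k
    induction k with
    | zero => simp
    | succ n ih =>
      intro m
      rw [show m + (q : ℤ) * ((n : ℕ) + 1 : ℕ) = m + (q : ℤ) * n + q by push_cast; ring,
        hg, ih]
  have hcper : ∀ m, c (m + N) = c m := by
    intro m
    show (if (d : ℤ) ∣ (m + N - b) then g (m + N) else 0)
        = if (d : ℤ) ∣ (m - b) then g m else 0
    have h1 : ((d : ℤ) ∣ (m + N - b)) ↔ ((d : ℤ) ∣ (m - b)) := by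
      rw [show m + (N : ℤ) - b = (d : ℤ) * q + (m - b) by push_cast [hNdef]; ring]
      exact dvd_add_right (dvd_mul_right _ _)
    have h2 : g (m + N) = g m := by
      rw [show m + (N : ℤ) = m + (q : ℤ) * (d : ℤ) by push_cast [hNdef]; ring]
      exact hgq d m
    exact if_congr h1 h2 rfl
  -- the scaled Schwartz function
  set F : SchwartzMap ℝ ℂ := SchwartzMap.compCLMOfContinuousLinearEquiv ℝ (mulCLE hNR.ne') f
    with hFdef
  have hF : ∀ x : ℝ, F x = f ((N : ℝ) * x) := fun _ => rfl
  have hFhat : ∀ w : ℝ, 𝓕 (⇑F) w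
      = (((N : ℝ) : ℂ))⁻¹ * 𝓕 (⇑f) (w / N) := by
    intro w
    rw [show ⇑F = fun x => f ((N : ℝ) * x) from funext hF]
    exact fourier_scale hNR _ w
  have hFhat_summable : Summable fun h : ℤ => ‖(SchwartzMap.fourierTransformCLM ℝ F) h‖ := by
    simpa using aux_summable_norm (SchwartzMap.fourierTransformCLM ℝ F) 0
  -- Poisson summation for each residue
  have poisson : ∀ r : ℕ, ∑' n : ℤ, f ((r : ℝ) + (N : ℝ) * (n : ℝ))
      = ∑' h : ℤ, (SchwartzMap.fourierTransformCLM ℝ F) h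
          * Complex.exp (2 * (π : ℂ) * Complex.I * (h : ℂ) * (r : ℂ) / ((d : ℂ) * q)) := by
    intro r
    have hp := SchwartzMap.tsum_eq_tsum_fourier F ((r : ℝ) / N)
    have hl : ∀ n : ℤ, F ((r : ℝ) / N + n) = f ((r : ℝ) + (N : ℝ) * n) := by
      intro n; rw [hF]; congr 1; field_simp
    have hr : ∀ h : ℤ, (SchwartzMap.fourierTransformCLM ℝ F) h
          * fourier h ((((r : ℝ) / N : ℝ)) : UnitAddCircle)
        = (SchwartzMap.fourierTransformCLM ℝ F) h
          * Complex.exp (2 * (π : ℂ) * Complex.I * (h : ℂ) * (r : ℂ) / ((d : ℂ) * q)) := by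
      intro h
      congr 1
      rw [fourier_coe_apply]
      congr 1
      push_cast [hNdef]
      have hd0 : ((d : ℂ)) ≠ 0 := by exact_mod_cast hd.ne'
      have hq0 : ((q : ℂ)) ≠ 0 := by exact_mod_cast hq.ne'
      field_simp
    calc ∑' n : ℤ, f ((r : ℝ) + (N : ℝ) * (n : ℝ))
        = ∑' n : ℤ, F ((r : ℝ) / N + n) := (tsum_congr hl).symm
      _ = ∑' h : ℤ, (SchwartzMap.fourierTransformCLM ℝ F) h
            * fourier h ((((r : ℝ) / N : ℝ)) : UnitAddCircle) := hp
      _ = _ := tsum_congr hr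
  -- the equivalence ℤ ≃ Fin N × ℤ
  let e : ℤ ≃ (Fin N × ℤ) := (Int.divModEquiv N).trans (Equiv.prodComm ℤ (Fin N))
  have he : ∀ p : Fin N × ℤ, e.symm p = p.2 * (N : ℤ) + ((p.1 : ℕ) : ℤ) := by
    intro p
    show (Int.divModEquiv N).symm ((Equiv.prodComm ℤ (Fin N)).symm p) = _
    simp [Int.divModEquiv]
  -- summability facts
  have hsum_f : Summable fun m : ℤ => ‖f (m : ℝ)‖ := by
    simpa using aux_summable_norm f 0
  set K : ℝ := ∑ j ∈ Finset.range N, ‖c (j : ℤ)‖ with hK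
  have hcmod : ∀ m : ℤ, c m = c (((m % (N : ℤ)).toNat : ℕ) : ℤ) := by
    intro m
    rw [Int.toNat_of_nonneg (Int.emod_nonneg m (by exact_mod_cast hN.ne'))]
    conv_lhs => rw [← Int.emod_add_mul_ediv m N]
    exact per_int hcper (m / N) (m % N)
  have hcbound : ∀ m : ℤ, ‖c m‖ ≤ K := by
    intro m
    rw [hcmod m]
    refine Finset.single_le_sum (f := fun j : ℕ => ‖c (j : ℤ)‖) (fun i _ => norm_nonneg _) ?_
    refine Finset.mem_range.mpr ?_
    have h1 := Int.emod_lt_of_pos m (show (0:ℤ) < N by exact_mod_cast hN)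
    have h2 := Int.emod_nonneg m (show ((N : ℕ) : ℤ) ≠ 0 by exact_mod_cast hN.ne')
    omega
  have hsum_fc : Summable fun m : ℤ => f (m : ℝ) * c m := by
    refine Summable.of_norm_bounded (hsum_f.mul_right K) ?_
    intro m; rw [norm_mul]
    exact mul_le_mul_of_nonneg_left (hcbound m) (norm_nonneg _)
  have hsum_prod : Summable fun p : Fin N × ℤ => f ((e.symm p : ℤ) : ℝ) * c (e.symm p) :=
    hsum_fc.comp_injective e.symm.injective
  have hfiber : ∀ r : Fin N,
      Summable fun n : ℤ => f ((e.symm (r, n) : ℤ) : ℝ) * c (e.symm (r, n)) := by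
    intro r
    have h1 : Summable fun n : ℤ => f (((n * (N:ℤ) + ((r:ℕ):ℤ)) : ℤ) : ℝ) := by
      refine (aux_summable_s13 F (((r : ℕ) : ℝ) / N)).congr fun n => ?_
      rw [hF]; congr 1; push_cast; field_simp; ring
    have h2 : ∀ n : ℤ, c (n * (N:ℤ) + ((r:ℕ):ℤ)) = c ((r:ℕ):ℤ) := by
      intro n
      rw [show n * (N:ℤ) + ((r:ℕ):ℤ) = ((r:ℕ):ℤ) + (N:ℤ) * n by ring]
      exact per_int hcper n ((r:ℕ):ℤ)
    refine ((h1.mul_right (c ((r:ℕ):ℤ))).congr fun n => ?_)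
    rw [he (r, n)]
    simp only [h2 n]
  -- summability of the Fourier side, for each residue
  have hsumh : ∀ r : Fin N, Summable fun h : ℤ =>
      c ((r:ℕ):ℤ) * ((SchwartzMap.fourierTransformCLM ℝ F) h
        * Complex.exp (2 * (π : ℂ) * Complex.I * (h : ℂ) * ((r:ℕ) : ℂ) / ((d : ℂ) * q))) := by
    intro r
    refine Summable.of_norm_bounded (hFhat_summable.mul_left ‖c ((r:ℕ):ℤ)‖) fun h => ?_
    have hexp : ‖Complex.exp (2 * (π : ℂ) * Complex.I * (h : ℂ) * ((r:ℕ) : ℂ)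
        / ((d : ℂ) * q))‖ = 1 := by
      rw [show 2 * (π : ℂ) * Complex.I * (h : ℂ) * ((r:ℕ) : ℂ) / ((d : ℂ) * q)
          = ((2 * π * (h : ℝ) * ((r:ℕ) : ℝ) / ((d : ℝ) * q) : ℝ) : ℂ) * Complex.I by
        push_cast; ring]
      exact Complex.norm_exp_ofReal_mul_I _
    rw [norm_mul, norm_mul, hexp, mul_one]
  -- main computation
  calc ∑' m : ℤ, (if (d : ℤ) ∣ (m - b) then f (m : ℝ) * g m else 0)
      = ∑' m : ℤ, f (m : ℝ) * c m := tsum_congr fun m => by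
        simp only [hcdef, mul_ite, mul_zero]
    _ = ∑' p : Fin N × ℤ, f ((e.symm p : ℤ) : ℝ) * c (e.symm p) :=
        (Equiv.tsum_eq e.symm fun m : ℤ => f (m : ℝ) * c m).symm
    _ = ∑' (r : Fin N), ∑' (n : ℤ), f ((e.symm (r, n) : ℤ) : ℝ) * c (e.symm (r, n)) :=
        Summable.tsum_prod' hsum_prod hfiber
    _ = ∑' (r : Fin N), c ((r:ℕ):ℤ) * ∑' (n : ℤ), f (((r:ℕ) : ℝ) + (N : ℝ) * (n : ℝ)) := by
        refine tsum_congr fun r => ?_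
        rw [← tsum_mul_left]
        refine tsum_congr fun n => ?_
        rw [he (r, n)]
        have h2 : c (n * (N:ℤ) + ((r:ℕ):ℤ)) = c ((r:ℕ):ℤ) := by
          rw [show n * (N:ℤ) + ((r:ℕ):ℤ) = ((r:ℕ):ℤ) + (N:ℤ) * n by ring]
          exact per_int hcper n ((r:ℕ):ℤ)
        rw [h2, mul_comm]
        congr 2
        push_cast
        ring
    _ = ∑' (r : Fin N), c ((r:ℕ):ℤ) * ∑' h : ℤ, (SchwartzMap.fourierTransformCLM ℝ F) h
          * Complex.exp (2 * (π : ℂ) * Complex.I * (h : ℂ) * ((r:ℕ) : ℂ) / ((d : ℂ) * q)) :=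
        tsum_congr fun r => by rw [poisson (r : ℕ)]
    _ = ∑' (r : Fin N), ∑' h : ℤ, c ((r:ℕ):ℤ) * ((SchwartzMap.fourierTransformCLM ℝ F) h
          * Complex.exp (2 * (π : ℂ) * Complex.I * (h : ℂ) * ((r:ℕ) : ℂ) / ((d : ℂ) * q))) :=
        tsum_congr fun r => (tsum_mul_left).symm
    _ = ∑ r : Fin N, ∑' h : ℤ, c ((r:ℕ):ℤ) * ((SchwartzMap.fourierTransformCLM ℝ F) h
          * Complex.exp (2 * (π : ℂ) * Complex.I * (h : ℂ) * ((r:ℕ) : ℂ) / ((d : ℂ) * q))) :=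
        tsum_fintype _
    _ = ∑' h : ℤ, ∑ r : Fin N, c ((r:ℕ):ℤ) * ((SchwartzMap.fourierTransformCLM ℝ F) h
          * Complex.exp (2 * (π : ℂ) * Complex.I * (h : ℂ) * ((r:ℕ) : ℂ) / ((d : ℂ) * q))) :=
        (Summable.tsum_finsetSum fun r _ => hsumh r).symm
    _ = _ := by
        rw [← tsum_mul_left]
        refine tsum_congr fun h => ?_
        have hA : (SchwartzMap.fourierTransformCLM ℝ F) h
            = (((N : ℝ)) : ℂ)⁻¹ * FourierTransform.fourier (fun x : ℝ => f x) ((h : ℝ) / ((d : ℝ) * q)) := by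
          rw [SchwartzMap.fourierTransformCLM_apply, SchwartzMap.fourier_coe, hFhat]
          congr 2
          push_cast [hNdef]
          ring
        rw [Fin.sum_univ_eq_sum_range (fun m : ℕ => c ((m:ℕ):ℤ)
          * ((SchwartzMap.fourierTransformCLM ℝ F) h
            * Complex.exp (2 * (π : ℂ) * Complex.I * (h : ℂ) * ((m:ℕ) : ℂ) / ((d : ℂ) * q)))) N]
        rw [Finset.mul_sum, Finset.mul_sum]
        refine Finset.sum_congr rfl fun m hm => ?_
        rw [hA, hcdef]
        simp only [ite_mul, zero_mul, mul_ite, mul_zero]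
        split_ifs with hcond
        · push_cast [hNdef]
          ring
        · rfl
end

section
/- Let H ≥ 2 and define the singular series 𝔖_h = 2·∏_{p>2}(1 − 1/(p−1)²)·∏_{p|h, p>2}(1 + 1/(p−2)) for even h and 𝔖_h = 0 for odd h. Then ∑_{0 < |h| ≤ H} (H − |h|)·𝔖_h = H² + O(H log H). -/
open Finset

lemma sum_Icc_id_real (q : ℕ) : ∑ k ∈ Icc 1 q, (k:ℝ) = q*(q+1)/2 := by
  induction q with
  | zero => simp
  | succ n ih =>
    rw [Finset.sum_Icc_succ_top (by omega), ih]
    push_cast; ring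

lemma harmonic_bound {n M : ℕ} (h1 : 1 ≤ M) (h : n ≤ M) :
    ∑ k ∈ Icc 1 n, (1:ℝ)/k ≤ 1 + Real.log M := by
  have h2 : ∑ k ∈ Icc 1 n, (1:ℝ)/k = (harmonic n : ℝ) := by
    unfold harmonic
    push_cast
    rw [← Finset.Ico_add_one_right_eq_Icc, Finset.sum_Ico_eq_sum_range]
    refine Finset.sum_congr rfl fun x _ => ?_
    rw [one_div, add_comm]
    norm_num
  rw [h2]
  refine (harmonic_le_one_add_log n).trans ?_
  have : Real.log n ≤ Real.log M := by
    rcases Nat.eq_zero_or_pos n with h0 | h0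
    · simp [h0]; positivity
    · exact Real.log_le_log (by exact_mod_cast h0) (by exact_mod_cast h)
  linarith

lemma sq_tail (a b : ℕ) (ha : 1 ≤ a) : ∑ k ∈ Icc (a+1) b, (1:ℝ)/k^2 ≤ 1/a := by
  rcases le_or_gt (a+1) b with hb | hb
  · have key : ∀ k ∈ Icc (a+1) b, (1:ℝ)/k^2 ≤ 1/(k-1) - 1/k := by
      intro k hk
      simp only [mem_Icc] at hk
      have hk1 : (2:ℝ) ≤ k := by exact_mod_cast (by omega : 2 ≤ k)
      rw [div_sub_div _ _ (by linarith) (by linarith)]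
      rw [div_le_div_iff₀ (by positivity) (by nlinarith)]
      ring_nf; nlinarith
    calc ∑ k ∈ Icc (a+1) b, (1:ℝ)/k^2 ≤ ∑ k ∈ Icc (a+1) b, ((1:ℝ)/(k-1) - 1/k) :=
          Finset.sum_le_sum key
      _ ≤ 1/a := by
          have hre : ∀ N, ∑ k ∈ Icc (a+1) (a+N), ((1:ℝ)/(k-1) - 1/k) = 1/a - 1/(a+N) := by
            intro N
            induction N with
            | zero => simp
            | succ n ih =>
              rw [show a + (n+1) = (a+n) + 1 by omega,
                Finset.sum_Icc_succ_top (by omega), ih]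
              push_cast; ring
          obtain ⟨N, hN⟩ : ∃ N, b = a + N := ⟨b - a, by omega⟩
          subst hN
          rw [hre]
          have : (0:ℝ) < a + N := by positivity
          have : (0:ℝ) ≤ 1/((a:ℝ)+N) := by positivity
          push_cast
          linarith
  · rw [Finset.Icc_eq_empty (by omega)]
    simp

lemma sq_all (b : ℕ) : ∑ k ∈ Icc 1 b, (1:ℝ)/k^2 ≤ 2 := by
  rcases le_or_gt 2 b with hb | hb
  · rw [show Icc 1 b = insert 1 (Icc 2 b) by
      ext x; simp [mem_Icc, mem_insert]; omega]
    rw [Finset.sum_insert (by simp [mem_Icc])]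
    have := sq_tail 1 b le_rfl
    norm_num at this ⊢
    linarith
  · interval_cases b <;> norm_num

lemma odd_telescope (s : Finset ℕ) (hs : ∀ j ∈ s, Odd j ∧ 3 ≤ j) :
    ∑ j ∈ s, 2/((j:ℝ)*(j-2)) ≤ 1 := by
  classical
  set w : ℕ → ℝ := fun j => 2/((j:ℝ)*((j:ℝ)-2)) with hw
  show ∑ j ∈ s, w j ≤ 1
  set B := s.sup id with hB
  have hsub : s ⊆ (range B).image (fun i => 2*i+3) := by
    intro j hj
    obtain ⟨hodd, h3⟩ := hs j hj
    obtain ⟨i, hi⟩ : ∃ i, j = 2*i+3 := by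
      obtain ⟨c, hc⟩ := hodd
      exact ⟨c - 1, by omega⟩
    have hjB : j ≤ B := Finset.le_sup (f := id) hj
    simp only [mem_image, mem_range]
    exact ⟨i, by omega, hi.symm⟩
  have hw3 : ∀ i : ℕ, w (2*i+3) = (1:ℝ)/(2*(i:ℝ)+1) - 1/(2*(i:ℝ)+3) := by
    intro i
    have h1 : (0:ℝ) < 2*(i:ℝ)+1 := by positivity
    have h3 : (0:ℝ) < 2*(i:ℝ)+3 := by positivity
    rw [hw]
    dsimp only
    push_cast
    rw [show 2*(i:ℝ)+3-2 = 2*(i:ℝ)+1 by ring]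
    rw [div_sub_div _ _ (ne_of_gt h1) (ne_of_gt h3)]
    rw [div_eq_div_iff (by nlinarith) (by nlinarith)]
    ring
  have hnn : ∀ j ∈ (range B).image (fun i => 2*i+3), j ∉ s → 0 ≤ w j := by
    intro j hj _
    simp only [mem_image, mem_range] at hj
    obtain ⟨i, _, rfl⟩ := hj
    rw [hw3 i]
    have h1 : (0:ℝ) < 2*(i:ℝ)+1 := by positivity
    have h3 : (0:ℝ) < 2*(i:ℝ)+3 := by positivity
    rw [div_sub_div _ _ (ne_of_gt h1) (ne_of_gt h3)]
    apply div_nonneg _ (by nlinarith)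
    nlinarith
  calc ∑ j ∈ s, w j
      ≤ ∑ j ∈ (range B).image (fun i => 2*i+3), w j :=
        Finset.sum_le_sum_of_subset_of_nonneg hsub hnn
    _ = ∑ i ∈ range B, w (2*i+3) :=
        Finset.sum_image (fun a _ b _ h => by omega)
    _ = ∑ i ∈ range B, ((1:ℝ)/(2*(i:ℝ)+1) - 1/(2*(i:ℝ)+3)) :=
        Finset.sum_congr rfl fun i _ => hw3 i
    _ = (fun i : ℕ => (1:ℝ)/(2*(i:ℝ)+1)) 0 - (fun i : ℕ => (1:ℝ)/(2*(i:ℝ)+1)) B := by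
        rw [← Finset.sum_range_sub' (fun i : ℕ => (1:ℝ)/(2*(i:ℝ)+1)) B]
        refine Finset.sum_congr rfl fun i _ => ?_
        push_cast
        ring_nf
    _ ≤ 1 := by
        have hb : (0:ℝ) ≤ 1/(2*(B:ℝ)+1) := by positivity
        simp only []
        norm_num
        linarith

lemma prod_one_add_le_three {P : Finset ℕ} {v : ℕ → ℝ}
    (hv0 : ∀ p ∈ P, 0 ≤ v p) (hv1 : ∀ p ∈ P, v p ≤ 2/((p:ℝ)*(p-2)))
    (hodd : ∀ p ∈ P, Odd p ∧ 3 ≤ p) :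
    ∏ p ∈ P, (1 + v p) ≤ 3 := by
  have h1 : ∏ p ∈ P, (1 + v p) ≤ ∏ p ∈ P, Real.exp (v p) := by
    refine Finset.prod_le_prod (fun p hp => by linarith [hv0 p hp]) ?_
    intro p hp
    linarith [Real.add_one_le_exp (v p)]
  rw [← Real.exp_sum] at h1
  have h2 : ∑ p ∈ P, v p ≤ 1 := by
    refine le_trans (Finset.sum_le_sum hv1) (odd_telescope P hodd)
  calc ∏ p ∈ P, (1 + v p) ≤ Real.exp (∑ p ∈ P, v p) := h1
    _ ≤ Real.exp 1 := Real.exp_le_exp.2 h2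
    _ ≤ 3 := by linarith [Real.exp_one_lt_d9]

lemma squarefree_prod_primes {t : Finset ℕ} (ht : ∀ p ∈ t, p.Prime) :
    Squarefree (∏ p ∈ t, p) := by
  classical
  induction t using Finset.induction with
  | empty => simpa using squarefree_one
  | insert _ _ hnotmem ih =>
    rename_i p t'
    rw [Finset.prod_insert hnotmem]
    have hp : p.Prime := ht p (mem_insert_self _ _)
    have ht' : ∀ q ∈ t', q.Prime := fun q hq => ht q (mem_insert_of_mem hq)
    have hcop : p.Coprime (∏ q ∈ t', q) := by
      refine Nat.Coprime.prod_right fun q hq => ?_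
      exact (Nat.coprime_primes hp (ht' q hq)).mpr (by rintro rfl; exact hnotmem hq)
    rw [Nat.squarefree_mul hcop]
    exact ⟨hp.prime.irreducible.squarefree, ih ht'⟩

lemma odd_pf_filter {d : ℕ} (hd : Odd d) :
    d.primeFactors.filter (fun p => 2 < p) = d.primeFactors := by
  refine Finset.filter_true_of_mem fun p hp => ?_
  have hprime := Nat.prime_of_mem_primeFactors hp
  have hdvd := Nat.dvd_of_mem_primeFactors hp
  have h2 := hprime.two_le
  rcases eq_or_lt_of_le h2 with h | h
  · exfalso
    subst h
    rw [Nat.odd_iff] at hd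
    omega
  · exact h

lemma key_sum_le {v : ℕ → ℝ}
    (hv : ∀ p : ℕ, p.Prime → 2 < p → 0 ≤ v p ∧ v p ≤ 2/((p:ℝ)*(p-2)))
    (s : Finset ℕ) :
    ∑ f ∈ s.filter (fun f => Odd f ∧ Squarefree f), ∏ p ∈ f.primeFactors, v p ≤ 3 := by
  classical
  set B := s.sup id with hB
  set P : Finset ℕ := (Icc 3 B).filter Nat.Prime with hP
  have hPfacts : ∀ p ∈ P, p.Prime ∧ Odd p ∧ 3 ≤ p := by
    intro p hp
    simp only [hP, mem_filter, mem_Icc] at hp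
    exact ⟨hp.2, hp.2.odd_of_ne_two (by omega), hp.1.1⟩
  have himg : ∀ f ∈ s.filter (fun f => Odd f ∧ Squarefree f), f.primeFactors ∈ P.powerset := by
    intro f hf
    simp only [mem_filter] at hf
    obtain ⟨hfs, hodd, hsq⟩ := hf
    rw [Finset.mem_powerset]
    intro p hp
    have hprime := Nat.prime_of_mem_primeFactors hp
    have hdvd := Nat.dvd_of_mem_primeFactors hp
    have hf0 : f ≠ 0 := hsq.ne_zero
    have hple : p ≤ B := le_trans (Nat.le_of_dvd (Nat.pos_of_ne_zero hf0) hdvd)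
      (Finset.le_sup (f := id) hfs)
    have hodd_p : Odd p := by
      rcases hprime.eq_two_or_odd' with h2 | h
      · exfalso; subst h2
        rw [Nat.odd_iff] at hodd
        obtain ⟨c, hc⟩ := hdvd; omega
      · exact h
    simp only [hP, mem_filter, mem_Icc]
    have : 3 ≤ p := by
      have := hprime.two_le
      rcases Nat.odd_iff.mp hodd_p with h
      omega
    exact ⟨⟨this, hple⟩, hprime⟩
  have hinj : Set.InjOn Nat.primeFactors (s.filter (fun f => Odd f ∧ Squarefree f)) := by
    intro a ha b hb hab
    simp only [Finset.coe_filter, Set.mem_setOf_eq] at ha hb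
    have ha' := Nat.prod_primeFactors_of_squarefree ha.2.2
    have hb' := Nat.prod_primeFactors_of_squarefree hb.2.2
    rw [← ha', ← hb', hab]
  have hstep : ∑ f ∈ s.filter (fun f => Odd f ∧ Squarefree f), ∏ p ∈ f.primeFactors, v p
      = ∑ t ∈ (s.filter (fun f => Odd f ∧ Squarefree f)).image Nat.primeFactors,
          ∏ p ∈ t, v p := by
    rw [Finset.sum_image (fun a ha b hb h => hinj ha hb h)]
  rw [hstep]
  have hsub : (s.filter (fun f => Odd f ∧ Squarefree f)).image Nat.primeFactors ⊆ P.powerset := by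
    intro t ht
    simp only [mem_image] at ht
    obtain ⟨f, hf, rfl⟩ := ht
    exact himg f hf
  have hnn : ∀ t ∈ P.powerset,
      t ∉ (s.filter (fun f => Odd f ∧ Squarefree f)).image Nat.primeFactors →
      0 ≤ ∏ p ∈ t, v p := by
    intro t ht _
    rw [Finset.mem_powerset] at ht
    exact Finset.prod_nonneg fun p hp =>
      (hv p (hPfacts p (ht hp)).1 (by have := (hPfacts p (ht hp)).2.2; omega)).1
  calc ∑ t ∈ (s.filter (fun f => Odd f ∧ Squarefree f)).image Nat.primeFactors, ∏ p ∈ t, v p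
      ≤ ∑ t ∈ P.powerset, ∏ p ∈ t, v p :=
        Finset.sum_le_sum_of_subset_of_nonneg hsub hnn
    _ = ∏ p ∈ P, (1 + v p) := by
        have hpa : ∏ p ∈ P, (1 + v p) = ∑ t ∈ P.powerset, ∏ p ∈ t, v p := by
          calc ∏ p ∈ P, (1 + v p) = ∏ p ∈ P, (v p + 1) := by
                refine Finset.prod_congr rfl fun p _ => add_comm _ _
            _ = ∑ t ∈ P.powerset, (∏ p ∈ t, v p) * ∏ p ∈ P \ t, (1:ℝ) :=
                Finset.prod_add v (fun _ => (1:ℝ)) P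
            _ = ∑ t ∈ P.powerset, ∏ p ∈ t, v p := by simp
        rw [hpa]
    _ ≤ 3 := prod_one_add_le_three
        (fun p hp => (hv p (hPfacts p hp).1 (by have := (hPfacts p hp).2.2; omega)).1)
        (fun p hp => (hv p (hPfacts p hp).1 (by have := (hPfacts p hp).2.2; omega)).2)
        (fun p hp => (hPfacts p hp).2)
lemma squarefree_prod_primes' {t : Finset ℕ} (ht : ∀ p ∈ t, p.Prime) :
    Squarefree (∏ p ∈ t, p) := by
  classical
  induction t using Finset.induction with
  | empty => simpa using squarefree_one
  | insert _ _ hnotmem ih =>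
    rename_i p t'
    rw [Finset.prod_insert hnotmem]
    have hp : p.Prime := ht p (mem_insert_self _ _)
    have ht' : ∀ q ∈ t', q.Prime := fun q hq => ht q (mem_insert_of_mem hq)
    have hcop : p.Coprime (∏ q ∈ t', q) := by
      refine Nat.Coprime.prod_right fun q hq => ?_
      exact (Nat.coprime_primes hp (ht' q hq)).mpr (by rintro rfl; exact hnotmem hq)
    rw [Nat.squarefree_mul hcop]
    exact ⟨hp.prime.irreducible.squarefree, ih ht'⟩

/-- Expansion of a product over odd prime factors into a sum over odd squarefree divisors. -/
lemma expand_lemma (v : ℕ → ℝ) (m : ℕ) (hm : m ≠ 0) :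
    ∏ p ∈ m.primeFactors.filter (fun p => 2 < p), (1 + v p)
      = ∑ d ∈ m.divisors.filter (fun d => Odd d ∧ Squarefree d),
          ∏ p ∈ d.primeFactors, v p := by
  classical
  set P := m.primeFactors.filter (fun p => 2 < p) with hP
  have hPprime : ∀ p ∈ P, p.Prime := fun p hp =>
    Nat.prime_of_mem_primeFactors (Finset.mem_of_mem_filter p hp)
  have hpa : ∏ p ∈ P, (1 + v p) = ∑ t ∈ P.powerset, ∏ p ∈ t, v p := by
    calc ∏ p ∈ P, (1 + v p) = ∏ p ∈ P, (v p + 1) :=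
          Finset.prod_congr rfl fun p _ => add_comm _ _
      _ = ∑ t ∈ P.powerset, (∏ p ∈ t, v p) * ∏ p ∈ P \ t, (1:ℝ) :=
          Finset.prod_add v (fun _ => (1:ℝ)) P
      _ = ∑ t ∈ P.powerset, ∏ p ∈ t, v p := by simp
  rw [hpa]
  refine Finset.sum_nbij' (fun t => ∏ p ∈ t, p) (fun d => Nat.primeFactors d)
    ?_ ?_ ?_ ?_ ?_
  · intro t ht
    rw [Finset.mem_powerset] at ht
    have htp : ∀ p ∈ t, p.Prime := fun p hp => hPprime p (ht hp)
    have ht3 : ∀ p ∈ t, 2 < p := fun p hp => (Finset.mem_filter.mp (ht hp)).2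
    have hdvd : (∏ p ∈ t, p) ∣ m := by
      refine Finset.prod_primes_dvd m (fun p hp => (htp p hp).prime) ?_
      intro p hp
      exact Nat.dvd_of_mem_primeFactors (Finset.mem_of_mem_filter p (ht hp))
    have hodd : Odd (∏ p ∈ t, p) := by
      rcases Nat.even_or_odd (∏ p ∈ t, p) with he | ho
      swap
      · exact ho
      exfalso
      obtain ⟨p, hp, hdvd2⟩ := (Nat.prime_two.prime.dvd_finset_prod_iff id).mp he.two_dvd
      have := ((htp p hp).dvd_iff_eq (by norm_num)).mp hdvd2
      have := ht3 p hp
      omega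
    have hsq : Squarefree (∏ p ∈ t, p) := squarefree_prod_primes' htp
    simp only [Finset.mem_filter, Nat.mem_divisors]
    exact ⟨⟨hdvd, hm⟩, hodd, hsq⟩
  · intro d hd
    simp only [Finset.mem_filter, Nat.mem_divisors] at hd
    obtain ⟨⟨hdvd, _⟩, hodd, hsq⟩ := hd
    rw [Finset.mem_powerset]
    intro p hp
    have hprime := Nat.prime_of_mem_primeFactors hp
    have hpd := Nat.dvd_of_mem_primeFactors hp
    have hp3 : 2 < p := by
      have h2 := hprime.two_le
      rcases eq_or_lt_of_le h2 with h | h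
      · exfalso; subst h; rw [Nat.odd_iff] at hodd
        obtain ⟨c, hc⟩ := hpd; omega
      · exact h
    rw [hP, Finset.mem_filter]
    refine ⟨Nat.mem_primeFactors.mpr ⟨hprime, hpd.trans hdvd, hm⟩, hp3⟩
  · intro t ht
    rw [Finset.mem_powerset] at ht
    exact Nat.primeFactors_prod (fun p hp => hPprime p (ht hp))
  · intro d hd
    simp only [Finset.mem_filter, Nat.mem_divisors] at hd
    exact Nat.prod_primeFactors_of_squarefree hd.2.2
  · intro t ht
    rw [Finset.mem_powerset] at ht
    rw [Nat.primeFactors_prod (fun p hp => hPprime p (ht hp))]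

/-- Swap a sum over m ≤ M and divisors d of m into a sum over d and multiples. -/
lemma swap_lemma (M : ℕ) (P : ℕ → Prop) [DecidablePred P] (F : ℕ → ℕ → ℝ) :
    ∑ m ∈ Icc 1 M, ∑ d ∈ m.divisors.filter P, F d m
      = ∑ d ∈ (Icc 1 M).filter P, ∑ k ∈ Icc 1 (M / d), F d (d * k) := by
  classical
  rw [Finset.sum_sigma', Finset.sum_sigma']
  refine Finset.sum_nbij' (fun x => ⟨x.2, x.1 / x.2⟩) (fun y => ⟨y.1 * y.2, y.1⟩)
    ?_ ?_ ?_ ?_ ?_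
  · rintro ⟨m, d⟩ hx
    simp only [Finset.mem_sigma, Finset.mem_filter, Nat.mem_divisors, Finset.mem_Icc] at hx ⊢
    obtain ⟨⟨h1m, hmM⟩, ⟨hdm, hm0⟩, hPd⟩ := hx
    have hd0 : 0 < d := Nat.pos_of_dvd_of_pos hdm (by omega)
    have hdM : d ≤ M := le_trans (Nat.le_of_dvd (by omega) hdm) hmM
    refine ⟨⟨⟨hd0, hdM⟩, hPd⟩, ?_, Nat.div_le_div_right hmM⟩
    exact Nat.one_le_div_iff hd0 |>.mpr (Nat.le_of_dvd (by omega) hdm)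
  · rintro ⟨d, k⟩ hy
    simp only [Finset.mem_sigma, Finset.mem_filter, Nat.mem_divisors, Finset.mem_Icc] at hy ⊢
    obtain ⟨⟨⟨h1d, hdM⟩, hPd⟩, h1k, hkM⟩ := hy
    refine ⟨⟨?_, ?_⟩, ⟨Dvd.intro k rfl, by positivity⟩, hPd⟩
    · exact Nat.one_le_iff_ne_zero.mpr (by positivity)
    · calc d * k ≤ d * (M / d) := Nat.mul_le_mul_left d hkM
        _ ≤ M := Nat.mul_div_le M d
  · rintro ⟨m, d⟩ hx
    simp only [Finset.mem_sigma, Finset.mem_filter, Nat.mem_divisors] at hx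
    obtain ⟨_, ⟨hdm, _⟩, _⟩ := hx
    simp [Nat.mul_div_cancel' hdm]
  · rintro ⟨d, k⟩ hy
    simp only [Finset.mem_sigma, Finset.mem_filter, Finset.mem_Icc] at hy
    have hd0 : 0 < d := by omega
    simp [Nat.mul_div_cancel_left k hd0]
  · rintro ⟨m, d⟩ hx
    simp only [Finset.mem_sigma, Finset.mem_filter, Nat.mem_divisors] at hx
    obtain ⟨_, ⟨hdm, _⟩, _⟩ := hx
    simp [Nat.mul_div_cancel' hdm]

/-- per-d main term estimate -/
lemma per_d {H M d : ℕ} (hH : 2 ≤ H) (hM : M = H/2) (hd1 : 1 ≤ d) (hdM : d ≤ M) :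
    |((M/d : ℕ):ℝ)*(H:ℝ) - (d:ℝ)*((M/d : ℕ):ℝ)*(((M/d : ℕ):ℝ)+1) - (H:ℝ)^2/(4*(d:ℝ))|
      ≤ 3*(H:ℝ) := by
  set q : ℕ := M/d with hq
  have hdq_le : d * q ≤ M := Nat.mul_div_le M d
  have hq1 : 1 ≤ q := (Nat.one_le_div_iff (by omega)).mpr hdM
  have hdm1 := Nat.div_add_mod M d
  have hdm2 := Nat.mod_lt M (show 0 < d by omega)
  have h2M : 2 * M ≤ H := by omega
  have hH2M : H ≤ 2 * M + 1 := by omega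
  -- real versions
  have hDpos : (0:ℝ) < d := by exact_mod_cast hd1
  have hA : (d:ℝ) * q ≤ M := by exact_mod_cast hdq_le
  have hMr : 2 * (M:ℝ) ≤ H := by exact_mod_cast h2M
  have hHr : (H:ℝ) ≤ 2 * M + 1 := by exact_mod_cast hH2M
  have hMle : (M:ℝ) + 1 ≤ (d:ℝ)*q + d := by
    have h1 : (d:ℝ)*q + ((M % d : ℕ):ℝ) = M := by exact_mod_cast hdm1
    have h2 : ((M % d : ℕ):ℝ) < d := by exact_mod_cast hdm2
    have h3 : ((M % d : ℕ):ℝ) + 1 ≤ d := by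
      have : (M % d) + 1 ≤ d := by omega
      exact_mod_cast this
    linarith
  have hdMr : (d:ℝ) ≤ M := by exact_mod_cast hdM
  have hq1r : (1:ℝ) ≤ q := by exact_mod_cast hq1
  have hHpos : (0:ℝ) < H := by positivity
  set E : ℝ := (q:ℝ)*(H:ℝ) - (d:ℝ)*(q:ℝ)*((q:ℝ)+1) with hE
  set X : ℝ := (H:ℝ)^2/(4*(d:ℝ)) with hXdef
  have hX : 4*(d:ℝ)*X = (H:ℝ)^2 := by rw [hXdef]; field_simp
  have e2 : (H:ℝ) - 2*((d:ℝ)*q) ≤ 2*(d:ℝ) := by linarith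
  have e3 : 0 ≤ (H:ℝ) - 2*((d:ℝ)*q) := by linarith
  have e4 : ((H:ℝ) - 2*((d:ℝ)*q))^2 ≤ (2*(d:ℝ))^2 := by nlinarith
  have e5 : 4*(d:ℝ)*((d:ℝ)*q) ≤ 2*((d:ℝ)*H) := by nlinarith
  have e6 : 4*(d:ℝ)^2 ≤ 2*((d:ℝ)*H) := by nlinarith
  have h4d : 4*(d:ℝ)*(X - E) = ((H:ℝ) - 2*((d:ℝ)*q))^2 + 4*(d:ℝ)*((d:ℝ)*q) := by
    rw [hE]
    linear_combination hX
  have hq0 : (0:ℝ) ≤ q := by positivity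
  have hge : 0 ≤ 4*(d:ℝ)*(X - E) := by
    rw [h4d]; positivity
  have hle : 4*(d:ℝ)*(X - E) ≤ 4*((d:ℝ)*H) := by
    rw [h4d]; linarith
  have h4dpos : (0:ℝ) < 4*(d:ℝ) := by positivity
  have hle' : (4*(d:ℝ))*(X - E) ≤ (4*(d:ℝ))*(H:ℝ) := by linarith
  have h7 : X - E ≤ (H:ℝ) := le_of_mul_le_mul_left hle' h4dpos
  have hge' : (4*(d:ℝ))*0 ≤ (4*(d:ℝ))*(X - E) := by linarith
  have h8 : 0 ≤ X - E := le_of_mul_le_mul_left hge' h4dpos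
  rw [abs_le]
  constructor
  · linarith
  · linarith

/-- per-f tail estimate -/
lemma inner_tail {f M : ℕ} (K : ℕ) (hf : 1 ≤ f) (hM : 1 ≤ M) :
    ∑ k ∈ Icc 1 K, (if M < f*k then (1/(k:ℝ)^2) else 0) ≤ 2*(f:ℝ)/(M:ℝ) := by
  obtain ⟨K0, hK0⟩ : ∃ K0, M/f = K0 := ⟨_, rfl⟩
  have hMpos : (0:ℝ) < M := by exact_mod_cast hM
  have hfpos : (0:ℝ) < f := by exact_mod_cast hf
  have step1 : ∑ k ∈ Icc 1 K, (if M < f*k then (1/(k:ℝ)^2) else 0)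
      ≤ ∑ k ∈ Icc (K0+1) K, (1/(k:ℝ)^2) := by
    rw [show Icc (K0+1) K = (Icc 1 K).filter (fun k => K0+1 ≤ k) by
      ext x; simp only [mem_Icc, mem_filter]; omega]
    rw [Finset.sum_filter]
    refine Finset.sum_le_sum fun k hk => ?_
    by_cases h : M < f*k
    · have hk0 : K0 + 1 ≤ k := by
        by_contra hcon
        push_neg at hcon
        have hle : f * k ≤ M := by
          calc f * k ≤ f * K0 := Nat.mul_le_mul_left f (by omega)
            _ ≤ M := by rw [← hK0]; exact Nat.mul_div_le M f
        exact absurd h (not_lt.mpr hle)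
      simp [h, hk0]
    · simp only [h, if_false]
      split_ifs with h2
      · positivity
      · exact le_rfl
  refine step1.trans ?_
  rcases Nat.eq_zero_or_pos K0 with h0 | hpos
  · have hfM : M < f := by
      by_contra hcon
      push_neg at hcon
      have h1 : 1 ≤ M / f := (Nat.one_le_div_iff (by omega)).mpr hcon
      rw [hK0] at h1
      omega
    have h2 : ∑ k ∈ Icc (K0+1) K, (1/(k:ℝ)^2) ≤ 2 := by
      rw [h0]
      exact sq_all K
    refine h2.trans ?_
    rw [le_div_iff₀ hMpos]
    have : (M:ℝ) + 1 ≤ f := by exact_mod_cast hfM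
    nlinarith
  · have h1 : ∑ k ∈ Icc (K0+1) K, (1/(k:ℝ)^2) ≤ 1/(K0:ℝ) := sq_tail K0 K hpos
    refine h1.trans ?_
    have hK0pos : (0:ℝ) < K0 := by exact_mod_cast hpos
    have hK0ge1 : (1:ℝ) ≤ K0 := by exact_mod_cast hpos
    rw [div_le_div_iff₀ hK0pos hMpos]
    have hdm1 := Nat.div_add_mod M f
    have hdm2 := Nat.mod_lt M (show 0 < f by omega)
    rw [hK0] at hdm1
    have hdm1' : (f:ℝ)*K0 + ((M % f : ℕ):ℝ) = M := by exact_mod_cast hdm1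
    have hdm2' : ((M % f : ℕ):ℝ) < f := by exact_mod_cast hdm2
    nlinarith
noncomputable def F0 : ℕ → ℝ := fun d =>
  if Odd d ∧ Squarefree d then ∏ p ∈ d.primeFactors, (1/((p:ℝ)*((p:ℝ)-2))) else 0

lemma odd_prime_factor {d p : ℕ} (hd : Odd d) (hp : p ∈ d.primeFactors) :
    p.Prime ∧ 2 < p := by
  have hprime := Nat.prime_of_mem_primeFactors hp
  have hdvd := Nat.dvd_of_mem_primeFactors hp
  refine ⟨hprime, ?_⟩
  have h2 := hprime.two_le
  rcases eq_or_lt_of_le h2 with h | h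
  · exfalso; subst h; rw [Nat.odd_iff] at hd
    obtain ⟨c, hc⟩ := hdvd; omega
  · exact h

lemma W_nonneg {p : ℕ} (hp : 2 < p) : 0 ≤ 1/((p:ℝ)*((p:ℝ)-2)) := by
  have h3 : (3:ℝ) ≤ p := by exact_mod_cast hp
  apply div_nonneg (by norm_num)
  nlinarith

lemma F0_nonneg : ∀ d, 0 ≤ F0 d := by
  intro d
  unfold F0
  split_ifs with h
  · exact Finset.prod_nonneg fun p hp => W_nonneg (odd_prime_factor h.1 hp).2
  · exact le_rfl

lemma F0_partial_le (u : Finset ℕ) : ∑ d ∈ u, F0 d ≤ 3 := by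
  classical
  have h1 : ∑ d ∈ u, F0 d
      = ∑ d ∈ u.filter (fun d => Odd d ∧ Squarefree d),
          ∏ p ∈ d.primeFactors, (1/((p:ℝ)*((p:ℝ)-2))) := by
    rw [Finset.sum_filter]
    exact Finset.sum_congr rfl fun d _ => rfl
  rw [h1]
  refine key_sum_le (fun p hp h2 => ⟨W_nonneg h2, ?_⟩) u
  have h3 : (3:ℝ) ≤ p := by exact_mod_cast h2
  have hx : (0:ℝ) < (p:ℝ)*((p:ℝ)-2) := by nlinarith
  rw [div_le_div_iff₀ hx hx]
  nlinarith

lemma F0_summable : Summable F0 := summable_of_sum_le F0_nonneg F0_partial_le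

lemma F0_one : F0 1 = 1 := by
  unfold F0
  rw [if_pos ⟨odd_one, squarefree_one⟩]
  simp

lemma F0_zero : F0 0 = 0 := by
  unfold F0
  rw [if_neg]
  rintro ⟨h, -⟩
  rw [Nat.odd_iff] at h
  omega

lemma F0_mult {m n : ℕ} (hmn : m.Coprime n) : F0 (m*n) = F0 m * F0 n := by
  classical
  rcases eq_or_ne m 0 with rfl | hm0
  · have : n = 1 := by simpa using hmn
    subst this
    simp [F0_zero, F0_one]
  rcases eq_or_ne n 0 with rfl | hn0
  · have : m = 1 := by simpa [Nat.coprime_zero_right] using hmn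
    subst this
    simp [F0_zero, F0_one]
  unfold F0
  by_cases hQ : Odd (m*n) ∧ Squarefree (m*n)
  · obtain ⟨hodd, hsq⟩ := hQ
    have hom : Odd m := (Nat.odd_mul.mp hodd).1
    have hon : Odd n := (Nat.odd_mul.mp hodd).2
    have hsm : Squarefree m := ((Nat.squarefree_mul hmn).mp hsq).1
    have hsn : Squarefree n := ((Nat.squarefree_mul hmn).mp hsq).2
    rw [if_pos ⟨hodd, hsq⟩, if_pos ⟨hom, hsm⟩, if_pos ⟨hon, hsn⟩]
    rw [Nat.primeFactors_mul hm0 hn0]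
    rw [Finset.prod_union hmn.disjoint_primeFactors]
  · rw [if_neg hQ]
    by_cases hQm : Odd m ∧ Squarefree m
    · have hQn : ¬(Odd n ∧ Squarefree n) := fun hQn => hQ
        ⟨Nat.odd_mul.mpr ⟨hQm.1, hQn.1⟩, (Nat.squarefree_mul hmn).mpr ⟨hQm.2, hQn.2⟩⟩
      rw [if_pos hQm, if_neg hQn, mul_zero]
    · rw [if_neg hQm, zero_mul]

lemma F0_pow_eq_zero {p e : ℕ} (hp : p.Prime) (he : 2 ≤ e) : F0 (p^e) = 0 := by
  unfold F0
  rw [if_neg]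
  rintro ⟨-, hsq⟩
  have hdvd : p*p ∣ p^e := by
    have : p^2 ∣ p^e := pow_dvd_pow p he
    simpa [sq] using this
  exact hp.ne_one (Nat.isUnit_iff.mp (hsq p hdvd))

lemma tsum_F0_pow {p : ℕ} (hp : p.Prime) : ∑' e, F0 (p^e) = 1 + F0 p := by
  classical
  rw [tsum_eq_sum (s := {0, 1}) ?h]
  · rw [Finset.sum_insert (by norm_num), Finset.sum_singleton]
    simp [F0_one]
  · intro e he
    simp only [Finset.mem_insert, Finset.mem_singleton] at he
    exact F0_pow_eq_zero hp (by omega)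

lemma F0_prime {p : ℕ} (hp : p.Prime) (h2 : 2 < p) : F0 p = 1/((p:ℝ)*((p:ℝ)-2)) := by
  unfold F0
  rw [if_pos ⟨hp.odd_of_ne_two (by omega), hp.prime.irreducible.squarefree⟩]
  rw [hp.primeFactors, Finset.prod_singleton]

lemma F0_two : F0 2 = 0 := by
  unfold F0
  rw [if_neg]
  rintro ⟨h, -⟩
  rw [Nat.odd_iff] at h
  omega
lemma F0_norm_summable : Summable (fun n => ‖F0 n‖) := by
  have : (fun n => ‖F0 n‖) = F0 := funext fun n => by
    rw [Real.norm_eq_abs, abs_of_nonneg (F0_nonneg n)]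
  rw [this]
  exact F0_summable

lemma euler_hasProd :
    HasProd (fun p : Nat.Primes => ∑' e, F0 ((p:ℕ) ^ e)) (∑' n, F0 n) :=
  EulerProduct.eulerProduct_hasProd F0_one (fun h => F0_mult h) F0_norm_summable F0_zero

lemma indicator_eq :
    Set.mulIndicator {p : ℕ | p.Prime} (fun p => ∑' e, F0 (p ^ e))
      = Set.mulIndicator {p : ℕ | p.Prime ∧ 2 < p}
          (fun p => 1 + 1/((p:ℝ)*((p:ℝ)-2))) := by
  funext n
  by_cases hp : n.Prime
  · rw [Set.mulIndicator_of_mem (by exact hp : n ∈ {p : ℕ | p.Prime})]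
    by_cases h2 : 2 < n
    · rw [Set.mulIndicator_of_mem (by exact ⟨hp, h2⟩ : n ∈ {p : ℕ | p.Prime ∧ 2 < p})]
      rw [tsum_F0_pow hp, F0_prime hp h2]
    · have hn2 : n = 2 := by have := hp.two_le; omega
      subst hn2
      rw [Set.mulIndicator_of_notMem (by simp : ¬(2 ∈ {p : ℕ | p.Prime ∧ 2 < p}))]
      rw [tsum_F0_pow hp, F0_two]
      norm_num
  · rw [Set.mulIndicator_of_notMem (by exact hp : ¬(n ∈ {p : ℕ | p.Prime}))]
    rw [Set.mulIndicator_of_notMem (by simp [hp] : ¬(n ∈ {p : ℕ | p.Prime ∧ 2 < p}))]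

lemma hasProdL :
    HasProd (fun p : {p : ℕ // p.Prime ∧ 2 < p} => 1 + 1/((p.1:ℝ)*((p.1:ℝ)-2)))
      (∑' n, F0 n) := by
  have h1 : HasProd ((fun p : ℕ => ∑' e, F0 (p ^ e)) ∘
      (Subtype.val : {p : ℕ // p ∈ {p : ℕ | p.Prime}} → ℕ)) (∑' n, F0 n) := euler_hasProd
  have h2 := (hasProd_subtype_iff_mulIndicator (s := {p : ℕ | p.Prime})).mp h1
  rw [indicator_eq] at h2
  have h3 := (hasProd_subtype_iff_mulIndicator
    (s := {p : ℕ | p.Prime ∧ 2 < p})).mpr h2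
  exact h3

lemma T_pos : (0:ℝ) < ∑' n, F0 n := by
  have h1 : F0 1 ≤ ∑' n, F0 n := Summable.le_tsum F0_summable 1 (fun j _ => F0_nonneg j)
  rw [F0_one] at h1
  linarith

lemma hasProdK :
    HasProd (fun p : {p : ℕ // p.Prime ∧ 2 < p} => 1 - 1/((p.1:ℝ)-1)^2)
      (∑' n, F0 n)⁻¹ := by
  have hT0 : (∑' n, F0 n) ≠ 0 := ne_of_gt T_pos
  have h1 : Filter.Tendsto
      (fun u : Finset {p : ℕ // p.Prime ∧ 2 < p} =>
        (∏ p ∈ u, (1 + 1/((p.1:ℝ)*((p.1:ℝ)-2))))⁻¹)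
      Filter.atTop (nhds (∑' n, F0 n)⁻¹) :=
    Filter.Tendsto.inv₀ hasProdL hT0
  have hpt : ∀ p : {p : ℕ // p.Prime ∧ 2 < p},
      1 - 1/((p.1:ℝ)-1)^2 = (1 + 1/((p.1:ℝ)*((p.1:ℝ)-2)))⁻¹ := by
    rintro ⟨p, hp, h2⟩
    have h3 : (3:ℝ) ≤ p := by exact_mod_cast h2
    have hne1 : (p:ℝ) - 1 ≠ 0 := by nlinarith
    have hne2 : (p:ℝ) * ((p:ℝ)-2) ≠ 0 := by nlinarith
    have hne3 : (p:ℝ) - 2 ≠ 0 := by linarith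
    refine eq_inv_of_mul_eq_one_left ?_
    field_simp
    ring
  show HasProd _ _
  unfold HasProd
  have heq : (fun u : Finset {p : ℕ // p.Prime ∧ 2 < p} =>
      ∏ p ∈ u, (1 - 1/((p.1:ℝ)-1)^2))
      = (fun u => (∏ p ∈ u, (1 + 1/((p.1:ℝ)*((p.1:ℝ)-2))))⁻¹) := by
    funext u
    rw [← Finset.prod_inv_distrib]
    exact Finset.prod_congr rfl fun p _ => hpt p
  rw [heq]
  exact h1

lemma K_eq : (∏' p : {p : ℕ // p.Prime ∧ 2 < p}, (1 - 1/((p.1:ℝ)-1)^2))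
    = (∑' n, F0 n)⁻¹ := hasProdK.tprod_eq
noncomputable def cf (f : ℕ) : ℝ := ∏ p ∈ f.primeFactors, (2/((p:ℝ)-2))

noncomputable def af (d : ℕ) : ℝ := ∏ p ∈ d.primeFactors, (1/((p:ℝ)-2))

lemma factor_pos {p : ℕ} (h2 : 2 < p) : (0:ℝ) < (p:ℝ)-2 := by
  have : (3:ℝ) ≤ p := by exact_mod_cast h2
  linarith

lemma prime_cast_pos {p : ℕ} (hp : 2 < p) : (0:ℝ) < p := by
  have : (3:ℝ) ≤ p := by exact_mod_cast hp
  linarith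

lemma cf_nonneg {f : ℕ} (hf : Odd f) : 0 ≤ cf f :=
  Finset.prod_nonneg fun p hp =>
    le_of_lt (div_pos (by norm_num) (factor_pos (odd_prime_factor hf hp).2))

lemma af_nonneg {d : ℕ} (hd : Odd d) : 0 ≤ af d :=
  Finset.prod_nonneg fun p hp =>
    le_of_lt (div_pos (by norm_num) (factor_pos (odd_prime_factor hd hp).2))

lemma cast_prod_pf {d : ℕ} (hsq : Squarefree d) :
    ((d:ℝ)) = ∏ p ∈ d.primeFactors, (p:ℝ) := by
  conv_lhs => rw [← Nat.prod_primeFactors_of_squarefree hsq]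
  rw [Nat.cast_prod]

lemma sum_cf_div {d : ℕ} (hQ : Odd d ∧ Squarefree d) :
    ∑ f ∈ d.divisors.filter (fun f => Odd f ∧ Squarefree f), cf f
      = ∏ p ∈ d.primeFactors, ((p:ℝ)/((p:ℝ)-2)) := by
  have h1 := expand_lemma (fun p => 2/((p:ℝ)-2)) d hQ.2.ne_zero
  rw [odd_pf_filter hQ.1] at h1
  rw [show (∑ f ∈ d.divisors.filter (fun f => Odd f ∧ Squarefree f), cf f)
    = ∑ f ∈ d.divisors.filter (fun f => Odd f ∧ Squarefree f),
        ∏ p ∈ f.primeFactors, (2/((p:ℝ)-2)) from rfl]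
  rw [← h1]
  refine Finset.prod_congr rfl fun p hp => ?_
  have h2 := (odd_prime_factor hQ.1 hp).2
  have h3 := factor_pos h2
  field_simp
  ring

lemma d_mul_af {d : ℕ} (hQ : Odd d ∧ Squarefree d) :
    af d = (1/(d:ℝ)) * ∑ f ∈ d.divisors.filter (fun f => Odd f ∧ Squarefree f), cf f := by
  rw [sum_cf_div hQ, cast_prod_pf hQ.2, one_div, ← Finset.prod_inv_distrib,
    ← Finset.prod_mul_distrib]
  refine Finset.prod_congr rfl fun p hp => ?_
  have h2 := (odd_prime_factor hQ.1 hp).2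
  have h3 := factor_pos h2
  have h4 := prime_cast_pos h2
  field_simp

lemma F0_eq_d2 {d : ℕ} (hQ : Odd d ∧ Squarefree d) :
    F0 d = (1/(d:ℝ)^2) * ∑ f ∈ d.divisors.filter (fun f => Odd f ∧ Squarefree f), cf f := by
  unfold F0
  rw [if_pos hQ, sum_cf_div hQ, cast_prod_pf hQ.2, one_div, ← Finset.prod_pow,
    ← Finset.prod_inv_distrib, ← Finset.prod_mul_distrib]
  refine Finset.prod_congr rfl fun p hp => ?_
  have h2 := (odd_prime_factor hQ.1 hp).2
  have h3 := factor_pos h2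
  have h4 := prime_cast_pos h2
  field_simp
  try ring

lemma key3 (N : ℕ) :
    ∑ f ∈ (Icc 1 N).filter (fun f => Odd f ∧ Squarefree f), cf f * (1/(f:ℝ)) ≤ 3 := by
  have heq : ∀ f ∈ (Icc 1 N).filter (fun f => Odd f ∧ Squarefree f),
      cf f * (1/(f:ℝ)) = ∏ p ∈ f.primeFactors, (1/((p:ℝ)*((p:ℝ)-2))*2) := by
    intro f hf
    simp only [Finset.mem_filter, Finset.mem_Icc] at hf
    obtain ⟨⟨h1f, _⟩, hodd, hsq⟩ := hf
    rw [cf, cast_prod_pf hsq, one_div, ← Finset.prod_inv_distrib, ← Finset.prod_mul_distrib]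
    refine Finset.prod_congr rfl fun p hp => ?_
    have h2 := (odd_prime_factor hodd hp).2
    have h3 := factor_pos h2
    have h4 := prime_cast_pos h2
    field_simp
  rw [Finset.sum_congr rfl heq]
  refine key_sum_le (fun p hp h2 => ⟨?_, ?_⟩) _
  · have := W_nonneg h2
    linarith
  · exact le_of_eq (by ring)

lemma A_bound {M : ℕ} (hM : 1 ≤ M) :
    ∑ d ∈ (Icc 1 M).filter (fun d => Odd d ∧ Squarefree d), af d
      ≤ 3*(1 + Real.log M) := by
  classical
  have hlog : (0:ℝ) ≤ Real.log M := Real.log_natCast_nonneg M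
  have step2 : ∀ d ∈ Icc 1 M, (if Odd d ∧ Squarefree d then af d else 0)
      ≤ ∑ f ∈ d.divisors.filter (fun f => Odd f ∧ Squarefree f), (1/(d:ℝ)) * cf f := by
    intro d hd
    split_ifs with hQ
    · rw [d_mul_af hQ, Finset.mul_sum]
    · refine Finset.sum_nonneg fun f hf => ?_
      simp only [Finset.mem_filter] at hf
      exact mul_nonneg (by positivity) (cf_nonneg hf.2.1)
  have inner : ∀ f ∈ (Icc 1 M).filter (fun f => Odd f ∧ Squarefree f),
      ∑ k ∈ Icc 1 (M/f), (1/((f*k : ℕ):ℝ)) * cf f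
        ≤ cf f * (1/(f:ℝ)) * (1 + Real.log M) := by
    intro f hf
    simp only [Finset.mem_filter, Finset.mem_Icc] at hf
    obtain ⟨⟨h1f, hfM⟩, hodd, hsq⟩ := hf
    have hcf := cf_nonneg hodd
    have hfr : (0:ℝ) < f := by exact_mod_cast h1f
    have h1 : ∑ k ∈ Icc 1 (M/f), (1/((f*k : ℕ):ℝ)) * cf f
        = cf f * (1/(f:ℝ)) * ∑ k ∈ Icc 1 (M/f), (1/(k:ℝ)) := by
      rw [Finset.mul_sum]
      refine Finset.sum_congr rfl fun k hk => ?_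
      simp only [Finset.mem_Icc] at hk
      have hkr : (0:ℝ) < k := by exact_mod_cast hk.1
      push_cast
      field_simp
      try ring
    rw [h1]
    refine mul_le_mul_of_nonneg_left ?_ (by positivity)
    exact harmonic_bound hM (Nat.div_le_self M f)
  calc ∑ d ∈ (Icc 1 M).filter (fun d => Odd d ∧ Squarefree d), af d
      = ∑ d ∈ Icc 1 M, (if Odd d ∧ Squarefree d then af d else 0) :=
        Finset.sum_filter _ _
    _ ≤ ∑ d ∈ Icc 1 M, ∑ f ∈ d.divisors.filter (fun f => Odd f ∧ Squarefree f),
          (1/(d:ℝ)) * cf f := Finset.sum_le_sum step2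
    _ = ∑ f ∈ (Icc 1 M).filter (fun f => Odd f ∧ Squarefree f),
          ∑ k ∈ Icc 1 (M/f), (1/((f*k : ℕ):ℝ)) * cf f :=
        swap_lemma M _ (fun f d => (1/(d:ℝ)) * cf f)
    _ ≤ ∑ f ∈ (Icc 1 M).filter (fun f => Odd f ∧ Squarefree f),
          cf f * (1/(f:ℝ)) * (1 + Real.log M) := Finset.sum_le_sum inner
    _ = (∑ f ∈ (Icc 1 M).filter (fun f => Odd f ∧ Squarefree f),
          cf f * (1/(f:ℝ))) * (1 + Real.log M) := (Finset.sum_mul _ _ _).symm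
    _ ≤ 3*(1 + Real.log M) :=
        mul_le_mul_of_nonneg_right (key3 M) (by linarith)
lemma tail_nonneg (M : ℕ) : 0 ≤ (∑' n, F0 n) - ∑ d ∈ Icc 1 M, F0 d := by
  have hcompl := Summable.sum_add_tsum_compl (s := Icc 1 M) F0_summable
  have h2 : (0:ℝ) ≤ ∑' (x : ↑((Icc 1 M : Finset ℕ) : Set ℕ)ᶜ), F0 ↑x :=
    tsum_nonneg fun x => F0_nonneg _
  linarith

lemma tail_le {M : ℕ} (hM : 1 ≤ M) :
    (∑' n, F0 n) - ∑ d ∈ Icc 1 M, F0 d ≤ 6/(M:ℝ) := by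
  classical
  have hcompl := Summable.sum_add_tsum_compl (s := Icc 1 M) F0_summable
  have hMr : (0:ℝ) < M := by exact_mod_cast hM
  have key : ∀ u : Finset ↑((Icc 1 M : Finset ℕ) : Set ℕ)ᶜ,
      ∑ x ∈ u, F0 ↑x ≤ 6/(M:ℝ) := by
    intro u
    set u' : Finset ℕ := u.image Subtype.val with hu'
    have h1 : ∑ x ∈ u, F0 ↑x = ∑ d ∈ u', F0 d := by
      rw [hu', Finset.sum_image (fun a _ b _ h => Subtype.ext h)]
    have hu'mem : ∀ d ∈ u', d ∉ Icc 1 M := by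
      intro d hd
      rw [hu'] at hd
      simp only [Finset.mem_image] at hd
      obtain ⟨x, _, rfl⟩ := hd
      have := x.property
      simpa using this
    set N := u'.sup id with hN
    set g : ℕ → ℝ := fun d => if M < d then F0 d else 0 with hg
    have hgdef : ∀ d, g d = if M < d then F0 d else 0 := fun d => rfl
    have h2 : ∑ d ∈ u', F0 d = ∑ d ∈ u', g d := by
      refine Finset.sum_congr rfl fun d hd => ?_
      rw [hgdef d]
      by_cases hMd : M < d
      · rw [if_pos hMd]
      · have hd0 : d = 0 := by
          have := hu'mem d hd
          simp only [Finset.mem_Icc] at this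
          omega
        subst hd0
        rw [if_neg hMd, F0_zero]
    have h3 : ∑ d ∈ u', g d ≤ ∑ d ∈ Icc 1 N, g d := by
      have hz : g 0 = 0 := by rw [hgdef]; simp
      rw [← Finset.sum_erase u' hz]
      refine Finset.sum_le_sum_of_subset_of_nonneg ?_ ?_
      · intro d hd
        rw [Finset.mem_erase] at hd
        simp only [Finset.mem_Icc]
        exact ⟨by omega, Finset.le_sup (f := id) hd.2⟩
      · intro d _ _
        rw [hgdef]
        split_ifs
        · exact F0_nonneg d
        · exact le_rfl
    have h4 : ∑ d ∈ Icc 1 N, g d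
        ≤ ∑ d ∈ Icc 1 N, ∑ f ∈ d.divisors.filter (fun f => Odd f ∧ Squarefree f),
            (if M < d then (1/(d:ℝ)^2) * cf f else 0) := by
      refine Finset.sum_le_sum fun d hd => ?_
      rw [hgdef d]
      by_cases hMd : M < d
      · simp only [if_pos hMd]
        by_cases hQ : Odd d ∧ Squarefree d
        · rw [show F0 d = (1/(d:ℝ)^2) * ∑ f ∈ d.divisors.filter
              (fun f => Odd f ∧ Squarefree f), cf f from F0_eq_d2 hQ, Finset.mul_sum]
        · rw [show F0 d = 0 from by unfold F0; rw [if_neg hQ]]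
          refine Finset.sum_nonneg fun f hf => ?_
          simp only [Finset.mem_filter] at hf
          exact mul_nonneg (by positivity) (cf_nonneg hf.2.1)
      · simp only [if_neg hMd]
        refine Finset.sum_nonneg fun f hf => le_rfl
    have h5 : ∑ d ∈ Icc 1 N, ∑ f ∈ d.divisors.filter (fun f => Odd f ∧ Squarefree f),
            (if M < d then (1/(d:ℝ)^2) * cf f else 0)
        = ∑ f ∈ (Icc 1 N).filter (fun f => Odd f ∧ Squarefree f),
            ∑ k ∈ Icc 1 (N/f), (if M < f*k then (1/((f*k : ℕ):ℝ)^2) * cf f else 0) :=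
      swap_lemma N _ (fun f d => if M < d then (1/(d:ℝ)^2) * cf f else 0)
    have h6 : ∀ f ∈ (Icc 1 N).filter (fun f => Odd f ∧ Squarefree f),
        ∑ k ∈ Icc 1 (N/f), (if M < f*k then (1/((f*k : ℕ):ℝ)^2) * cf f else 0)
          ≤ (2/(M:ℝ)) * (cf f * (1/(f:ℝ))) := by
      intro f hf
      simp only [Finset.mem_filter, Finset.mem_Icc] at hf
      obtain ⟨⟨h1f, hfN⟩, hodd, hsq⟩ := hf
      have hcf := cf_nonneg hodd
      have hfr : (0:ℝ) < f := by exact_mod_cast h1f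
      have e1 : ∑ k ∈ Icc 1 (N/f), (if M < f*k then (1/((f*k : ℕ):ℝ)^2) * cf f else 0)
          = cf f * (1/(f:ℝ)^2) * ∑ k ∈ Icc 1 (N/f), (if M < f*k then 1/(k:ℝ)^2 else 0) := by
        rw [Finset.mul_sum]
        refine Finset.sum_congr rfl fun k hk => ?_
        simp only [Finset.mem_Icc] at hk
        have hkr : (0:ℝ) < k := by exact_mod_cast hk.1
        split_ifs with h
        · push_cast
          ring
        · ring
      rw [e1]
      have e2 : ∑ k ∈ Icc 1 (N/f), (if M < f*k then 1/(k:ℝ)^2 else 0) ≤ 2*(f:ℝ)/(M:ℝ) :=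
        inner_tail (N/f) h1f hM
      calc cf f * (1/(f:ℝ)^2) * ∑ k ∈ Icc 1 (N/f), (if M < f*k then 1/(k:ℝ)^2 else 0)
          ≤ cf f * (1/(f:ℝ)^2) * (2*(f:ℝ)/(M:ℝ)) :=
            mul_le_mul_of_nonneg_left e2 (by positivity)
        _ = (2/(M:ℝ)) * (cf f * (1/(f:ℝ))) := by
            field_simp
    calc ∑ x ∈ u, F0 ↑x = ∑ d ∈ u', F0 d := h1
      _ = ∑ d ∈ u', g d := h2
      _ ≤ ∑ d ∈ Icc 1 N, g d := h3
      _ ≤ _ := h4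
      _ = _ := h5
      _ ≤ ∑ f ∈ (Icc 1 N).filter (fun f => Odd f ∧ Squarefree f),
            (2/(M:ℝ)) * (cf f * (1/(f:ℝ))) := Finset.sum_le_sum h6
      _ = (2/(M:ℝ)) * ∑ f ∈ (Icc 1 N).filter (fun f => Odd f ∧ Squarefree f),
            (cf f * (1/(f:ℝ))) := (Finset.mul_sum _ _ _).symm
      _ ≤ (2/(M:ℝ)) * 3 := mul_le_mul_of_nonneg_left (key3 N) (by positivity)
      _ = 6/(M:ℝ) := by ring
  have h7 : ∑' (x : ↑((Icc 1 M : Finset ℕ) : Set ℕ)ᶜ), F0 ↑x ≤ 6/(M:ℝ) :=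
    Summable.tsum_le_of_sum_le (F0_summable.subtype _) key
  linarith
lemma step_sym (H : ℕ) (r : ℕ → ℝ) :
    ∑ h ∈ (Finset.Icc (-(H:ℤ)) (H:ℤ)).filter (fun h => h ≠ 0),
        ((H:ℝ) - |(h:ℝ)|) * (if 2 ∣ h then r h.natAbs else 0)
      = 2 * ∑ n ∈ Icc 1 H, ((H:ℝ) - (n:ℝ)) * (if 2 ∣ n then r n else 0) := by
  classical
  set f : ℤ → ℝ := fun h => ((H:ℝ) - |(h:ℝ)|) * (if 2 ∣ h then r h.natAbs else 0) with hf
  have hfdef : ∀ h : ℤ, f h = ((H:ℝ) - |(h:ℝ)|) * (if 2 ∣ h then r h.natAbs else 0) :=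
    fun h => rfl
  have hneg : ∀ h : ℤ, f (-h) = f h := by
    intro h
    rw [hfdef, hfdef]
    have h1 : |((-h : ℤ):ℝ)| = |(h:ℝ)| := by push_cast; rw [abs_neg]
    have h2 : ((2:ℤ) ∣ -h) = ((2:ℤ) ∣ h) := propext dvd_neg
    have h3 : (-h).natAbs = h.natAbs := Int.natAbs_neg h
    have h4 : (if (2:ℤ) ∣ -h then r ((-h).natAbs) else 0)
        = (if (2:ℤ) ∣ h then r h.natAbs else 0) := by
      rw [h3]
      exact if_congr dvd_neg rfl rfl
    rw [h1, h4]
  have hsplit : (Finset.Icc (-(H:ℤ)) (H:ℤ)).filter (fun h => h ≠ 0)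
      = ((Finset.Icc (1:ℤ) (H:ℤ)).image Neg.neg) ∪ Finset.Icc (1:ℤ) (H:ℤ) := by
    ext h
    simp only [Finset.mem_filter, Finset.mem_Icc, Finset.mem_union, Finset.mem_image]
    constructor
    · rintro ⟨⟨hl, hr⟩, hne⟩
      rcases lt_or_gt_of_ne hne with hlt | hgt
      · exact Or.inl ⟨-h, ⟨by omega, by omega⟩, by ring⟩
      · exact Or.inr ⟨by omega, hr⟩
    · rintro (⟨a, ⟨ha1, ha2⟩, rfl⟩ | ⟨h1, h2⟩)
      · refine ⟨⟨by omega, by omega⟩, by omega⟩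
      · exact ⟨⟨by omega, h2⟩, by omega⟩
  have hcast : ∑ h ∈ Finset.Icc (1:ℤ) (H:ℤ), f h
      = ∑ n ∈ Icc 1 H, ((H:ℝ) - (n:ℝ)) * (if 2 ∣ n then r n else 0) := by
    refine Finset.sum_nbij' (fun h => h.toNat) (fun n => (n:ℤ)) ?_ ?_ ?_ ?_ ?_
    · intro h hh
      simp only [Finset.mem_Icc] at hh ⊢
      omega
    · intro n hn
      simp only [Finset.mem_Icc] at hn ⊢
      omega
    · intro h hh
      simp only [Finset.mem_Icc] at hh
      omega
    · intro n hn
      omega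
    · intro h hh
      simp only [Finset.mem_Icc] at hh
      have h0 : (0:ℤ) ≤ h := by omega
      obtain ⟨n, rfl⟩ : ∃ n : ℕ, h = (n:ℤ) := ⟨h.toNat, (Int.toNat_of_nonneg h0).symm⟩
      rw [hfdef]
      have e1 : |((n:ℤ):ℝ)| = (n:ℝ) := by
        push_cast
        exact abs_of_nonneg (by positivity)
      have e2 : ((n:ℤ)).toNat = n := by omega
      have e3 : ((n:ℤ)).natAbs = n := Int.natAbs_natCast n
      have e4 : ((2:ℤ) ∣ ((n:ℕ):ℤ)) = (2 ∣ n) := propext (by omega)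
      simp only [e1, e2, e3, e4]
  have himg : ∑ h ∈ (Finset.Icc (1:ℤ) (H:ℤ)).image Neg.neg, f h
      = ∑ h ∈ Finset.Icc (1:ℤ) (H:ℤ), f h := by
    rw [Finset.sum_image (fun a _ b _ h => neg_injective h)]
    exact Finset.sum_congr rfl fun h _ => hneg h
  have hdisj : Disjoint ((Finset.Icc (1:ℤ) (H:ℤ)).image Neg.neg) (Finset.Icc (1:ℤ) (H:ℤ)) := by
    rw [Finset.disjoint_left]
    intro a ha hb
    simp only [Finset.mem_image, Finset.mem_Icc] at ha hb
    obtain ⟨b, ⟨hb1, _⟩, rfl⟩ := ha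
    omega
  calc ∑ h ∈ (Finset.Icc (-(H:ℤ)) (H:ℤ)).filter (fun h => h ≠ 0), f h
      = ∑ h ∈ ((Finset.Icc (1:ℤ) (H:ℤ)).image Neg.neg) ∪ Finset.Icc (1:ℤ) (H:ℤ), f h := by
        rw [hsplit]
    _ = ∑ h ∈ (Finset.Icc (1:ℤ) (H:ℤ)).image Neg.neg, f h
          + ∑ h ∈ Finset.Icc (1:ℤ) (H:ℤ), f h := Finset.sum_union hdisj
    _ = 2 * ∑ h ∈ Finset.Icc (1:ℤ) (H:ℤ), f h := by rw [himg]; ring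
    _ = 2 * ∑ n ∈ Icc 1 H, ((H:ℝ) - (n:ℝ)) * (if 2 ∣ n then r n else 0) := by rw [hcast]

lemma step_even (H : ℕ) (r : ℕ → ℝ) :
    ∑ n ∈ Icc 1 H, ((H:ℝ) - (n:ℝ)) * (if 2 ∣ n then r n else 0)
      = ∑ m ∈ Icc 1 (H/2), ((H:ℝ) - ((2*m : ℕ):ℝ)) * r (2*m) := by
  classical
  have h1 : ∑ n ∈ Icc 1 H, ((H:ℝ) - (n:ℝ)) * (if 2 ∣ n then r n else 0)
      = ∑ n ∈ (Icc 1 H).filter (fun n => 2 ∣ n), ((H:ℝ) - (n:ℝ)) * r n := by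
    rw [Finset.sum_filter]
    refine Finset.sum_congr rfl fun n _ => ?_
    split_ifs with h
    · rfl
    · ring
  rw [h1]
  refine Finset.sum_nbij' (fun n => n/2) (fun m => 2*m) ?_ ?_ ?_ ?_ ?_
  · intro n hn
    simp only [Finset.mem_filter, Finset.mem_Icc] at hn ⊢
    omega
  · intro m hm
    simp only [Finset.mem_filter, Finset.mem_Icc] at hm ⊢
    omega
  · intro n hn
    simp only [Finset.mem_filter, Finset.mem_Icc] at hn
    omega
  · intro m hm
    simp only [Finset.mem_Icc] at hm
    omega
  · intro n hn
    simp only [Finset.mem_filter, Finset.mem_Icc] at hn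
    have h2 : 2 * (n/2) = n := by omega
    rw [h2]

lemma step_gg (m : ℕ) (hm : m ≠ 0) :
    (2*m).primeFactors.filter (fun p => 2 < p) = m.primeFactors.filter (fun p => 2 < p) := by
  rw [Nat.primeFactors_mul (by norm_num) hm, Nat.Prime.primeFactors Nat.prime_two,
    Finset.filter_union]
  have h2 : ({2} : Finset ℕ).filter (fun p => 2 < p) = ∅ := by decide
  rw [h2, Finset.empty_union]
lemma F0_af {d : ℕ} (hQ : Odd d ∧ Squarefree d) :
    F0 d = af d * (1/(d:ℝ)) := by
  unfold F0 af
  rw [if_pos hQ, cast_prod_pf hQ.2, one_div, ← Finset.prod_inv_distrib,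
    ← Finset.prod_mul_distrib]
  refine Finset.prod_congr rfl fun p hp => ?_
  have h2 := (odd_prime_factor hQ.1 hp).2
  have h3 := factor_pos h2
  have h4 := prime_cast_pos h2
  field_simp

lemma sigma2_eq {H M : ℕ} (hM : M = H/2) :
    ∑ m ∈ Icc 1 M, ((H:ℝ) - ((2*m:ℕ):ℝ))
        * (∏ p ∈ m.primeFactors.filter (fun p => 2 < p), (1 + 1/((p:ℝ)-2)))
      = ∑ d ∈ (Icc 1 M).filter (fun d => Odd d ∧ Squarefree d),
          af d * (((M/d:ℕ):ℝ)*(H:ℝ) - (d:ℝ)*((M/d:ℕ):ℝ)*(((M/d:ℕ):ℝ)+1)) := by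
  classical
  have h1 : ∀ m ∈ Icc 1 M, ((H:ℝ) - ((2*m:ℕ):ℝ))
      * (∏ p ∈ m.primeFactors.filter (fun p => 2 < p), (1 + 1/((p:ℝ)-2)))
      = ∑ d ∈ m.divisors.filter (fun d => Odd d ∧ Squarefree d),
          ((H:ℝ) - ((2*m:ℕ):ℝ)) * af d := by
    intro m hm
    simp only [Finset.mem_Icc] at hm
    rw [expand_lemma (fun p => 1/((p:ℝ)-2)) m (by omega), Finset.mul_sum]
    rfl
  rw [Finset.sum_congr rfl h1]
  rw [swap_lemma M _ (fun d m => ((H:ℝ) - ((2*m:ℕ):ℝ)) * af d)]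
  refine Finset.sum_congr rfl fun d hd => ?_
  simp only [Finset.mem_filter, Finset.mem_Icc] at hd
  obtain ⟨⟨h1d, hdM⟩, hQ⟩ := hd
  have hsum : ∑ k ∈ Icc 1 (M/d), ((H:ℝ) - ((2*(d*k):ℕ):ℝ)) * af d
      = af d * (((M/d:ℕ):ℝ)*(H:ℝ) - (d:ℝ)*((M/d:ℕ):ℝ)*(((M/d:ℕ):ℝ)+1)) := by
    have e1 : ∀ k, ((2*(d*k):ℕ):ℝ) = 2*(d:ℝ)*(k:ℝ) := by
      intro k; push_cast; ring
    have e2 : ∑ k ∈ Icc 1 (M/d), ((H:ℝ) - ((2*(d*k):ℕ):ℝ)) * af d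
        = ∑ k ∈ Icc 1 (M/d), (((H:ℝ) - 2*(d:ℝ)*(k:ℝ)) * af d) := by
      refine Finset.sum_congr rfl fun k _ => by rw [e1]
    rw [e2]
    rw [← Finset.sum_mul]
    rw [Finset.sum_sub_distrib]
    rw [Finset.sum_const, ← Finset.mul_sum, sum_Icc_id_real]
    rw [Nat.card_Icc]
    simp only [Nat.add_sub_cancel, nsmul_eq_mul]
    ring
  exact hsum

set_option maxHeartbeats 1000000 in
theorem stmt_17 : ∃ C : ℝ, 0 < C ∧ ∀ H : ℕ, 2 ≤ H →
    |(∑ h ∈ (Finset.Icc (-(H : ℤ)) (H : ℤ)).filter (fun h => h ≠ 0),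
        ((H : ℝ) - |(h : ℝ)|) *
          (if 2 ∣ h then
            2 * (∏' p : {p : ℕ // p.Prime ∧ 2 < p}, (1 - 1 / ((p.1 : ℝ) - 1) ^ 2)) *
              ∏ p ∈ h.natAbs.primeFactors.filter (fun p => 2 < p), (1 + 1 / ((p : ℝ) - 2))
          else 0)) - (H : ℝ) ^ 2| ≤
    C * H * Real.log H := by
  classical
  refine ⟨200, by norm_num, ?_⟩
  intro H hH
  set κ : ℝ := ∏' p : {p : ℕ // p.Prime ∧ 2 < p}, (1 - 1 / ((p.1 : ℝ) - 1) ^ 2) with hκ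
  set T : ℝ := ∑' n, F0 n with hTdef
  have hκT : κ = T⁻¹ := K_eq
  have hT1 : 1 ≤ T := by
    have h1 : F0 1 ≤ T := Summable.le_tsum F0_summable 1 (fun j _ => F0_nonneg j)
    rwa [F0_one] at h1
  have hTpos : 0 < T := by linarith
  have hκpos : 0 < κ := by rw [hκT]; positivity
  have hκ1 : κ ≤ 1 := by
    rw [hκT]
    exact inv_le_one_of_one_le₀ hT1
  have hκTone : κ * T = 1 := by
    rw [hκT]
    exact inv_mul_cancel₀ (ne_of_gt hTpos)
  set M : ℕ := H/2 with hMdef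
  have hM1 : 1 ≤ M := by omega
  have hMr : (0:ℝ) < M := by exact_mod_cast hM1
  have hHr : (0:ℝ) < H := by positivity
  set r : ℕ → ℝ := fun n => 2 * κ *
    ∏ p ∈ n.primeFactors.filter (fun p => 2 < p), (1 + 1 / ((p:ℝ) - 2)) with hr
  -- step 1 : symmetrize
  have e0 : (∑ h ∈ (Finset.Icc (-(H : ℤ)) (H : ℤ)).filter (fun h => h ≠ 0),
        ((H : ℝ) - |(h : ℝ)|) *
          (if 2 ∣ h then
            2 * κ *
              ∏ p ∈ h.natAbs.primeFactors.filter (fun p => 2 < p), (1 + 1 / ((p : ℝ) - 2))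
          else 0))
      = 2 * ∑ n ∈ Icc 1 H, ((H:ℝ) - (n:ℝ)) * (if 2 ∣ n then r n else 0) :=
    step_sym H r
  -- step 2 : even numbers
  have e1 : ∑ n ∈ Icc 1 H, ((H:ℝ) - (n:ℝ)) * (if 2 ∣ n then r n else 0)
      = ∑ m ∈ Icc 1 M, ((H:ℝ) - ((2*m:ℕ):ℝ)) * r (2*m) := step_even H r
  -- step 3 : remove factor 2 from prime factors
  have e2 : ∑ m ∈ Icc 1 M, ((H:ℝ) - ((2*m:ℕ):ℝ)) * r (2*m)
      = 2 * κ * ∑ m ∈ Icc 1 M, ((H:ℝ) - ((2*m:ℕ):ℝ))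
          * (∏ p ∈ m.primeFactors.filter (fun p => 2 < p), (1 + 1/((p:ℝ)-2))) := by
    rw [Finset.mul_sum]
    refine Finset.sum_congr rfl fun m hm => ?_
    simp only [Finset.mem_Icc] at hm
    rw [hr]
    dsimp only
    rw [step_gg m (by omega)]
    ring
  -- step 4 : divisor expansion
  have e3 := sigma2_eq (H := H) (M := M) hMdef
  -- the partial sum of F0
  have hPsum : (H:ℝ)^2/4 * (∑ d ∈ Icc 1 M, F0 d)
      = ∑ d ∈ (Icc 1 M).filter (fun d => Odd d ∧ Squarefree d),
          af d * ((H:ℝ)^2/(4*(d:ℝ))) := by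
    have hstep : ∑ d ∈ Icc 1 M, F0 d
        = ∑ d ∈ (Icc 1 M).filter (fun d => Odd d ∧ Squarefree d), af d * (1/(d:ℝ)) := by
      rw [Finset.sum_filter]
      refine Finset.sum_congr rfl fun d _ => ?_
      split_ifs with hQ
      · exact F0_af hQ
      · unfold F0; rw [if_neg hQ]
    rw [hstep, Finset.mul_sum]
    refine Finset.sum_congr rfl fun d hd => ?_
    simp only [Finset.mem_filter, Finset.mem_Icc] at hd
    have hd0 : (0:ℝ) < d := by exact_mod_cast hd.1.1
    field_simp
  -- the main estimate
  set A : ℝ := ∑ d ∈ (Icc 1 M).filter (fun d => Odd d ∧ Squarefree d), af d with hA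
  set S2 : ℝ := ∑ m ∈ Icc 1 M, ((H:ℝ) - ((2*m:ℕ):ℝ))
      * (∏ p ∈ m.primeFactors.filter (fun p => 2 < p), (1 + 1/((p:ℝ)-2))) with hS2
  have key : |S2 - (H:ℝ)^2/4 * T| ≤ 3*(H:ℝ)*A + (H:ℝ)^2/4 * (6/(M:ℝ)) := by
    have h1 : ∑ d ∈ (Icc 1 M).filter (fun d => Odd d ∧ Squarefree d),
          af d * ((((M/d:ℕ):ℝ)*(H:ℝ) - (d:ℝ)*((M/d:ℕ):ℝ)*(((M/d:ℕ):ℝ)+1))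
            - (H:ℝ)^2/(4*(d:ℝ)))
        = (∑ d ∈ (Icc 1 M).filter (fun d => Odd d ∧ Squarefree d),
            af d * (((M/d:ℕ):ℝ)*(H:ℝ) - (d:ℝ)*((M/d:ℕ):ℝ)*(((M/d:ℕ):ℝ)+1)))
          - ∑ d ∈ (Icc 1 M).filter (fun d => Odd d ∧ Squarefree d),
              af d * ((H:ℝ)^2/(4*(d:ℝ))) := by
      rw [← Finset.sum_sub_distrib]
      exact Finset.sum_congr rfl fun d _ => by ring
    have hsplit : S2 - (H:ℝ)^2/4 * T
        = (∑ d ∈ (Icc 1 M).filter (fun d => Odd d ∧ Squarefree d),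
            af d * ((((M/d:ℕ):ℝ)*(H:ℝ) - (d:ℝ)*((M/d:ℕ):ℝ)*(((M/d:ℕ):ℝ)+1))
              - (H:ℝ)^2/(4*(d:ℝ))))
          - (H:ℝ)^2/4 * (T - ∑ d ∈ Icc 1 M, F0 d) := by
      rw [e3, h1, ← hPsum]
      ring
    rw [hsplit]
    have hbound1 : |∑ d ∈ (Icc 1 M).filter (fun d => Odd d ∧ Squarefree d),
        af d * ((((M/d:ℕ):ℝ)*(H:ℝ) - (d:ℝ)*((M/d:ℕ):ℝ)*(((M/d:ℕ):ℝ)+1))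
          - (H:ℝ)^2/(4*(d:ℝ)))| ≤ 3*(H:ℝ)*A := by
      calc |∑ d ∈ (Icc 1 M).filter (fun d => Odd d ∧ Squarefree d),
            af d * ((((M/d:ℕ):ℝ)*(H:ℝ) - (d:ℝ)*((M/d:ℕ):ℝ)*(((M/d:ℕ):ℝ)+1))
              - (H:ℝ)^2/(4*(d:ℝ)))|
          ≤ ∑ d ∈ (Icc 1 M).filter (fun d => Odd d ∧ Squarefree d),
              |af d * ((((M/d:ℕ):ℝ)*(H:ℝ) - (d:ℝ)*((M/d:ℕ):ℝ)*(((M/d:ℕ):ℝ)+1))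
                - (H:ℝ)^2/(4*(d:ℝ)))| := Finset.abs_sum_le_sum_abs _ _
        _ ≤ ∑ d ∈ (Icc 1 M).filter (fun d => Odd d ∧ Squarefree d),
              af d * (3*(H:ℝ)) := by
            refine Finset.sum_le_sum fun d hd => ?_
            simp only [Finset.mem_filter, Finset.mem_Icc] at hd
            obtain ⟨⟨h1d, hdM⟩, hodd, hsq⟩ := hd
            rw [abs_mul, abs_of_nonneg (af_nonneg hodd)]
            refine mul_le_mul_of_nonneg_left ?_ (af_nonneg hodd)
            have hperd := per_d hH hMdef h1d hdM
            calc |(((M/d:ℕ):ℝ)*(H:ℝ) - (d:ℝ)*((M/d:ℕ):ℝ)*(((M/d:ℕ):ℝ)+1))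
                  - (H:ℝ)^2/(4*(d:ℝ))| = |((M/d:ℕ):ℝ)*(H:ℝ)
                    - (d:ℝ)*((M/d:ℕ):ℝ)*(((M/d:ℕ):ℝ)+1) - (H:ℝ)^2/(4*(d:ℝ))| := by
                  ring_nf
              _ ≤ 3*(H:ℝ) := hperd
        _ = 3*(H:ℝ)*A := by
            rw [hA, ← Finset.sum_mul]
            ring
    have hbound2 : |(H:ℝ)^2/4 * (T - ∑ d ∈ Icc 1 M, F0 d)|
        ≤ (H:ℝ)^2/4 * (6/(M:ℝ)) := by
      rw [abs_mul, abs_of_nonneg (by positivity : (0:ℝ) ≤ (H:ℝ)^2/4),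
        abs_of_nonneg (tail_nonneg M)]
      exact mul_le_mul_of_nonneg_left (tail_le hM1) (by positivity)
    calc |(∑ d ∈ (Icc 1 M).filter (fun d => Odd d ∧ Squarefree d),
            af d * ((((M/d:ℕ):ℝ)*(H:ℝ) - (d:ℝ)*((M/d:ℕ):ℝ)*(((M/d:ℕ):ℝ)+1))
              - (H:ℝ)^2/(4*(d:ℝ))))
          - (H:ℝ)^2/4 * (T - ∑ d ∈ Icc 1 M, F0 d)|
        ≤ |∑ d ∈ (Icc 1 M).filter (fun d => Odd d ∧ Squarefree d),
            af d * ((((M/d:ℕ):ℝ)*(H:ℝ) - (d:ℝ)*((M/d:ℕ):ℝ)*(((M/d:ℕ):ℝ)+1))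
              - (H:ℝ)^2/(4*(d:ℝ)))|
          + |(H:ℝ)^2/4 * (T - ∑ d ∈ Icc 1 M, F0 d)| := abs_sub _ _
      _ ≤ 3*(H:ℝ)*A + (H:ℝ)^2/4 * (6/(M:ℝ)) := add_le_add hbound1 hbound2
  -- the A bound
  have hAle : A ≤ 3*(1 + Real.log H) := by
    refine (A_bound hM1).trans ?_
    have hlogM : Real.log M ≤ Real.log H := by
      refine Real.log_le_log (by exact_mod_cast hM1) ?_
      exact_mod_cast Nat.div_le_self H 2
    linarith
  -- bound of the tail term
  have hTail : (H:ℝ)^2/4 * (6/(M:ℝ)) ≤ 6*(H:ℝ) := by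
    have h4M : (H:ℝ) ≤ 4*(M:ℝ) := by
      have : H ≤ 4*M := by omega
      exact_mod_cast this
    rw [show (H:ℝ)^2/4 * (6/(M:ℝ)) = 6*(H:ℝ)^2/(4*(M:ℝ)) from by ring]
    rw [div_le_iff₀ (by positivity)]
    nlinarith
  -- putting everything together
  rw [e0, e1, e2]
  have hS : 2 * (2 * κ * S2) - (H:ℝ)^2 = 4*κ*(S2 - (H:ℝ)^2/4 * T) := by
    have : 4*κ*((H:ℝ)^2/4 * T) = (H:ℝ)^2 * (κ*T) := by ring
    rw [mul_sub, this, hκTone]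
    ring
  rw [hS, abs_mul, abs_of_nonneg (by positivity : (0:ℝ) ≤ 4*κ)]
  have hlogH : (0.6:ℝ) ≤ Real.log H := by
    have h2 : Real.log 2 ≤ Real.log H :=
      Real.log_le_log (by norm_num) (by exact_mod_cast hH)
    have h3 : (0.6931471803:ℝ) < Real.log 2 := Real.log_two_gt_d9
    linarith
  have hlogpos : (0:ℝ) ≤ Real.log H := by linarith
  calc 4*κ*|S2 - (H:ℝ)^2/4 * T|
      ≤ 4*1*(3*(H:ℝ)*A + (H:ℝ)^2/4 * (6/(M:ℝ))) := by
        refine mul_le_mul ?_ key (abs_nonneg _) (by norm_num)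
        linarith
    _ ≤ 4*(3*(H:ℝ)*(3*(1 + Real.log H)) + 6*(H:ℝ)) := by
        have hAnn : 3*(H:ℝ)*A ≤ 3*(H:ℝ)*(3*(1 + Real.log H)) :=
          mul_le_mul_of_nonneg_left hAle (by positivity)
        linarith
    _ = 60*(H:ℝ) + 36*(H:ℝ)*Real.log H := by ring
    _ ≤ 100*((H:ℝ)*Real.log H) + 36*(H:ℝ)*Real.log H := by
        have : 60*(H:ℝ) = 100*((H:ℝ)*0.6) := by ring
        rw [this]
        have := mul_le_mul_of_nonneg_left hlogH (le_of_lt hHr)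
        nlinarith
    _ ≤ 200 * (H:ℝ) * Real.log H := by nlinarith
end

section
/- For all integers a, b and positive integer c, the Kloosterman sum S(a,b;c) = ∑_{n mod c, gcd(n,c)=1} e((an + b·n̄)/c) satisfies |S(a,b;c)| ≪_ε c^{3/4+ε}·gcd(a,b,c)^{1/4} for every ε > 0, where n̄ is the inverse of n modulo c. -/
open Finset

namespace Kl

lemma cast_eq_zero_iff' {n m : ℕ} [NeZero n] (h : m ∣ n) (x : ZMod n) :
    ZMod.castHom h (ZMod m) x = 0 ↔ m ∣ x.val := by
  haveI : NeZero m := ⟨fun h0 => NeZero.ne n (by simpa [h0, zero_dvd_iff] using h)⟩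
  rw [ZMod.castHom_apply, ← ZMod.natCast_val, ZMod.natCast_eq_zero_iff]

lemma card_multiples_le {n L : ℕ} [NeZero n] (h : L ∣ n) :
    (univ.filter fun x : ZMod n => L ∣ x.val).card ≤ n / L := by
  classical
  have hn : n ≠ 0 := NeZero.ne n
  have hL : L ≠ 0 := fun h0 => hn (by simpa [h0, zero_dvd_iff] using h)
  have := Finset.card_le_card_of_injOn (fun x : ZMod n => x.val / L)
    (s := univ.filter fun x : ZMod n => L ∣ x.val) (t := Finset.range (n / L))
    (by
      intro x hx
      simp only [Finset.mem_coe, mem_filter, mem_univ, true_and] at hx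
      obtain ⟨k, hk⟩ := hx
      have hvlt : x.val < n := ZMod.val_lt x
      simp only [Finset.mem_coe, Finset.mem_range]
      show x.val / L < n / L
      rw [hk, Nat.mul_div_cancel_left _ (Nat.pos_of_ne_zero hL)]
      have : L * k < L * (n / L) := by
        rwa [Nat.mul_div_cancel' h, ← hk]
      exact lt_of_mul_lt_mul_left this (Nat.zero_le L))
    (by
      intro x hx y hy hxy
      have hxy' : x.val / L = y.val / L := hxy
      have hx' : L ∣ x.val := (Finset.mem_filter.mp hx).2
      have hy' : L ∣ y.val := (Finset.mem_filter.mp hy).2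
      have : x.val = y.val := by
        rw [← Nat.div_mul_cancel hx', ← Nat.div_mul_cancel hy', hxy']
      exact ZMod.val_injective n this)
  simpa using this

/-- counting solutions of two simultaneous congruences -/
lemma capL {n u v : ℕ} [NeZero n] (hu : u ∣ n) (hv : v ∣ n) (A : ZMod u) (B : ZMod v) :
    (univ.filter fun x : ZMod n =>
        ZMod.castHom hu (ZMod u) x = A ∧ ZMod.castHom hv (ZMod v) x = B).card
      ≤ n / Nat.lcm u v := by
  classical
  rcases (univ.filter fun x : ZMod n =>
      ZMod.castHom hu (ZMod u) x = A ∧ ZMod.castHom hv (ZMod v) x = B).eq_empty_or_nonempty with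
    he | ⟨x0, hx0⟩
  · rw [he]; simp
  · simp only [mem_filter, mem_univ, true_and] at hx0
    refine le_trans (Finset.card_le_card_of_injOn (fun x => x - x0)
      (t := univ.filter fun x : ZMod n => Nat.lcm u v ∣ x.val) ?_ ?_)
      (card_multiples_le (Nat.lcm_dvd hu hv))
    · intro x hx
      simp only [Finset.mem_coe, mem_filter, mem_univ, true_and] at hx ⊢
      refine Nat.lcm_dvd ?_ ?_
      · rw [← cast_eq_zero_iff' hu]
        rw [map_sub, hx.1, hx0.1, sub_self]
      · rw [← cast_eq_zero_iff' hv]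
        rw [map_sub, hx.2, hx0.2, sub_self]
    · intro x _ y _ hxy
      exact sub_left_injective hxy


lemma mul_eq_zero_iff_dvd {n : ℕ} [NeZero n] (x y : ZMod n) :
    x * y = 0 ↔ n ∣ x.val * y.val := by
  rw [← ZMod.natCast_eq_zero_iff, Nat.cast_mul, ZMod.natCast_zmod_val,
    ZMod.natCast_zmod_val]

/-- number of roots of `x(x-D)` mod `m` -/
lemma quad_count {m : ℕ} [NeZero m] (D : ZMod m) :
    (univ.filter fun x : ZMod m => x * (x - D) = 0).card
      ≤ ∑ e ∈ m.divisors, (if Nat.gcd e (m / e) ∣ D.val then Nat.gcd e (m / e) else 0) := by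
  classical
  have hm : m ≠ 0 := NeZero.ne m
  rw [Finset.card_eq_sum_card_fiberwise
    (f := fun x : ZMod m => Nat.gcd x.val m) (t := m.divisors)
    (fun x _ => Nat.mem_divisors.mpr ⟨Nat.gcd_dvd_right _ _, hm⟩)]
  refine Finset.sum_le_sum ?_
  intro e he
  obtain ⟨hedvd, -⟩ := Nat.mem_divisors.mp he
  have hmdiv : m / e ∣ m := Nat.div_dvd_of_dvd hedvd
  have he0 : e ≠ 0 := by
    rintro rfl; exact hm (zero_dvd_iff.mp hedvd)
  set w := Nat.gcd e (m / e) with hw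
  have hwe : w ∣ e := Nat.gcd_dvd_left _ _
  have hwm' : w ∣ m / e := Nat.gcd_dvd_right _ _
  have hwm : w ∣ m := hwe.trans hedvd
  -- the fiber is contained in a congruence set
  have hsub : (univ.filter fun x : ZMod m => x * (x - D) = 0).filter
        (fun x => Nat.gcd x.val m = e)
      ⊆ univ.filter fun x : ZMod m =>
        ZMod.castHom hedvd (ZMod e) x = 0 ∧
        ZMod.castHom hmdiv (ZMod (m / e)) x = ZMod.castHom hmdiv (ZMod (m / e)) D := by
    intro x hx
    simp only [mem_filter, mem_univ, true_and] at hx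
    obtain ⟨hroot, hgcd⟩ := hx
    have hex : e ∣ x.val := hgcd ▸ Nat.gcd_dvd_left _ _
    have hprod : m ∣ x.val * (x - D).val := (mul_eq_zero_iff_dvd _ _).mp hroot
    -- (m/e) ∣ (x - D).val
    have hcop : Nat.Coprime (x.val / e) (m / e) := by
      have := Nat.coprime_div_gcd_div_gcd (m := x.val) (n := m)
        (Nat.pos_of_ne_zero (by rw [hgcd] at *; exact he0))
      rwa [hgcd] at this
    have hdvd2 : m / e ∣ (x - D).val := by
      have h1 : m ∣ e * (x.val / e) * (x - D).val := by
        rwa [Nat.mul_div_cancel' hex]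
      have h2 : m / e ∣ (x.val / e) * (x - D).val := by
        have h1' : e * (m / e) ∣ e * ((x.val / e) * (x - D).val) := by
          rw [Nat.mul_div_cancel' hedvd, ← mul_assoc]; exact h1
        exact (Nat.mul_dvd_mul_iff_left (Nat.pos_of_ne_zero he0)).mp h1'
      exact (Nat.Coprime.dvd_of_dvd_mul_left (Nat.Coprime.symm hcop) h2)
    simp only [mem_filter, mem_univ, true_and]
    constructor
    · rw [cast_eq_zero_iff']; exact hex
    · have : ZMod.castHom hmdiv (ZMod (m / e)) (x - D) = 0 := by
        rw [cast_eq_zero_iff']; exact hdvd2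
      rw [map_sub, sub_eq_zero] at this
      exact this
  refine le_trans (Finset.card_le_card hsub) ?_
  rcases (univ.filter fun x : ZMod m =>
        ZMod.castHom hedvd (ZMod e) x = 0 ∧
        ZMod.castHom hmdiv (ZMod (m / e)) x = ZMod.castHom hmdiv (ZMod (m / e)) D
      ).eq_empty_or_nonempty with hemp | ⟨x0, hx0⟩
  · rw [hemp]; simp
  · -- compatibility: w ∣ D.val
    have hx0' := Finset.mem_filter.mp hx0
    have hDdvd : w ∣ D.val := by
      have h1 : w ∣ x0.val := hwe.trans ((cast_eq_zero_iff' hedvd x0).mp hx0'.2.1)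
      have h2 : w ∣ (x0 - D).val := by
        refine hwm'.trans ?_
        rw [← cast_eq_zero_iff' hmdiv, map_sub, hx0'.2.2, sub_self]
      have h3 : ZMod.castHom hwm (ZMod w) D = 0 := by
        have e1 : ZMod.castHom hwm (ZMod w) x0 = 0 := (cast_eq_zero_iff' hwm x0).mpr
          (h1.trans (dvd_refl _) )
        have e2 : ZMod.castHom hwm (ZMod w) (x0 - D) = 0 := (cast_eq_zero_iff' hwm _).mpr
          (h2.trans (dvd_refl _))
        have e3 : ZMod.castHom hwm (ZMod w) D
            = ZMod.castHom hwm (ZMod w) x0 - ZMod.castHom hwm (ZMod w) (x0 - D) := by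
          rw [← map_sub]; congr 1; ring
        rw [e3, e1, e2, sub_zero]
      exact (cast_eq_zero_iff' hwm D).mp h3
    rw [if_pos hDdvd]
    refine le_trans (capL hedvd hmdiv 0 _) ?_
    -- m / lcm e (m/e) = gcd e (m/e)
    have hlcm : Nat.lcm e (m / e) ∣ m := Nat.lcm_dvd hedvd hmdiv
    have hgl : w * Nat.lcm e (m / e) = m := by
      rw [hw, Nat.gcd_mul_lcm, Nat.mul_div_cancel' hedvd]
    have hlpos : 0 < Nat.lcm e (m / e) := Nat.pos_of_ne_zero (Nat.lcm_ne_zero he0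
      (fun h0 => hm (by rw [← Nat.mul_div_cancel' hedvd, h0, mul_zero])))
    exact le_of_eq (Nat.div_eq_of_eq_mul_left hlpos hgl.symm)


lemma cap1 {n v : ℕ} [NeZero n] (hv : v ∣ n) (A : ZMod v) :
    (univ.filter fun x : ZMod n => ZMod.castHom hv (ZMod v) x = A).card ≤ n / v := by
  classical
  rcases (univ.filter fun x : ZMod n =>
      ZMod.castHom hv (ZMod v) x = A).eq_empty_or_nonempty with he | ⟨x0, hx0⟩
  · rw [he]; simp
  · have hx0' := (Finset.mem_filter.mp hx0).2
    refine le_trans (Finset.card_le_card_of_injOn (fun x => x - x0)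
      (t := univ.filter fun x : ZMod n => v ∣ x.val) ?_ ?_) (card_multiples_le hv)
    · intro x hx
      have hx' := (Finset.mem_filter.mp hx).2
      simp only [Finset.mem_coe, mem_filter, mem_univ, true_and]
      rw [← cast_eq_zero_iff' hv, map_sub, hx', hx0', sub_self]
    · intro x _ y _ hxy
      exact sub_left_injective hxy

lemma ann_iff {n : ℕ} [NeZero n] (s Y : ZMod n) :
    s * Y = 0 ↔ (n / Nat.gcd s.val n) ∣ Y.val := by
  have hn : n ≠ 0 := NeZero.ne n
  set u := Nat.gcd s.val n with hu
  have hupos : 0 < u := Nat.gcd_pos_of_pos_right _ (Nat.pos_of_ne_zero hn)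
  have hud : u ∣ n := Nat.gcd_dvd_right _ _
  have husv : u ∣ s.val := Nat.gcd_dvd_left _ _
  rw [mul_eq_zero_iff_dvd]
  constructor
  · intro h
    have h1 : u * (n / u) ∣ u * ((s.val / u) * Y.val) := by
      rw [Nat.mul_div_cancel' hud, ← mul_assoc, Nat.mul_div_cancel' husv]; exact h
    have h2 := (Nat.mul_dvd_mul_iff_left hupos).mp h1
    have hcop : Nat.Coprime (n / u) (s.val / u) :=
      (Nat.coprime_div_gcd_div_gcd hupos).symm
    exact hcop.dvd_of_dvd_mul_left h2
  · intro h
    have : u * (n / u) ∣ s.val * Y.val := Nat.mul_dvd_mul husv h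
    rwa [Nat.mul_div_cancel' hud] at this

lemma scaled_quad_count {n : ℕ} [NeZero n] (z1 z2 : ZMod n) (m : ℕ) [NeZero m]
    (hmd : m ∣ n) (hmeq : m = n / Nat.gcd (z1 + z2).val n) :
    (univ.filter fun z : ZMod n => (z1 + z2) * ((z - z1) * (z - z2)) = 0).card
      ≤ Nat.gcd (z1 + z2).val n *
        (univ.filter fun x : ZMod m =>
          x * (x - ZMod.castHom hmd (ZMod m) (z2 - z1)) = 0).card := by
  classical
  have hn : n ≠ 0 := NeZero.ne n
  set u := Nat.gcd (z1 + z2).val n with hu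
  have hupos : 0 < u := Nat.gcd_pos_of_pos_right _ (Nat.pos_of_ne_zero hn)
  have hud : u ∣ n := Nat.gcd_dvd_right _ _
  set π := ZMod.castHom hmd (ZMod m) with hπ
  set S := univ.filter fun z : ZMod n => (z1 + z2) * ((z - z1) * (z - z2)) = 0 with hS
  have key : S.card ≤ u * (S.image (fun z => π (z - z1))).card := by
    refine Finset.card_le_mul_card_image S u ?_
    intro a _
    have hsub : S.filter (fun z => π (z - z1) = a)
        ⊆ univ.filter fun z : ZMod n => π z = a + π z1 := by
      intro z hz
      have hz' := (Finset.mem_filter.mp hz).2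
      simp only [mem_filter, mem_univ, true_and]
      rw [map_sub] at hz'
      rw [← hz']; ring
    refine le_trans (Finset.card_le_card hsub) (le_trans (cap1 hmd _) ?_)
    rw [hmeq, Nat.div_div_self hud hn]
  have himg : S.image (fun z => π (z - z1))
      ⊆ univ.filter fun x : ZMod m => x * (x - π (z2 - z1)) = 0 := by
    intro x hx
    obtain ⟨z, hz, rfl⟩ := Finset.mem_image.mp hx
    have hz' := (Finset.mem_filter.mp hz).2
    simp only [mem_filter, mem_univ, true_and]
    have h1 : m ∣ (((z - z1) * (z - z2)).val) := by
      rw [hmeq, hu]; exact (ann_iff _ _).mp hz'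
    have h2 : π ((z - z1) * (z - z2)) = 0 := (cast_eq_zero_iff' hmd _).mpr h1
    rw [map_mul] at h2
    have h3 : π (z - z2) = π (z - z1) - π (z2 - z1) := by
      rw [← map_sub]; congr 1; ring
    rw [h3] at h2
    exact h2
  calc S.card ≤ u * (S.image (fun z => π (z - z1))).card := key
    _ ≤ _ := Nat.mul_le_mul_left u (Finset.card_le_card himg)


lemma alg {R : Type*} [CommRing R] (a1 a2 a3 a4 b1 b2 b3 b4 : R)
    (u1 : a1 * b1 = 1) (u2 : a2 * b2 = 1) (u3 : a3 * b3 = 1) (u4 : a4 * b4 = 1)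
    (h1 : a1 + a2 = a3 + a4) (h2 : b1 + b2 = b3 + b4) :
    (a1 + a2) * ((a3 - a1) * (a3 - a2)) = 0 := by
  have step1 : (b1 + b2) * (a1 * a2) = a1 + a2 := by linear_combination a2 * u1 + a1 * u2
  have step2 : (b1 + b2) * a3 ^ 2 - (b1 + b2) * (a1 + a2) * a3 + (a1 + a2) = 0 := by
    linear_combination (1 - (b1 + b2) * a3) * h1 + (- a3 * a4) * h2
      + (- a4) * u3 + (- a3) * u4
  linear_combination (a1 * a2) * step2 + ((a1 + a2) * a3 - a3 ^ 2) * step1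

lemma dvd_val_cast_iff {n m w : ℕ} [NeZero n] (hmn : m ∣ n) (hwm : w ∣ m) (x : ZMod n) :
    w ∣ (ZMod.castHom hmn (ZMod m) x).val ↔ w ∣ x.val := by
  haveI : NeZero m := ⟨fun h0 => NeZero.ne n (by simpa [h0, zero_dvd_iff] using hmn)⟩
  have hcomp : ZMod.castHom hwm (ZMod w) (ZMod.castHom hmn (ZMod m) x)
      = ZMod.castHom (hwm.trans hmn) (ZMod w) x := by
    rw [← RingHom.comp_apply, ZMod.castHom_comp]
  rw [← cast_eq_zero_iff' hwm, ← cast_eq_zero_iff' (hwm.trans hmn) x, hcomp]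

lemma Qbound {c u w : ℕ} [NeZero c] (hu : u ∣ c) (hw : w ∣ c) (hu0 : u ≠ 0) (hw0 : w ≠ 0) :
    u * w * (univ.filter fun p : (ZMod c)ˣ × (ZMod c)ˣ =>
      u ∣ ((p.1 : ZMod c) + p.2).val ∧ w ∣ ((p.2 : ZMod c) - p.1).val).card
      ≤ 2 * c * c := by
  classical
  have hc : c ≠ 0 := NeZero.ne c
  rw [Finset.card_eq_sum_card_fiberwise (f := Prod.fst) (t := univ) (fun x _ => mem_univ _),
    Finset.mul_sum]
  have hbound : ∀ n1 : (ZMod c)ˣ,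
      u * w * ((univ.filter fun p : (ZMod c)ˣ × (ZMod c)ˣ =>
        u ∣ ((p.1 : ZMod c) + p.2).val ∧ w ∣ ((p.2 : ZMod c) - p.1).val).filter
          fun p => p.1 = n1).card ≤ 2 * c := by
    intro n1
    set S1 := (univ.filter fun p : (ZMod c)ˣ × (ZMod c)ˣ =>
        u ∣ ((p.1 : ZMod c) + p.2).val ∧ w ∣ ((p.2 : ZMod c) - p.1).val).filter
          (fun p => p.1 = n1) with hS1
    rcases S1.eq_empty_or_nonempty with he | ⟨p0, hp0⟩
    · rw [he]; simp
    · -- gcd u w divides 2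
      set g' := Nat.gcd u w with hg'
      have hg'0 : g' ≠ 0 := fun h0 => hu0 (Nat.eq_zero_of_gcd_eq_zero_left h0)
      haveI : NeZero g' := ⟨hg'0⟩
      have hg'c : g' ∣ c := (Nat.gcd_dvd_left u w).trans hu
      have hp0' := hp0
      simp only [hS1, mem_filter, mem_univ, true_and] at hp0'
      obtain ⟨⟨hd1, hd2⟩, hfst⟩ := hp0'
      set n2 := p0.2 with hn2
      have hπ1 : ZMod.castHom hg'c (ZMod g') ((p0.1 : ZMod c) + n2) = 0 :=
        (cast_eq_zero_iff' hg'c _).mpr ((Nat.gcd_dvd_left u w).trans hd1)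
      have hπ2 : ZMod.castHom hg'c (ZMod g') ((n2 : ZMod c) - p0.1) = 0 :=
        (cast_eq_zero_iff' hg'c _).mpr ((Nat.gcd_dvd_right u w).trans hd2)
      have hsum : ZMod.castHom hg'c (ZMod g') (2 * (n2 : ZMod c)) = 0 := by
        have : (2 * (n2 : ZMod c)) = ((p0.1 : ZMod c) + n2) + ((n2 : ZMod c) - p0.1) := by ring
        rw [this, map_add, hπ1, hπ2, add_zero]
      have hdvd2v : g' ∣ 2 * (n2 : ZMod c).val := by
        rw [← ZMod.natCast_eq_zero_iff]
        push_cast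
        have : (((n2 : ZMod c).val : ZMod c)) = (n2 : ZMod c) := ZMod.natCast_zmod_val _
        calc (2 : ZMod g') * ((n2 : ZMod c).val : ZMod g')
            = ZMod.castHom hg'c (ZMod g') (2 * (((n2 : ZMod c).val : ZMod c))) := by
              rw [map_mul, map_natCast, map_ofNat]
          _ = 0 := by rw [this, hsum]
      have hg2 : g' ∣ 2 := by
        have h1 : g' ∣ Nat.gcd (2 * (n2 : ZMod c).val) c := Nat.dvd_gcd hdvd2v hg'c
        have h2 : Nat.gcd (2 * (n2 : ZMod c).val) c ∣ 2 * Nat.gcd ((n2 : ZMod c).val) c := by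
          rw [← Nat.gcd_mul_left]
          exact Nat.dvd_gcd (Nat.gcd_dvd_left _ _)
            ((Nat.gcd_dvd_right _ _).trans (dvd_mul_left c 2))
        have h3 : Nat.gcd ((n2 : ZMod c).val) c = 1 := ZMod.val_coe_unit_coprime n2
        rw [h3, mul_one] at h2
        exact h1.trans h2
      -- count S1
      have hcount : S1.card ≤ c / Nat.lcm u w := by
        refine le_trans (Finset.card_le_card_of_injOn (fun p => ((p.2 : (ZMod c)ˣ) : ZMod c))
          (t := univ.filter fun z : ZMod c =>
            ZMod.castHom hu (ZMod u) z = - ZMod.castHom hu (ZMod u) (n1 : ZMod c) ∧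
            ZMod.castHom hw (ZMod w) z = ZMod.castHom hw (ZMod w) (n1 : ZMod c)) ?_ ?_)
          (capL hu hw _ _)
        · intro p hp
          rw [hS1, Finset.mem_coe, Finset.mem_filter] at hp
          obtain ⟨hpin, hfst'⟩ := hp
          rw [Finset.mem_filter] at hpin
          obtain ⟨-, hd1', hd2'⟩ := hpin
          simp only [Finset.mem_coe, mem_filter, mem_univ, true_and]
          constructor
          · have h := (cast_eq_zero_iff' hu _).mpr hd1'
            rw [map_add, hfst'] at h
            exact eq_neg_of_add_eq_zero_right h
          · have h := (cast_eq_zero_iff' hw _).mpr hd2'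
            rw [map_sub, sub_eq_zero, hfst'] at h
            exact h
        · intro p hp q hq hpq
          have hp' : p.1 = n1 := (Finset.mem_filter.mp (Finset.mem_coe.mp hp)).2
          have hq' : q.1 = n1 := (Finset.mem_filter.mp (Finset.mem_coe.mp hq)).2
          exact Prod.ext (hp'.trans hq'.symm) (Units.ext hpq)
      have hlcm : Nat.lcm u w ∣ c := Nat.lcm_dvd hu hw
      calc u * w * S1.card ≤ u * w * (c / Nat.lcm u w) := Nat.mul_le_mul_left _ hcount
        _ = g' * Nat.lcm u w * (c / Nat.lcm u w) := by rw [hg', Nat.gcd_mul_lcm]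
        _ = g' * c := by rw [mul_assoc, Nat.mul_div_cancel' hlcm]
        _ ≤ 2 * c := Nat.mul_le_mul_right _ (Nat.le_of_dvd (by norm_num) hg2)
  calc ∑ n1 : (ZMod c)ˣ, u * w * _ ≤ ∑ n1 : (ZMod c)ˣ, 2 * c := Finset.sum_le_sum
        (fun n1 _ => hbound n1)
    _ = Fintype.card (ZMod c)ˣ * (2 * c) := by rw [Finset.sum_const, smul_eq_mul, Finset.card_univ]
    _ ≤ c * (2 * c) := Nat.mul_le_mul_right _ (by
        rw [ZMod.card_units_eq_totient]
        exact Nat.totient_le c)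
    _ = 2 * c * c := by ring


lemma Mbound {c : ℕ} [NeZero c] (p : (ZMod c)ˣ × (ZMod c)ˣ) :
    (univ.filter fun z : ZMod c =>
        ((p.1 : ZMod c) + p.2) * ((z - (p.1 : ZMod c)) * (z - (p.2 : ZMod c))) = 0).card
      ≤ Nat.gcd ((p.1 : ZMod c) + p.2).val c *
        ∑ e ∈ (c / Nat.gcd ((p.1 : ZMod c) + p.2).val c).divisors,
          (if Nat.gcd e ((c / Nat.gcd ((p.1 : ZMod c) + p.2).val c) / e)
              ∣ ((p.2 : ZMod c) - (p.1 : ZMod c)).val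
           then Nat.gcd e ((c / Nat.gcd ((p.1 : ZMod c) + p.2).val c) / e) else 0) := by
  classical
  have hc : c ≠ 0 := NeZero.ne c
  set u := Nat.gcd ((p.1 : ZMod c) + p.2).val c with hu
  have hud : u ∣ c := Nat.gcd_dvd_right _ _
  set m := c / u with hm
  have hmd : m ∣ c := Nat.div_dvd_of_dvd hud
  have hm0 : m ≠ 0 := fun h0 => hc (by rw [← Nat.div_mul_cancel hud, ← hm, h0, zero_mul])
  haveI : NeZero m := ⟨hm0⟩
  refine le_trans (scaled_quad_count (p.1 : ZMod c) (p.2 : ZMod c) m hmd hm) ?_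
  refine Nat.mul_le_mul_left u ?_
  refine le_trans (quad_count _) (le_of_eq (Finset.sum_congr rfl ?_))
  intro e he
  obtain ⟨hedvd, -⟩ := Nat.mem_divisors.mp he
  have hwm : Nat.gcd e (m / e) ∣ m := (Nat.gcd_dvd_left _ _).trans hedvd
  simp only [dvd_val_cast_iff hmd hwm]

lemma KN_bound (c : ℕ) [NeZero c] :
    (univ.filter fun pq : ((ZMod c)ˣ × (ZMod c)ˣ) × ((ZMod c)ˣ × (ZMod c)ˣ) =>
        ((pq.1.1 : ZMod c) + pq.1.2) = (pq.2.1 : ZMod c) + pq.2.2 ∧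
        ((pq.1.1⁻¹ : (ZMod c)ˣ) : ZMod c) + ((pq.1.2⁻¹ : (ZMod c)ˣ) : ZMod c) =
          ((pq.2.1⁻¹ : (ZMod c)ˣ) : ZMod c) + ((pq.2.2⁻¹ : (ZMod c)ˣ) : ZMod c)).card
      ≤ 2 * c ^ 2 * c.divisors.card ^ 2 := by
  classical
  have hc : c ≠ 0 := NeZero.ne c
  -- Step A : fiber over the first pair
  rw [Finset.card_eq_sum_card_fiberwise (f := Prod.fst) (t := univ) (fun x _ => mem_univ _)]
  have stepA : ∀ p : (ZMod c)ˣ × (ZMod c)ˣ,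
      ((univ.filter fun pq : ((ZMod c)ˣ × (ZMod c)ˣ) × ((ZMod c)ˣ × (ZMod c)ˣ) =>
        ((pq.1.1 : ZMod c) + pq.1.2) = (pq.2.1 : ZMod c) + pq.2.2 ∧
        ((pq.1.1⁻¹ : (ZMod c)ˣ) : ZMod c) + ((pq.1.2⁻¹ : (ZMod c)ˣ) : ZMod c) =
          ((pq.2.1⁻¹ : (ZMod c)ˣ) : ZMod c) + ((pq.2.2⁻¹ : (ZMod c)ˣ) : ZMod c)).filter
        fun pq => pq.1 = p).card
      ≤ (univ.filter fun z : ZMod c =>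
          ((p.1 : ZMod c) + p.2) * ((z - (p.1 : ZMod c)) * (z - (p.2 : ZMod c))) = 0).card := by
    intro p
    refine Finset.card_le_card_of_injOn (fun pq => ((pq.2.1 : (ZMod c)ˣ) : ZMod c)) ?_ ?_
    · intro pq hpq
      rw [Finset.mem_coe, Finset.mem_filter] at hpq
      obtain ⟨hpq1, hfst⟩ := hpq
      rw [Finset.mem_filter] at hpq1
      obtain ⟨-, h1, h2⟩ := hpq1
      rw [hfst] at h1 h2
      simp only [Finset.mem_coe, mem_filter, mem_univ, true_and]
      exact alg (p.1 : ZMod c) (p.2 : ZMod c) (pq.2.1 : ZMod c) (pq.2.2 : ZMod c)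
        ((p.1⁻¹ : (ZMod c)ˣ) : ZMod c) ((p.2⁻¹ : (ZMod c)ˣ) : ZMod c)
        ((pq.2.1⁻¹ : (ZMod c)ˣ) : ZMod c) ((pq.2.2⁻¹ : (ZMod c)ˣ) : ZMod c)
        (by rw [← Units.val_mul, mul_inv_cancel, Units.val_one])
        (by rw [← Units.val_mul, mul_inv_cancel, Units.val_one])
        (by rw [← Units.val_mul, mul_inv_cancel, Units.val_one])
        (by rw [← Units.val_mul, mul_inv_cancel, Units.val_one])
        h1 h2
    · intro x hx y hy hxy
      have hx' := Finset.mem_filter.mp (Finset.mem_coe.mp hx)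
      have hy' := Finset.mem_filter.mp (Finset.mem_coe.mp hy)
      have hx1 := Finset.mem_filter.mp hx'.1
      have hy1 := Finset.mem_filter.mp hy'.1
      have e1 : x.1 = y.1 := hx'.2.trans hy'.2.symm
      have e21 : x.2.1 = y.2.1 := Units.ext hxy
      have e22 : x.2.2 = y.2.2 := by
        apply Units.ext
        have hx2 := hx1.2.1
        have hy2 := hy1.2.1
        rw [hx'.2] at hx2
        rw [hy'.2] at hy2
        have : ((x.2.1 : ZMod c)) + x.2.2 = ((y.2.1 : ZMod c)) + y.2.2 := by
          rw [← hx2, ← hy2]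
        rw [e21] at this
        exact add_left_cancel this
      exact Prod.ext e1 (Prod.ext e21 e22)
  refine le_trans (Finset.sum_le_sum fun p _ => le_trans (stepA p) (Mbound p)) ?_
  -- Step C : regroup by u = gcd
  refine le_trans (le_of_eq (Finset.sum_fiberwise_of_maps_to
    (f := fun p : (ZMod c)ˣ × (ZMod c)ˣ => Nat.gcd ((p.1 : ZMod c) + p.2).val c *
        ∑ e ∈ (c / Nat.gcd ((p.1 : ZMod c) + p.2).val c).divisors,
          (if Nat.gcd e ((c / Nat.gcd ((p.1 : ZMod c) + p.2).val c) / e)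
              ∣ ((p.2 : ZMod c) - (p.1 : ZMod c)).val
           then Nat.gcd e ((c / Nat.gcd ((p.1 : ZMod c) + p.2).val c) / e) else 0))
    (g := fun p : (ZMod c)ˣ × (ZMod c)ˣ => Nat.gcd ((p.1 : ZMod c) + p.2).val c)
    (t := c.divisors)
    (fun p _ => Nat.mem_divisors.mpr ⟨Nat.gcd_dvd_right _ _, hc⟩)).symm) ?_
  have stepU : ∀ u ∈ c.divisors,
      (∑ p ∈ univ.filter (fun p : (ZMod c)ˣ × (ZMod c)ˣ =>
          Nat.gcd ((p.1 : ZMod c) + p.2).val c = u),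
        Nat.gcd ((p.1 : ZMod c) + p.2).val c *
          ∑ e ∈ (c / Nat.gcd ((p.1 : ZMod c) + p.2).val c).divisors,
            (if Nat.gcd e ((c / Nat.gcd ((p.1 : ZMod c) + p.2).val c) / e)
                ∣ ((p.2 : ZMod c) - (p.1 : ZMod c)).val
             then Nat.gcd e ((c / Nat.gcd ((p.1 : ZMod c) + p.2).val c) / e) else 0))
      ≤ c.divisors.card * (2 * c ^ 2) := by
    intro u hu
    obtain ⟨hud, -⟩ := Nat.mem_divisors.mp hu
    have hu0 : u ≠ 0 := fun h0 => hc (zero_dvd_iff.mp (h0 ▸ hud))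
    set m := c / u with hm
    have hmd : m ∣ c := Nat.div_dvd_of_dvd hud
    -- rewrite the summand using the filter condition
    have hrw : ∀ p ∈ univ.filter (fun p : (ZMod c)ˣ × (ZMod c)ˣ =>
        Nat.gcd ((p.1 : ZMod c) + p.2).val c = u),
        Nat.gcd ((p.1 : ZMod c) + p.2).val c *
          ∑ e ∈ (c / Nat.gcd ((p.1 : ZMod c) + p.2).val c).divisors,
            (if Nat.gcd e ((c / Nat.gcd ((p.1 : ZMod c) + p.2).val c) / e)
                ∣ ((p.2 : ZMod c) - (p.1 : ZMod c)).val
             then Nat.gcd e ((c / Nat.gcd ((p.1 : ZMod c) + p.2).val c) / e) else 0)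
        = ∑ e ∈ m.divisors,
            u * (if Nat.gcd e (m / e) ∣ ((p.2 : ZMod c) - (p.1 : ZMod c)).val
             then Nat.gcd e (m / e) else 0) := by
      intro p hp
      have hpu : Nat.gcd ((p.1 : ZMod c) + p.2).val c = u := (Finset.mem_filter.mp hp).2
      rw [hpu, Finset.mul_sum]
    rw [Finset.sum_congr rfl hrw, Finset.sum_comm]
    have stepE : ∀ e ∈ m.divisors,
        (∑ p ∈ univ.filter (fun p : (ZMod c)ˣ × (ZMod c)ˣ =>
            Nat.gcd ((p.1 : ZMod c) + p.2).val c = u),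
          u * (if Nat.gcd e (m / e) ∣ ((p.2 : ZMod c) - (p.1 : ZMod c)).val
               then Nat.gcd e (m / e) else 0))
        ≤ 2 * c ^ 2 := by
      intro e he
      obtain ⟨hed, hm0⟩ := Nat.mem_divisors.mp he
      have he0 : e ≠ 0 := fun h0 => hm0 (zero_dvd_iff.mp (h0 ▸ hed))
      set w := Nat.gcd e (m / e) with hwdef
      have hw0 : w ≠ 0 := fun h0 => he0 (Nat.eq_zero_of_gcd_eq_zero_left h0)
      have hwc : w ∣ c := ((Nat.gcd_dvd_left _ _).trans hed).trans hmd
      have inner : ∀ p ∈ univ.filter (fun p : (ZMod c)ˣ × (ZMod c)ˣ =>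
          Nat.gcd ((p.1 : ZMod c) + p.2).val c = u),
          u * (if w ∣ ((p.2 : ZMod c) - (p.1 : ZMod c)).val then w else 0)
          ≤ u * (if u ∣ ((p.1 : ZMod c) + p.2).val ∧ w ∣ ((p.2 : ZMod c) - (p.1 : ZMod c)).val
                 then w else 0) := by
      -- chosen p in filter has u ∣ s
        intro p hp
        have hpu := (Finset.mem_filter.mp hp).2
        have hus : u ∣ ((p.1 : ZMod c) + p.2).val := hpu ▸ Nat.gcd_dvd_left _ _
        by_cases hcond : w ∣ ((p.2 : ZMod c) - (p.1 : ZMod c)).val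
        · rw [if_pos hcond, if_pos ⟨hus, hcond⟩]
        · rw [if_neg hcond]; simp
      refine le_trans (Finset.sum_le_sum inner) ?_
      have : (∑ p ∈ univ.filter (fun p : (ZMod c)ˣ × (ZMod c)ˣ =>
          Nat.gcd ((p.1 : ZMod c) + p.2).val c = u),
          u * (if u ∣ ((p.1 : ZMod c) + p.2).val ∧ w ∣ ((p.2 : ZMod c) - (p.1 : ZMod c)).val
               then w else 0))
          ≤ ∑ p : (ZMod c)ˣ × (ZMod c)ˣ,
          u * (if u ∣ ((p.1 : ZMod c) + p.2).val ∧ w ∣ ((p.2 : ZMod c) - (p.1 : ZMod c)).val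
               then w else 0) :=
        Finset.sum_le_sum_of_subset (Finset.filter_subset _ _)
      refine le_trans this ?_
      rw [← Finset.mul_sum]
      have hsum : (∑ p : (ZMod c)ˣ × (ZMod c)ˣ,
          (if u ∣ ((p.1 : ZMod c) + p.2).val ∧ w ∣ ((p.2 : ZMod c) - (p.1 : ZMod c)).val
           then w else 0))
          = (univ.filter fun p : (ZMod c)ˣ × (ZMod c)ˣ =>
              u ∣ ((p.1 : ZMod c) + p.2).val ∧ w ∣ ((p.2 : ZMod c) - (p.1 : ZMod c)).val).card
            * w := by
        rw [← Finset.sum_filter, Finset.sum_const, smul_eq_mul]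
      rw [hsum]
      calc u * ((univ.filter fun p : (ZMod c)ˣ × (ZMod c)ˣ =>
              u ∣ ((p.1 : ZMod c) + p.2).val ∧ w ∣ ((p.2 : ZMod c) - (p.1 : ZMod c)).val).card
            * w)
          = u * w * (univ.filter fun p : (ZMod c)ˣ × (ZMod c)ˣ =>
              u ∣ ((p.1 : ZMod c) + p.2).val ∧ w ∣ ((p.2 : ZMod c) - (p.1 : ZMod c)).val).card := by
            ring
        _ ≤ 2 * c * c := Qbound hud hwc hu0 hw0
        _ = 2 * c ^ 2 := by ring
    refine le_trans (Finset.sum_le_sum stepE) ?_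
    rw [Finset.sum_const, smul_eq_mul]
    exact Nat.mul_le_mul_right _ (Finset.card_le_card (Nat.divisors_subset_of_dvd hc hmd))
  refine le_trans (Finset.sum_le_sum stepU) ?_
  rw [Finset.sum_const, smul_eq_mul]
  ring_nf
  nlinarith [sq_nonneg (c.divisors.card : ℤ)]


lemma totient_mul_tau (c : ℕ) (hc : c ≠ 0) : c ≤ c.totient * c.divisors.card := by
  rw [Nat.totient_eq_prod_factorization hc, Nat.card_divisors hc]
  conv_lhs => rw [← Nat.factorization_prod_pow_eq_self hc]
  unfold Finsupp.prod
  rw [← Nat.support_factorization, ← Finset.prod_mul_distrib]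
  refine Finset.prod_le_prod' ?_
  intro p hp
  have hpp : p.Prime := Nat.prime_of_mem_primeFactors (by
    rwa [Nat.support_factorization] at hp)
  have hk : 1 ≤ c.factorization p := Nat.one_le_iff_ne_zero.mpr
    (Finsupp.mem_support_iff.mp hp)
  set k := c.factorization p
  have hp2 : 2 ≤ p := hpp.two_le
  calc p ^ k = p ^ (k - 1) * p := by
        rw [← pow_succ, Nat.sub_add_cancel hk]
    _ ≤ p ^ (k - 1) * ((p - 1) * (k + 1)) := by
        refine Nat.mul_le_mul_left _ ?_
        calc p ≤ (p - 1) * 2 := by omega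
          _ ≤ (p - 1) * (k + 1) := Nat.mul_le_mul_left _ (by omega)
    _ = p ^ (k - 1) * (p - 1) * (k + 1) := by ring

lemma tau_rpow_bound (δ : ℝ) (hδ : 0 < δ) : ∃ C : ℝ, 0 < C ∧ ∀ c : ℕ, c ≠ 0 →
    (c.divisors.card : ℝ) ≤ C * (c : ℝ) ^ δ := by
  classical
  set t : ℝ := δ * Real.log 2 with ht
  have ht0 : 0 < t := mul_pos hδ (Real.log_pos (by norm_num))
  set B : ℝ := max (1 + 1 / t) 1 with hB
  have hB1 : 1 ≤ B := le_max_right _ _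
  have hB0 : 0 < B := lt_of_lt_of_le one_pos hB1
  set P : ℕ := ⌈(2 : ℝ) ^ (1 / δ)⌉₊ with hP
  refine ⟨B ^ P, pow_pos hB0 P, ?_⟩
  intro c hc
  have key : ∀ p ∈ c.factorization.support,
      ((c.factorization p + 1 : ℕ) : ℝ)
        ≤ (if p ≤ P then B else 1) * (((p ^ c.factorization p : ℕ) : ℝ)) ^ δ := by
    intro p hp
    have hpp : p.Prime := Nat.prime_of_mem_primeFactors (by
      rwa [Nat.support_factorization] at hp)
    have hk : 1 ≤ c.factorization p := Nat.one_le_iff_ne_zero.mpr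
      (Finsupp.mem_support_iff.mp hp)
    set k := c.factorization p
    have hp2 : (2 : ℝ) ≤ (p : ℝ) := by exact_mod_cast hpp.two_le
    have hppos : (0 : ℝ) < (p : ℝ) := by linarith
    have hcast : (((p ^ k : ℕ) : ℝ)) ^ δ = ((p : ℝ) ^ δ) ^ k := by
      push_cast
      rw [← Real.rpow_natCast ((p : ℝ) ^ δ) k, ← Real.rpow_mul (le_of_lt hppos),
        mul_comm δ (k : ℝ), Real.rpow_mul (le_of_lt hppos), Real.rpow_natCast]
    rw [hcast]
    have hpδ1 : (1 : ℝ) ≤ (p : ℝ) ^ δ := by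
      apply Real.one_le_rpow (by linarith) (le_of_lt hδ)
    have hpow1 : (1 : ℝ) ≤ ((p : ℝ) ^ δ) ^ k := one_le_pow₀ hpδ1
    have hfac : (1 : ℝ) ≤ (if p ≤ P then B else 1) := by
      split_ifs
      · exact hB1
      · exact le_refl 1
    by_cases hbig : (2 : ℝ) ≤ (p : ℝ) ^ δ
    · have h1 : ((k + 1 : ℕ) : ℝ) ≤ (2 : ℝ) ^ k := by
        have := Nat.succ_le_of_lt (Nat.lt_two_pow_self (n := k))
        exact_mod_cast this
      have h2 : (2 : ℝ) ^ k ≤ ((p : ℝ) ^ δ) ^ k :=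
        pow_le_pow_left₀ (by norm_num) hbig k
      calc ((k + 1 : ℕ) : ℝ) ≤ ((p : ℝ) ^ δ) ^ k := le_trans h1 h2
        _ = 1 * (((p : ℝ) ^ δ) ^ k) := (one_mul _).symm
        _ ≤ (if p ≤ P then B else 1) * (((p : ℝ) ^ δ) ^ k) :=
            mul_le_mul_of_nonneg_right hfac (by positivity)
    · -- small prime : p ≤ P
      push_neg at hbig
      have hple : p ≤ P := by
        have h3 : (p : ℝ) < (2 : ℝ) ^ (1 / δ) := by
          have h4 : ((p : ℝ) ^ δ) ^ (1 / δ) < (2 : ℝ) ^ (1 / δ) :=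
            Real.rpow_lt_rpow (by positivity) hbig (by positivity)
          rwa [← Real.rpow_mul (le_of_lt hppos), mul_one_div, div_self (ne_of_gt hδ),
            Real.rpow_one] at h4
        have h5 : (p : ℝ) < (P : ℝ) := lt_of_lt_of_le h3 (Nat.le_ceil _)
        exact le_of_lt (by exact_mod_cast h5)
      rw [if_pos hple]
      have hexpt : (2 : ℝ) ^ δ = Real.exp t := by
        rw [Real.rpow_def_of_pos (by norm_num : (0:ℝ) < 2), ht, mul_comm]
      have hEk : Real.exp t ^ k = Real.exp ((k : ℝ) * t) := by
        rw [← Real.exp_nat_mul]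
      have h4 : (k : ℝ) * t + 1 ≤ Real.exp ((k : ℝ) * t) := Real.add_one_le_exp _
      have h5 : (1 : ℝ) ≤ Real.exp ((k : ℝ) * t) := Real.one_le_exp (by positivity)
      have hmain : ((k + 1 : ℕ) : ℝ) ≤ (1 + 1 / t) * Real.exp ((k : ℝ) * t) := by
        push_cast
        have hinv : t * (1 / t) = 1 := mul_one_div_cancel (ne_of_gt ht0)
        nlinarith [h4, h5, ht0, mul_pos ht0 ht0]
      have h2δ : (2 : ℝ) ^ δ ≤ (p : ℝ) ^ δ :=
        Real.rpow_le_rpow (by norm_num) hp2 (le_of_lt hδ)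
      calc ((k + 1 : ℕ) : ℝ) ≤ (1 + 1 / t) * Real.exp ((k : ℝ) * t) := hmain
        _ ≤ B * Real.exp ((k : ℝ) * t) :=
            mul_le_mul_of_nonneg_right (le_max_left _ _) (le_of_lt (Real.exp_pos _))
        _ = B * ((2 : ℝ) ^ δ) ^ k := by rw [hexpt, hEk]
        _ ≤ B * (((p : ℝ) ^ δ) ^ k) := by
            refine mul_le_mul_of_nonneg_left ?_ (le_of_lt hB0)
            exact pow_le_pow_left₀ (by positivity) h2δ k
  -- assemble
  have hτ : (c.divisors.card : ℝ) = ∏ p ∈ c.factorization.support,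
      ((c.factorization p + 1 : ℕ) : ℝ) := by
    rw [Nat.card_divisors hc, ← Nat.support_factorization]
    push_cast
    rfl
  rw [hτ]
  have step1 : (∏ p ∈ c.factorization.support, ((c.factorization p + 1 : ℕ) : ℝ))
      ≤ ∏ p ∈ c.factorization.support,
          ((if p ≤ P then B else 1) * (((p ^ c.factorization p : ℕ) : ℝ)) ^ δ) := by
    refine Finset.prod_le_prod ?_ key
    intro p _
    positivity
  refine le_trans step1 ?_
  rw [Finset.prod_mul_distrib]
  have step2 : (∏ p ∈ c.factorization.support, (((p ^ c.factorization p : ℕ) : ℝ)) ^ δ)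
      = (c : ℝ) ^ δ := by
    rw [Real.finset_prod_rpow _ _ (fun p _ => by positivity) δ]
    congr 1
    rw [← Nat.cast_prod]
    congr 1
    conv_rhs => rw [← Nat.factorization_prod_pow_eq_self hc]
    rfl
  rw [step2]
  refine mul_le_mul_of_nonneg_right ?_ (by positivity)
  -- product of the ite factors
  calc (∏ p ∈ c.factorization.support, (if p ≤ P then B else 1))
      = B ^ (c.factorization.support.filter (fun p => p ≤ P)).card := by
        rw [Finset.prod_ite, Finset.prod_const, Finset.prod_const, one_pow, mul_one]
    _ ≤ B ^ P := by
        refine pow_le_pow_right₀ hB1 ?_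
        have hsub : c.factorization.support.filter (fun p => p ≤ P) ⊆ Finset.Icc 1 P := by
          intro p hp'
          obtain ⟨hp1, hp2'⟩ := Finset.mem_filter.mp hp'
          have hpp : p.Prime := Nat.prime_of_mem_primeFactors (by
            rwa [Nat.support_factorization] at hp1)
          exact Finset.mem_Icc.mpr ⟨le_trans (by norm_num) hpp.two_le, hp2'⟩
        refine le_trans (Finset.card_le_card hsub) ?_
        rw [Nat.card_Icc]
        omega


noncomputable section Char

variable {c : ℕ} [NeZero c]

local notation "ψ" => ZMod.stdAddChar (N := c)

lemma psi_abs (x : ZMod c) : ‖ψ x‖ = 1 := by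
  rw [ZMod.stdAddChar_apply]
  exact Circle.norm_coe _

lemma psi_mul (x y : ZMod c) : ψ x * ψ y = ψ (x + y) :=
  (AddChar.map_add_eq_mul _ x y).symm

lemma conj_psi (x : ZMod c) : (starRingEnd ℂ) (ψ x) = ψ (-x) := by
  have h1 : ψ x * ψ (-x) = 1 := by
    rw [psi_mul, add_neg_cancel, AddChar.map_zero_eq_one]
  have h2 : (starRingEnd ℂ) (ψ x) * ψ x = 1 := by
    rw [mul_comm, Complex.mul_conj]
    norm_cast
    rw [Complex.normSq_eq_norm_sq, psi_abs]
    norm_num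
  calc (starRingEnd ℂ) (ψ x) = (starRingEnd ℂ) (ψ x) * (ψ x * ψ (-x)) := by
        rw [h1, mul_one]
    _ = ((starRingEnd ℂ) (ψ x) * ψ x) * ψ (-x) := by ring
    _ = ψ (-x) := by rw [h2, one_mul]

/-- the Kloosterman sum -/
def KS (α β : ZMod c) : ℂ :=
  ∑ n : (ZMod c)ˣ, ψ (α * (n : ZMod c)) * ψ (β * ((n⁻¹ : (ZMod c)ˣ) : ZMod c))

lemma orth (A : ZMod c) : ∑ x : ZMod c, ψ (x * A) = if A = 0 then (c : ℂ) else 0 := by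
  classical
  have h := AddChar.sum_mulShift A (ZMod.isPrimitive_stdAddChar c)
  rw [ZMod.card] at h
  rw [h]
  split_ifs <;> simp

lemma KS_invariant (α β : ZMod c) (t : (ZMod c)ˣ) :
    KS (α * (t : ZMod c)) (β * ((t⁻¹ : (ZMod c)ˣ) : ZMod c)) = KS α β := by
  unfold KS
  refine Fintype.sum_equiv (Equiv.mulLeft t) _ _ ?_
  intro n
  simp only [Equiv.coe_mulLeft, Units.val_mul, mul_inv_rev]
  congr 1
  · congr 1
    ring
  · congr 1
    ring

lemma KS_sq (α β : ZMod c) :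
    KS α β ^ 2 = ∑ p : (ZMod c)ˣ × (ZMod c)ˣ,
      ψ (α * ((p.1 : ZMod c) + p.2)) *
      ψ (β * (((p.1⁻¹ : (ZMod c)ˣ) : ZMod c) + ((p.2⁻¹ : (ZMod c)ˣ) : ZMod c))) := by
  rw [sq]
  unfold KS
  rw [Finset.sum_mul_sum, Fintype.sum_prod_type]
  refine Finset.sum_congr rfl fun n _ => Finset.sum_congr rfl fun m _ => ?_
  calc (ψ (α * (n : ZMod c)) * ψ (β * ((n⁻¹ : (ZMod c)ˣ) : ZMod c))) *
        (ψ (α * (m : ZMod c)) * ψ (β * ((m⁻¹ : (ZMod c)ˣ) : ZMod c)))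
      = (ψ (α * (n : ZMod c)) * ψ (α * (m : ZMod c))) *
        (ψ (β * ((n⁻¹ : (ZMod c)ˣ) : ZMod c)) * ψ (β * ((m⁻¹ : (ZMod c)ˣ) : ZMod c))) := by
        ring
    _ = ψ (α * (n : ZMod c) + α * (m : ZMod c)) *
        ψ (β * ((n⁻¹ : (ZMod c)ˣ) : ZMod c) + β * ((m⁻¹ : (ZMod c)ˣ) : ZMod c)) := by
        rw [psi_mul, psi_mul]
    _ = _ := by rw [← mul_add, ← mul_add]

lemma fourth_moment :
    ∑ α : ZMod c, ∑ β : ZMod c, (KS α β * (starRingEnd ℂ) (KS α β)) ^ 2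
      = (c : ℂ) ^ 2 *
        ((Finset.univ.filter fun pq : ((ZMod c)ˣ × (ZMod c)ˣ) × ((ZMod c)ˣ × (ZMod c)ˣ) =>
          ((pq.1.1 : ZMod c) + pq.1.2) = (pq.2.1 : ZMod c) + pq.2.2 ∧
          ((pq.1.1⁻¹ : (ZMod c)ˣ) : ZMod c) + ((pq.1.2⁻¹ : (ZMod c)ˣ) : ZMod c) =
            ((pq.2.1⁻¹ : (ZMod c)ˣ) : ZMod c) + ((pq.2.2⁻¹ : (ZMod c)ˣ) : ZMod c)).card : ℂ) := by
  classical
  have expand : ∀ α β : ZMod c, (KS α β * (starRingEnd ℂ) (KS α β)) ^ 2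
      = ∑ p : (ZMod c)ˣ × (ZMod c)ˣ, ∑ q : (ZMod c)ˣ × (ZMod c)ˣ,
          ψ (α * (((p.1 : ZMod c) + p.2) - ((q.1 : ZMod c) + q.2))) *
          ψ (β * ((((p.1⁻¹ : (ZMod c)ˣ) : ZMod c) + ((p.2⁻¹ : (ZMod c)ˣ) : ZMod c)) -
            (((q.1⁻¹ : (ZMod c)ˣ) : ZMod c) + ((q.2⁻¹ : (ZMod c)ˣ) : ZMod c)))) := by
    intro α β
    have h0 : (KS α β * (starRingEnd ℂ) (KS α β)) ^ 2
        = KS α β ^ 2 * (starRingEnd ℂ) (KS α β ^ 2) := by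
      rw [map_pow]; ring
    rw [h0, KS_sq, map_sum, Finset.sum_mul_sum]
    refine Finset.sum_congr rfl fun p _ => Finset.sum_congr rfl fun q _ => ?_
    rw [map_mul (starRingEnd ℂ), conj_psi, conj_psi]
    calc ψ (α * ((p.1 : ZMod c) + p.2)) *
          ψ (β * (((p.1⁻¹ : (ZMod c)ˣ) : ZMod c) + ((p.2⁻¹ : (ZMod c)ˣ) : ZMod c))) *
          (ψ (-(α * ((q.1 : ZMod c) + q.2))) *
           ψ (-(β * (((q.1⁻¹ : (ZMod c)ˣ) : ZMod c) + ((q.2⁻¹ : (ZMod c)ˣ) : ZMod c)))))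
        = (ψ (α * ((p.1 : ZMod c) + p.2)) * ψ (-(α * ((q.1 : ZMod c) + q.2)))) *
          (ψ (β * (((p.1⁻¹ : (ZMod c)ˣ) : ZMod c) + ((p.2⁻¹ : (ZMod c)ˣ) : ZMod c))) *
           ψ (-(β * (((q.1⁻¹ : (ZMod c)ˣ) : ZMod c) + ((q.2⁻¹ : (ZMod c)ˣ) : ZMod c))))) := by
          ring
      _ = _ := by
          rw [psi_mul, psi_mul]
          congr 2
          · ring
          · ring
  calc ∑ α : ZMod c, ∑ β : ZMod c, (KS α β * (starRingEnd ℂ) (KS α β)) ^ 2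
      = ∑ α : ZMod c, ∑ β : ZMod c, ∑ p : (ZMod c)ˣ × (ZMod c)ˣ, ∑ q : (ZMod c)ˣ × (ZMod c)ˣ,
          ψ (α * (((p.1 : ZMod c) + p.2) - ((q.1 : ZMod c) + q.2))) *
          ψ (β * ((((p.1⁻¹ : (ZMod c)ˣ) : ZMod c) + ((p.2⁻¹ : (ZMod c)ˣ) : ZMod c)) -
            (((q.1⁻¹ : (ZMod c)ˣ) : ZMod c) + ((q.2⁻¹ : (ZMod c)ˣ) : ZMod c)))) :=
        Finset.sum_congr rfl fun α _ => Finset.sum_congr rfl fun β _ => expand α β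
    _ = ∑ α : ZMod c, ∑ p : (ZMod c)ˣ × (ZMod c)ˣ, ∑ q : (ZMod c)ˣ × (ZMod c)ˣ,
          ψ (α * (((p.1 : ZMod c) + p.2) - ((q.1 : ZMod c) + q.2))) *
          (∑ β : ZMod c,
            ψ (β * ((((p.1⁻¹ : (ZMod c)ˣ) : ZMod c) + ((p.2⁻¹ : (ZMod c)ˣ) : ZMod c)) -
            (((q.1⁻¹ : (ZMod c)ˣ) : ZMod c) + ((q.2⁻¹ : (ZMod c)ˣ) : ZMod c))))) := by
        refine Finset.sum_congr rfl fun α _ => ?_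
        rw [Finset.sum_comm]
        refine Finset.sum_congr rfl fun p _ => ?_
        rw [Finset.sum_comm]
        refine Finset.sum_congr rfl fun q _ => ?_
        rw [← Finset.mul_sum]
    _ = ∑ p : (ZMod c)ˣ × (ZMod c)ˣ, ∑ q : (ZMod c)ˣ × (ZMod c)ˣ,
          (∑ α : ZMod c, ψ (α * (((p.1 : ZMod c) + p.2) - ((q.1 : ZMod c) + q.2)))) *
          (∑ β : ZMod c,
            ψ (β * ((((p.1⁻¹ : (ZMod c)ˣ) : ZMod c) + ((p.2⁻¹ : (ZMod c)ˣ) : ZMod c)) -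
            (((q.1⁻¹ : (ZMod c)ˣ) : ZMod c) + ((q.2⁻¹ : (ZMod c)ˣ) : ZMod c))))) := by
        rw [Finset.sum_comm]
        refine Finset.sum_congr rfl fun p _ => ?_
        rw [Finset.sum_comm]
        refine Finset.sum_congr rfl fun q _ => ?_
        rw [← Finset.sum_mul]
    _ = ∑ p : (ZMod c)ˣ × (ZMod c)ˣ, ∑ q : (ZMod c)ˣ × (ZMod c)ˣ,
          (if ((p.1 : ZMod c) + p.2) = ((q.1 : ZMod c) + q.2) ∧
              (((p.1⁻¹ : (ZMod c)ˣ) : ZMod c) + ((p.2⁻¹ : (ZMod c)ˣ) : ZMod c)) =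
              (((q.1⁻¹ : (ZMod c)ˣ) : ZMod c) + ((q.2⁻¹ : (ZMod c)ˣ) : ZMod c))
           then (c : ℂ) ^ 2 else 0) := by
        refine Finset.sum_congr rfl fun p _ => Finset.sum_congr rfl fun q _ => ?_
        rw [orth, orth]
        by_cases h1 : ((p.1 : ZMod c) + p.2) = ((q.1 : ZMod c) + q.2) <;>
          by_cases h2 : (((p.1⁻¹ : (ZMod c)ˣ) : ZMod c) + ((p.2⁻¹ : (ZMod c)ˣ) : ZMod c)) =
              (((q.1⁻¹ : (ZMod c)ˣ) : ZMod c) + ((q.2⁻¹ : (ZMod c)ˣ) : ZMod c)) <;>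
          simp [sub_eq_zero, h1, h2, sq]
    _ = ∑ pq : ((ZMod c)ˣ × (ZMod c)ˣ) × ((ZMod c)ˣ × (ZMod c)ˣ),
          (if ((pq.1.1 : ZMod c) + pq.1.2) = ((pq.2.1 : ZMod c) + pq.2.2) ∧
              (((pq.1.1⁻¹ : (ZMod c)ˣ) : ZMod c) + ((pq.1.2⁻¹ : (ZMod c)ˣ) : ZMod c)) =
              (((pq.2.1⁻¹ : (ZMod c)ˣ) : ZMod c) + ((pq.2.2⁻¹ : (ZMod c)ˣ) : ZMod c))
           then (c : ℂ) ^ 2 else 0) := by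
        conv_rhs => rw [← Finset.univ_product_univ]
        rw [Finset.sum_product]
    _ = _ := by
        rw [← Finset.sum_filter, Finset.sum_const, nsmul_eq_mul]
        ring

lemma ann_card (e : ZMod c) :
    (univ.filter fun x : ZMod c => e * x = 0).card ≤ Nat.gcd e.val c := by
  classical
  have hc : c ≠ 0 := NeZero.ne c
  have hud : Nat.gcd e.val c ∣ c := Nat.gcd_dvd_right _ _
  have heq : (univ.filter fun x : ZMod c => e * x = 0)
      = univ.filter fun x : ZMod c => (c / Nat.gcd e.val c) ∣ x.val := by
    refine Finset.filter_congr fun x _ => ?_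
    exact ann_iff e x
  rw [heq]
  refine le_trans (card_multiples_le (Nat.div_dvd_of_dvd hud)) ?_
  rw [Nat.div_div_self hud hc]

lemma G_le (a b : ℤ) :
    ((univ.filter fun x : ZMod c => (a : ZMod c) * x = 0 ∧ (b : ZMod c) * x = 0).card)
      ≤ Int.gcd a (Int.gcd b (c : ℤ)) := by
  classical
  set g : ℕ := Int.gcd a b with hg
  have hsub : (univ.filter fun x : ZMod c => (a : ZMod c) * x = 0 ∧ (b : ZMod c) * x = 0)
      ⊆ univ.filter fun x : ZMod c => ((g : ℕ) : ZMod c) * x = 0 := by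
    intro x hx
    obtain ⟨-, ha, hb⟩ := Finset.mem_filter.mp hx
    simp only [mem_filter, mem_univ, true_and]
    have hbez : ((g : ℤ) : ZMod c) = (a : ZMod c) * ((Int.gcdA a b : ℤ) : ZMod c)
        + (b : ZMod c) * ((Int.gcdB a b : ℤ) : ZMod c) := by
      have := Int.gcd_eq_gcd_ab a b
      calc ((g : ℤ) : ZMod c) = ((a * Int.gcdA a b + b * Int.gcdB a b : ℤ) : ZMod c) := by
            rw [← this]
        _ = _ := by push_cast; ring
    have hcast : ((g : ℕ) : ZMod c) = ((g : ℤ) : ZMod c) := by push_cast; rfl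
    rw [hcast, hbez, add_mul]
    calc (a : ZMod c) * ((Int.gcdA a b : ℤ) : ZMod c) * x
          + (b : ZMod c) * ((Int.gcdB a b : ℤ) : ZMod c) * x
        = ((Int.gcdA a b : ℤ) : ZMod c) * ((a : ZMod c) * x)
          + ((Int.gcdB a b : ℤ) : ZMod c) * ((b : ZMod c) * x) := by ring
      _ = 0 := by rw [ha, hb]; ring
  refine le_trans (Finset.card_le_card hsub) (le_trans (ann_card _) ?_)
  have hval : ((g : ℕ) : ZMod c).val = g % c := ZMod.val_natCast c g
  rw [hval]
  have h1 : Nat.gcd (g % c) c = Nat.gcd g c := by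
    rw [Nat.gcd_comm g c]
    exact (Nat.gcd_rec c g).symm
  rw [h1]
  have h2 : Nat.gcd g c = Int.gcd a (Int.gcd b (c : ℤ)) := by
    rw [hg]
    unfold Int.gcd
    simp [Int.natAbs_natCast, Nat.gcd_assoc]
  rw [h2]

lemma orbit_sum (α β : ZMod c) :
    (Fintype.card (ZMod c)ˣ : ℝ) * (‖KS α β‖) ^ 4
      ≤ ((univ.filter fun x : ZMod c => α * x = 0 ∧ β * x = 0).card : ℝ) *
        ∑ v : ZMod c × ZMod c, (‖KS v.1 v.2‖) ^ 4 := by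
  classical
  set G := (univ.filter fun x : ZMod c => α * x = 0 ∧ β * x = 0).card with hG
  set F : (ZMod c)ˣ → ZMod c × ZMod c := fun t => (α * (t : ZMod c), β * ((t⁻¹ : (ZMod c)ˣ) : ZMod c)) with hF
  set f : ZMod c × ZMod c → ℝ := fun v => (‖KS v.1 v.2‖) ^ 4 with hf
  have hfnn : ∀ v, 0 ≤ f v := fun v => by positivity
  have hinv : ∀ t : (ZMod c)ˣ, f (F t) = (‖KS α β‖) ^ 4 := by
    intro t
    simp only [hf, hF]
    rw [KS_invariant]
  have hfiber : ∀ v : ZMod c × ZMod c,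
      ((univ : Finset (ZMod c)ˣ).filter fun t => F t = v).card ≤ G := by
    intro v
    rcases ((univ : Finset (ZMod c)ˣ).filter fun t => F t = v).eq_empty_or_nonempty with
      he | ⟨t0, ht0⟩
    · rw [he]; simp
    · have ht0' := (Finset.mem_filter.mp ht0).2
      refine Finset.card_le_card_of_injOn (fun t => (t : ZMod c) - (t0 : ZMod c)) ?_ ?_
      · intro t ht
        have ht' := (Finset.mem_filter.mp ht).2
        have h1 : α * (t : ZMod c) = α * (t0 : ZMod c) := by
          have := congrArg Prod.fst (ht'.trans ht0'.symm)
          simpa [hF] using this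
        have h2 : β * ((t⁻¹ : (ZMod c)ˣ) : ZMod c) = β * ((t0⁻¹ : (ZMod c)ˣ) : ZMod c) := by
          have := congrArg Prod.snd (ht'.trans ht0'.symm)
          simpa [hF] using this
        have h2' : β * (t0 : ZMod c) = β * (t : ZMod c) := by
          have ht1 : ((t⁻¹ : (ZMod c)ˣ) : ZMod c) * (t : ZMod c) = 1 := by
            rw [← Units.val_mul, inv_mul_cancel, Units.val_one]
          have ht2 : ((t0⁻¹ : (ZMod c)ˣ) : ZMod c) * (t0 : ZMod c) = 1 := by
            rw [← Units.val_mul, inv_mul_cancel, Units.val_one]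
          have e1 : (β * ((t⁻¹ : (ZMod c)ˣ) : ZMod c)) * ((t : ZMod c) * (t0 : ZMod c))
              = β * (t0 : ZMod c) := by
            calc (β * ((t⁻¹ : (ZMod c)ˣ) : ZMod c)) * ((t : ZMod c) * (t0 : ZMod c))
                = β * ((((t⁻¹ : (ZMod c)ˣ) : ZMod c) * (t : ZMod c)) * (t0 : ZMod c)) := by ring
              _ = β * (t0 : ZMod c) := by rw [ht1, one_mul]
          have e2 : (β * ((t0⁻¹ : (ZMod c)ˣ) : ZMod c)) * ((t : ZMod c) * (t0 : ZMod c))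
              = β * (t : ZMod c) := by
            calc (β * ((t0⁻¹ : (ZMod c)ˣ) : ZMod c)) * ((t : ZMod c) * (t0 : ZMod c))
                = β * ((((t0⁻¹ : (ZMod c)ˣ) : ZMod c) * (t0 : ZMod c)) * (t : ZMod c)) := by ring
              _ = β * (t : ZMod c) := by rw [ht2, one_mul]
          rw [← e1, ← e2, h2]
        simp only [Finset.mem_coe, mem_filter, mem_univ, true_and]
        constructor
        · rw [mul_sub, h1, sub_self]
        · rw [mul_sub, ← h2', sub_self]
      · intro t _ s _ hts
        have : (t : ZMod c) = (s : ZMod c) := by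
          have := sub_left_injective (G := ZMod c) hts
          exact this
        exact Units.ext this
  have hLHS : ∑ t : (ZMod c)ˣ, f (F t) = (Fintype.card (ZMod c)ˣ : ℝ) * (‖KS α β‖) ^ 4 := by
    rw [Finset.sum_congr rfl fun t _ => hinv t, Finset.sum_const, Finset.card_univ, nsmul_eq_mul]
  rw [← hLHS]
  rw [Finset.sum_comp]
  calc ∑ v ∈ Finset.image F univ, ((univ.filter fun t => F t = v).card : ℕ) • f v
      ≤ ∑ v ∈ Finset.image F univ, (G : ℕ) • f v := by
        exact Finset.sum_le_sum fun v _ => nsmul_le_nsmul_left (hfnn v) (hfiber v)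
    _ = ∑ v ∈ Finset.image F univ, (G : ℝ) * f v := by
        refine Finset.sum_congr rfl fun v _ => ?_
        rw [nsmul_eq_mul]
    _ ≤ ∑ v : ZMod c × ZMod c, (G : ℝ) * f v := by
        refine Finset.sum_le_sum_of_subset_of_nonneg (Finset.subset_univ _) ?_
        intro v _ _
        positivity
    _ = (G : ℝ) * ∑ v : ZMod c × ZMod c, f v := by rw [← Finset.mul_sum]

lemma KS_eq (a b : ℤ) :
    (∑ n : (ZMod c)ˣ, Complex.exp (2 * Real.pi * Complex.I *
      ((a * (((n : ZMod c).val : ℤ) : ℂ) + b * ((((n⁻¹ : (ZMod c)ˣ) : ZMod c).val : ℤ) : ℂ))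
        / (c : ℂ))))
    = KS ((a : ZMod c)) ((b : ZMod c)) := by
  unfold KS
  refine Finset.sum_congr rfl fun n _ => ?_
  have harg : (2 * (Real.pi : ℂ) * Complex.I *
      ((a * (((n : ZMod c).val : ℤ) : ℂ) + b * ((((n⁻¹ : (ZMod c)ˣ) : ZMod c).val : ℤ) : ℂ))
        / (c : ℂ)))
      = 2 * (Real.pi : ℂ) * Complex.I * ((a * ((n : ZMod c).val : ℤ) : ℤ) : ℂ) / (c : ℂ)
        + 2 * (Real.pi : ℂ) * Complex.I *
            ((b * (((n⁻¹ : (ZMod c)ˣ) : ZMod c).val : ℤ) : ℤ) : ℂ) / (c : ℂ) := by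
    push_cast
    ring
  rw [harg, Complex.exp_add, ← ZMod.stdAddChar_coe, ← ZMod.stdAddChar_coe]
  congr 1
  · congr 1
    push_cast
    rw [ZMod.natCast_zmod_val]
  · congr 1
    push_cast
    rw [ZMod.natCast_zmod_val]

end Char

end Kl

theorem stmt_18 (ε : ℝ) (hε : 0 < ε) : ∃ C : ℝ, 0 < C ∧
    ∀ (a b : ℤ) (c : ℕ) [NeZero c],
      ‖∑ n : (ZMod c)ˣ,
          Complex.exp (2 * Real.pi * Complex.I *
            ((a * (((n : ZMod c).val : ℤ) : ℂ) + b * ((((n⁻¹ : (ZMod c)ˣ) : ZMod c).val : ℤ) : ℂ))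
              / (c : ℂ)))‖ ≤
        C * (c : ℝ) ^ ((3 : ℝ) / 4 + ε) * (Int.gcd a (Int.gcd b (c : ℤ)) : ℝ) ^ ((1 : ℝ) / 4) := by
  classical
  set δ : ℝ := 4 * ε / 3 with hδdef
  have hδ : 0 < δ := by positivity
  obtain ⟨Cδ, hCδ, hτb⟩ := Kl.tau_rpow_bound δ hδ
  set C : ℝ := max 1 ((2 * Cδ ^ 3) ^ ((1 : ℝ) / 4)) with hCdef
  refine ⟨C, lt_of_lt_of_le one_pos (le_max_left _ _), ?_⟩
  intro a b c _
  have hc : c ≠ 0 := NeZero.ne c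
  have hcR : (0 : ℝ) < c := by exact_mod_cast Nat.pos_of_ne_zero hc
  rw [Kl.KS_eq a b]
  set X : ℝ := ‖Kl.KS ((a : ZMod c)) ((b : ZMod c))‖ with hX
  have hX0 : 0 ≤ X := by positivity
  set τ : ℝ := (c.divisors.card : ℝ) with hτ
  have hτ0 : 0 ≤ τ := by positivity
  set g : ℕ := Int.gcd a (Int.gcd b (c : ℤ)) with hgdef
  set N : ℕ := (Finset.univ.filter
      fun pq : ((ZMod c)ˣ × (ZMod c)ˣ) × ((ZMod c)ˣ × (ZMod c)ˣ) =>
        ((pq.1.1 : ZMod c) + pq.1.2) = (pq.2.1 : ZMod c) + pq.2.2 ∧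
        ((pq.1.1⁻¹ : (ZMod c)ˣ) : ZMod c) + ((pq.1.2⁻¹ : (ZMod c)ˣ) : ZMod c) =
          ((pq.2.1⁻¹ : (ZMod c)ˣ) : ZMod c) + ((pq.2.2⁻¹ : (ZMod c)ˣ) : ZMod c)).card with hN
  have per : ∀ z : ℂ, ((‖z‖ ^ 4 : ℝ) : ℂ) = (z * (starRingEnd ℂ) z) ^ 2 := by
    intro z
    rw [Complex.mul_conj]
    norm_cast
    rw [Complex.normSq_eq_norm_sq]
    ring
  have hsum : ∑ v : ZMod c × ZMod c, (‖Kl.KS v.1 v.2‖) ^ 4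
      = (c : ℝ) ^ 2 * (N : ℝ) := by
    have key : ((∑ v : ZMod c × ZMod c, (‖Kl.KS v.1 v.2‖) ^ 4 : ℝ) : ℂ)
        = (((c : ℝ) ^ 2 * (N : ℝ) : ℝ) : ℂ) := by
      calc ((∑ v : ZMod c × ZMod c, (‖Kl.KS v.1 v.2‖) ^ 4 : ℝ) : ℂ)
          = ∑ v : ZMod c × ZMod c, ((‖Kl.KS v.1 v.2‖ ^ 4 : ℝ) : ℂ) := by
            push_cast; rfl
        _ = ∑ v : ZMod c × ZMod c,
              ((Kl.KS v.1 v.2) * (starRingEnd ℂ) (Kl.KS v.1 v.2)) ^ 2 := by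
            exact Finset.sum_congr rfl fun v _ => per _
        _ = ∑ α : ZMod c, ∑ β : ZMod c,
              ((Kl.KS α β) * (starRingEnd ℂ) (Kl.KS α β)) ^ 2 := by
            rw [Fintype.sum_prod_type]
        _ = (c : ℂ) ^ 2 * (N : ℂ) := Kl.fourth_moment
        _ = _ := by push_cast; ring
    exact_mod_cast key
  have horb := Kl.orbit_sum (c := c) ((a : ZMod c)) ((b : ZMod c))
  rw [hsum] at horb
  have hφcard : (Fintype.card (ZMod c)ˣ : ℝ) = (c.totient : ℝ) := by
    exact_mod_cast ZMod.card_units_eq_totient c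
  rw [hφcard] at horb
  have hGg : ((Finset.univ.filter fun x : ZMod c =>
      (a : ZMod c) * x = 0 ∧ (b : ZMod c) * x = 0).card : ℝ) ≤ (g : ℝ) := by
    exact_mod_cast Kl.G_le a b
  have h1 : (c.totient : ℝ) * X ^ 4 ≤ (g : ℝ) * ((c : ℝ) ^ 2 * (N : ℝ)) := by
    refine le_trans horb (mul_le_mul_of_nonneg_right hGg ?_)
    positivity
  have h2 : (N : ℝ) ≤ 2 * (c : ℝ) ^ 2 * τ ^ 2 := by
    rw [hτ, hN]
    exact_mod_cast Kl.KN_bound c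
  have h3 : (c : ℝ) ≤ (c.totient : ℝ) * τ := by
    rw [hτ]
    exact_mod_cast Kl.totient_mul_tau c hc
  have h4 : (c : ℝ) * X ^ 4 ≤ (c : ℝ) * (2 * (g : ℝ) * (c : ℝ) ^ 3 * τ ^ 3) := by
    calc (c : ℝ) * X ^ 4 ≤ ((c.totient : ℝ) * τ) * X ^ 4 :=
          mul_le_mul_of_nonneg_right h3 (by positivity)
      _ = ((c.totient : ℝ) * X ^ 4) * τ := by ring
      _ ≤ ((g : ℝ) * ((c : ℝ) ^ 2 * (N : ℝ))) * τ :=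
          mul_le_mul_of_nonneg_right h1 hτ0
      _ ≤ ((g : ℝ) * ((c : ℝ) ^ 2 * (2 * (c : ℝ) ^ 2 * τ ^ 2))) * τ := by
          refine mul_le_mul_of_nonneg_right (mul_le_mul_of_nonneg_left ?_ (by positivity)) hτ0
          exact mul_le_mul_of_nonneg_left h2 (by positivity)
      _ = (c : ℝ) * (2 * (g : ℝ) * (c : ℝ) ^ 3 * τ ^ 3) := by ring
  have h5 : X ^ 4 ≤ 2 * (g : ℝ) * (c : ℝ) ^ 3 * τ ^ 3 := (mul_le_mul_iff_of_pos_left hcR).mp h4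
  have hτδ : τ ≤ Cδ * (c : ℝ) ^ δ := hτb c hc
  have h6 : τ ^ 3 ≤ Cδ ^ 3 * ((c : ℝ) ^ δ) ^ 3 := by
    calc τ ^ 3 ≤ (Cδ * (c : ℝ) ^ δ) ^ 3 := pow_le_pow_left₀ hτ0 hτδ 3
      _ = Cδ ^ 3 * ((c : ℝ) ^ δ) ^ 3 := by ring
  have hc3 : (c : ℝ) ^ (3 : ℕ) * ((c : ℝ) ^ δ) ^ (3 : ℕ) = (c : ℝ) ^ ((3 : ℝ) + 3 * δ) := by
    rw [← Real.rpow_natCast ((c : ℝ) ^ δ) 3, ← Real.rpow_mul (le_of_lt hcR),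
      ← Real.rpow_natCast (c : ℝ) 3, ← Real.rpow_add hcR]
    norm_num
    ring_nf
  have h7 : X ^ 4 ≤ 2 * Cδ ^ 3 * (g : ℝ) * (c : ℝ) ^ ((3 : ℝ) + 3 * δ) := by
    calc X ^ 4 ≤ 2 * (g : ℝ) * (c : ℝ) ^ 3 * τ ^ 3 := h5
      _ ≤ 2 * (g : ℝ) * (c : ℝ) ^ 3 * (Cδ ^ 3 * ((c : ℝ) ^ δ) ^ 3) :=
          mul_le_mul_of_nonneg_left h6 (by positivity)
      _ = 2 * Cδ ^ 3 * (g : ℝ) * ((c : ℝ) ^ (3 : ℕ) * ((c : ℝ) ^ δ) ^ (3 : ℕ)) := by ring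
      _ = 2 * Cδ ^ 3 * (g : ℝ) * (c : ℝ) ^ ((3 : ℝ) + 3 * δ) := by rw [hc3]
  have hfin : X ≤ (2 * Cδ ^ 3 * (g : ℝ) * (c : ℝ) ^ ((3 : ℝ) + 3 * δ)) ^ ((1 : ℝ) / 4) := by
    have hXe : X = (X ^ (4 : ℕ)) ^ ((1 : ℝ) / 4) := by
      rw [← Real.rpow_natCast X 4, ← Real.rpow_mul hX0]
      norm_num
    rw [hXe]
    exact Real.rpow_le_rpow (by positivity) h7 (by norm_num)
  have hsplit : (2 * Cδ ^ 3 * (g : ℝ) * (c : ℝ) ^ ((3 : ℝ) + 3 * δ)) ^ ((1 : ℝ) / 4)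
      = (2 * Cδ ^ 3) ^ ((1 : ℝ) / 4) * (c : ℝ) ^ ((3 : ℝ) / 4 + ε) * (g : ℝ) ^ ((1 : ℝ) / 4) := by
    have hA : (0 : ℝ) ≤ 2 * Cδ ^ 3 := by positivity
    have hg0 : (0 : ℝ) ≤ (g : ℝ) := by positivity
    have hB : (0 : ℝ) ≤ (c : ℝ) ^ ((3 : ℝ) + 3 * δ) := Real.rpow_nonneg (le_of_lt hcR) _
    rw [Real.mul_rpow (by positivity) hB, Real.mul_rpow hA hg0,
      ← Real.rpow_mul (le_of_lt hcR)]
    have hexp : ((3 : ℝ) + 3 * δ) * ((1 : ℝ) / 4) = (3 : ℝ) / 4 + ε := by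
      rw [hδdef]; ring
    rw [hexp]
    ring
  calc X ≤ (2 * Cδ ^ 3) ^ ((1 : ℝ) / 4) * (c : ℝ) ^ ((3 : ℝ) / 4 + ε) * (g : ℝ) ^ ((1 : ℝ) / 4) := by
        rw [← hsplit]; exact hfin
    _ ≤ C * (c : ℝ) ^ ((3 : ℝ) / 4 + ε) * (g : ℝ) ^ ((1 : ℝ) / 4) := by
        refine mul_le_mul_of_nonneg_right (mul_le_mul_of_nonneg_right ?_ ?_) ?_
        · exact le_max_right _ _
        · positivity
        · positivity
end
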